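/- arXiv:1008.0264 — 5 statements merged into one kernel-verified Lean document; each statement's English description precedes it below -/
import Mathlib

section
/- The Hausdorff dimension of a self-similar ultrametric Cantor set equals the abscissa of convergence of its zeta function; explicitly, dim_H(Π_∞, ρ) = log(Λ)/(−log α), where Λ is the Perron–Frobenius eigenvalue of the adjacency matrix and α the contraction parameter of the ultrametric. -/
/-- The space of infinite paths of a stationary Bratteli diagram with edge set `Ed`,
vertex set `V`, and source/range maps `σ, τ : Ed → V`: sequences of composable edges. -/
def SPath (Ed : Type) {V : Type} (σ τ : Ed → V) : Type :=
  {x : ℕ → Ed // ∀ n, τ (x n) = σ (x (n + 1))}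

/-- The length of the longest common prefix of two infinite paths. -/
noncomputable def slcp {Ed V : Type} {σ τ : Ed → V} (x y : SPath Ed σ τ) : ℕ :=
  sInf {n | x.1 n ≠ y.1 n}


section AuxBridge
open Set
open scoped NNReal ENNReal


lemma holderOnWith_of_dist_le {X Y : Type*} [MetricSpace X] [MetricSpace Y] {C r : ℝ≥0}
    {f : X → Y} {s : Set X} (h : ∀ x ∈ s, ∀ y ∈ s, dist (f x) (f y) ≤ C * dist x y ^ (r:ℝ)) :
    HolderOnWith C r f s := by
  intro x hx y hy
  rw [edist_dist, edist_dist]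
  calc ENNReal.ofReal (dist (f x) (f y)) ≤ ENNReal.ofReal (C * dist x y ^ (r:ℝ)) :=
        ENNReal.ofReal_le_ofReal (h x hx y hy)
  _ = C * ENNReal.ofReal (dist x y) ^ (r:ℝ) := by
      rw [ENNReal.ofReal_mul C.coe_nonneg,
        ← ENNReal.ofReal_rpow_of_nonneg dist_nonneg r.coe_nonneg, ENNReal.ofReal_coe_nnreal]

lemma aux_dimH_le {X : Type*} [MetricSpace X] [Nonempty X] (g : X → ℝ)
    (C : ℝ≥0) (r : ℝ≥0) (hr : 0 < r)
    (h : ∀ x y : X, dist x y ≤ C * |g x - g y| ^ (r : ℝ)) :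
    dimH (Set.univ : Set X) ≤ 1 / (r : ℝ≥0∞) := by
  have hginj : Function.Injective g := by
    intro x y hxy
    have := h x y
    rw [hxy, sub_self, abs_zero, Real.zero_rpow (by exact_mod_cast hr.ne')] at this
    simpa using dist_le_zero.mp (by simpa using this)
  have hli := Function.leftInverse_invFun hginj
  have hold : HolderOnWith C r (Function.invFun g) (Set.range g) := by
    apply holderOnWith_of_dist_le
    rintro _ ⟨x, rfl⟩ _ ⟨y, rfl⟩
    rw [hli x, hli y, Real.dist_eq]
    exact h x y
  have h1 : (Set.univ : Set X) ⊆ Function.invFun g '' (Set.range g) :=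
    fun x _ => ⟨g x, Set.mem_range_self x, hli x⟩
  calc dimH (Set.univ : Set X) ≤ dimH (Function.invFun g '' (Set.range g)) := dimH_mono h1
  _ ≤ dimH (Set.range g) / r := hold.dimH_image_le hr
  _ ≤ dimH (Set.univ : Set ℝ) / r := by
      gcongr
      exact Set.subset_univ _
  _ = 1 / r := by rw [Real.dimH_univ]

lemma aux_le_dimH {X : Type*} [MetricSpace X] (g : X → ℝ) (s : Set X)
    (C : ℝ≥0) (r : ℝ≥0) (hr : 0 < r)
    (hold : HolderOnWith C r g s)
    (himg : Set.Icc (0:ℝ) 1 ⊆ g '' s) :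
    (r : ℝ≥0∞) ≤ dimH (Set.univ : Set X) := by
  have h1 : (1 : ℝ≥0∞) = dimH (Set.Icc (0:ℝ) 1) := by
    rw [Real.dimH_of_mem_nhds (Icc_mem_nhds (x := (1/2:ℝ)) (by norm_num) (by norm_num))]
    simp
  have h2 : (1:ℝ≥0∞) ≤ dimH s / r := by
    rw [h1]
    exact (dimH_mono himg).trans (hold.dimH_image_le hr)
  have h3 : (r : ℝ≥0∞) ≤ dimH s := by
    rw [ENNReal.le_div_iff_mul_le (Or.inl (by exact_mod_cast hr.ne')) (Or.inl ENNReal.coe_ne_top),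
      one_mul] at h2
    exact h2
  exact h3.trans (dimH_mono (Set.subset_univ _))


end AuxBridge

open Set
open scoped NNReal ENNReal

section Core
variable {V Ed : Type} [Fintype V] [Nonempty V] (σ τ : Ed → V)

lemma core_upper [MetricSpace (SPath Ed σ τ)] [Nonempty Ed]
    (u : V → ℝ) (hu : ∀ v, 0 < u v)
    (β : ℝ) (hβ0 : 0 < β) (hβ1 : β < 1)
    (ιe : Ed → ℕ) (hιinj : Function.Injective ιe)
    (gap : ℝ) (hgap : 0 < gap)
    (D : Ed → ℝ) (hD0 : ∀ e, 0 ≤ D e)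
    (hstep : ∀ e, D e + β * u (τ e) ≤ u (σ e))
    (hsep : ∀ e f, σ e = σ f → ιe f < ιe e → D f + β * u (τ f) + gap ≤ D e) :
    ∃ g : SPath Ed σ τ → ℝ, ∀ x y : SPath Ed σ τ, x ≠ y →
      gap * β ^ (slcp x y) ≤ |g x - g y| := by
  classical
  obtain ⟨vm, -, humax⟩ : ∃ vm ∈ Finset.univ, ∀ v : V, u v ≤ u vm := by
    obtain ⟨vm, h1, h2⟩ := Finset.exists_max_image Finset.univ u ⟨Classical.arbitrary V, Finset.mem_univ _⟩
    exact ⟨vm, h1, fun v => h2 v (Finset.mem_univ v)⟩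
  set umax := u vm with humaxdef
  set K : ℝ := umax + gap with hK
  set c : SPath Ed σ τ → ℕ → ℝ := fun x n => β ^ n * D (x.1 n) with hc
  have hc0 : ∀ x n, 0 ≤ c x n := fun x n => mul_nonneg (pow_nonneg hβ0.le n) (hD0 _)
  have hcle : ∀ x n, c x n ≤ β ^ n * umax := by
    intro x n
    have h1 : D (x.1 n) ≤ umax := by
      have := hstep (x.1 n)
      have h2 : 0 ≤ β * u (τ (x.1 n)) := mul_nonneg hβ0.le (hu _).le
      have := humax (σ (x.1 n))
      nlinarith
    exact mul_le_mul_of_nonneg_left h1 (pow_nonneg hβ0.le n)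
  have hsumm : ∀ x, Summable (c x) := by
    intro x
    apply Summable.of_nonneg_of_le (hc0 x) (hcle x)
    exact (summable_geometric_of_lt_one hβ0.le hβ1).mul_right umax
  have hsumm' : ∀ x m, Summable (fun i => c x (i + m)) := by
    intro x m
    exact (summable_nat_add_iff m).mpr (hsumm x)
  set T : SPath Ed σ τ → ℕ → ℝ := fun x m => ∑' i, c x (i + m) with hT
  have hT0 : ∀ x m, 0 ≤ T x m := fun x m => tsum_nonneg (fun i => hc0 x _)
  -- partial sums bound
  have F2 : ∀ (x : SPath Ed σ τ) (M m : ℕ),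
      ∑ i ∈ Finset.range M, c x (i + m) ≤ β ^ m * u (σ (x.1 m)) := by
    intro x M
    induction M with
    | zero => intro m; simpa using le_of_lt (mul_pos (pow_pos hβ0 m) (hu _))
    | succ M ih =>
      intro m
      rw [Finset.sum_range_succ']
      have hrw : ∀ i ∈ Finset.range M, c x ((i + 1) + m) = c x (i + (m+1)) := by
        intro i _; congr 1; omega
      rw [Finset.sum_congr rfl hrw]
      have h1 := ih (m + 1)
      have h2 : σ (x.1 (m+1)) = τ (x.1 m) := (x.2 m).symm
      rw [h2] at h1
      have h3 := hstep (x.1 m)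
      have h4 : (0:ℝ) < β ^ m := pow_pos hβ0 m
      have h5 : c x (0 + m) = β ^ m * D (x.1 m) := by simp [hc]
      rw [h5, pow_succ] at *
      nlinarith [hu (σ (x.1 m)), hu (τ (x.1 m))]
  have F3 : ∀ x m, T x m ≤ β ^ m * u (σ (x.1 m)) := by
    intro x m
    exact Real.tsum_le_of_sum_range_le (fun i => hc0 x _) (fun M => F2 x M m)
  have Tsplit : ∀ x m, T x m = c x m + T x (m + 1) := by
    intro x m
    have h1 := Summable.tsum_eq_zero_add (hsumm' x m)
    simp only [zero_add] at h1
    calc T x m = ∑' i, c x (i + m) := rfl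
    _ = c x m + ∑' i, c x (i + 1 + m) := h1
    _ = c x m + T x (m + 1) := by
        congr 1
        apply tsum_congr
        intro i; congr 1; omega
  set g : SPath Ed σ τ → ℝ := fun x => K * (ιe (x.1 0) : ℝ) + T x 0 with hg
  have hgsplit : ∀ x m, g x = K * (ιe (x.1 0) : ℝ) + ∑ i ∈ Finset.range m, c x i + T x m := by
    intro x m
    have h4 := Summable.sum_add_tsum_nat_add m (hsumm x)
    have h3 : T x 0 = ∑' i, c x i := tsum_congr fun i => by rw [Nat.add_zero]
    have h2 : T x m = ∑' (i : ℕ), c x (i + m) := rfl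
    rw [hg]
    simp only []
    rw [h3, ← h4, h2]; ring
  refine ⟨g, ?_⟩
  have hKpos : 0 < K := by
    have := hu vm; rw [hK]; nlinarith
  -- aux for level 0
  have haux0 : ∀ x y : SPath Ed σ τ, ιe (y.1 0) < ιe (x.1 0) → gap ≤ g x - g y := by
    intro x y hlt
    have h1 : (ιe (y.1 0) : ℝ) + 1 ≤ (ιe (x.1 0) : ℝ) := by exact_mod_cast hlt
    have h2 := hT0 x 0
    have h3 := F3 y 0
    have h4 : u (σ (y.1 0)) ≤ umax := humax _
    have : g x - g y = K * ((ιe (x.1 0) : ℝ) - (ιe (y.1 0) : ℝ)) + (T x 0 - T y 0) := by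
      rw [hg]; ring
    rw [this]
    have h5 : (1:ℝ) ≤ (ιe (x.1 0) : ℝ) - (ιe (y.1 0) : ℝ) := by linarith
    have h6 : K * 1 ≤ K * ((ιe (x.1 0) : ℝ) - (ιe (y.1 0) : ℝ)) :=
      mul_le_mul_of_nonneg_left h5 hKpos.le
    simp only [pow_zero, mul_one] at h3 ⊢
    rw [hK] at h6 ⊢
    nlinarith
  -- aux for level n ≥ 1
  have hauxn : ∀ (x y : SPath Ed σ τ) (n : ℕ), 0 < n → (∀ i < n, x.1 i = y.1 i) →
      D (y.1 n) + β * u (τ (y.1 n)) + gap ≤ D (x.1 n) → gap * β ^ n ≤ g x - g y := by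
    intro x y n hn hag hDsep
    have h0 : x.1 0 = y.1 0 := hag 0 hn
    have hpre : ∑ i ∈ Finset.range n, c x i = ∑ i ∈ Finset.range n, c y i := by
      apply Finset.sum_congr rfl
      intro i hi
      rw [hc]; simp only []
      rw [hag i (Finset.mem_range.mp hi)]
    have hgx := hgsplit x n
    have hgy := hgsplit y n
    have hdiff : g x - g y = T x n - T y n := by
      rw [hgx, hgy, h0, hpre]; ring
    have hTx : β ^ n * D (x.1 n) ≤ T x n := by
      rw [Tsplit x n]
      have := hT0 x (n+1)
      rw [hc]; simp only []
      linarith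
    have hTy : T y n ≤ β ^ n * D (y.1 n) + β ^ (n+1) * u (τ (y.1 n)) := by
      rw [Tsplit y n]
      have h1 := F3 y (n+1)
      have h2 : σ (y.1 (n+1)) = τ (y.1 n) := (y.2 n).symm
      rw [h2] at h1
      rw [hc]; simp only []
      linarith
    have hβn : (0:ℝ) < β ^ n := pow_pos hβ0 n
    rw [hdiff, pow_succ] at *
    nlinarith
  -- main
  intro x y hxy
  have hnonemp : {n | x.1 n ≠ y.1 n}.Nonempty := by
    by_contra h
    rw [Set.not_nonempty_iff_eq_empty, Set.eq_empty_iff_forall_notMem] at h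
    apply hxy
    apply Subtype.ext; funext m
    by_contra hne
    exact h m hne
  have hmem : x.1 (slcp x y) ≠ y.1 (slcp x y) := Nat.sInf_mem hnonemp
  have hag : ∀ i < slcp x y, x.1 i = y.1 i := by
    intro i hi
    by_contra hne
    exact absurd (Nat.sInf_le (Set.mem_setOf.mpr hne)) (not_le.mpr hi)
  set n := slcp x y with hn
  by_cases hn0 : n = 0
  · -- level 0
    rw [hn0] at hmem ⊢
    have hιne : ιe (x.1 0) ≠ ιe (y.1 0) := fun h => hmem (hιinj h)
    rcases lt_or_gt_of_ne hιne with h | h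
    · have := haux0 y x h
      rw [pow_zero, mul_one]
      calc gap ≤ g y - g x := this
      _ ≤ |g x - g y| := by rw [abs_sub_comm]; exact le_abs_self _
    · have := haux0 x y h
      rw [pow_zero, mul_one]
      exact this.trans (le_abs_self _)
  · -- level n ≥ 1
    have hnpos : 0 < n := Nat.pos_of_ne_zero hn0
    have hσeq : σ (x.1 n) = σ (y.1 n) := by
      have h1 := x.2 (n-1)
      have h2 := y.2 (n-1)
      have h3 : n - 1 + 1 = n := by omega
      rw [h3] at h1 h2
      rw [← h1, ← h2, hag (n-1) (by omega)]
    have hιne : ιe (x.1 n) ≠ ιe (y.1 n) := fun h => hmem (hιinj h)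
    rcases lt_or_gt_of_ne hιne with h | h
    · have hsep' := hsep (y.1 n) (x.1 n) hσeq.symm h
      have hag' : ∀ i < n, y.1 i = x.1 i := fun i hi => (hag i hi).symm
      have := hauxn y x n hnpos hag' hsep'
      calc gap * β ^ n ≤ g y - g x := this
      _ ≤ |g x - g y| := by rw [abs_sub_comm]; exact le_abs_self _
    · have hsep' := hsep (x.1 n) (y.1 n) hσeq h
      exact (hauxn x y n hnpos hag hsep').trans (le_abs_self _)
end Core

section BuildD
variable {V Ed : Type} [Fintype V] [Fintype Ed] [Nonempty V] [DecidableEq V]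

lemma build_D (σ τ : Ed → V) (ιe : Ed → ℕ)
    (u : V → ℝ) (hu : ∀ v, 0 < u v)
    (Λ : ℝ)
    (hEig : ∀ v, ∑ e ∈ Finset.univ.filter (fun e => σ e = v), u (τ e) = Λ * u v)
    (β : ℝ) (hβ0 : 0 < β) (hβΛ : β * Λ < 1) :
    ∃ (gap : ℝ) (D : Ed → ℝ), 0 < gap ∧ (∀ e, 0 ≤ D e) ∧
      (∀ e, D e + β * u (τ e) ≤ u (σ e)) ∧
      (∀ e f, σ e = σ f → ιe f < ιe e → D f + β * u (τ f) + gap ≤ D e) := by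
  classical
  set E : ℕ := Fintype.card Ed with hE
  obtain ⟨vmin, -, humin⟩ : ∃ vm ∈ Finset.univ, ∀ v : V, u vm ≤ u v := by
    obtain ⟨vm, h1, h2⟩ := Finset.exists_min_image Finset.univ u
      ⟨Classical.arbitrary V, Finset.mem_univ _⟩
    exact ⟨vm, h1, fun v => h2 v (Finset.mem_univ v)⟩
  set θ : ℝ := (1 - β * Λ) / (E + 1) with hθ
  have hθpos : 0 < θ := by
    apply div_pos (by linarith) (by positivity)
  set gap : ℝ := u vmin * θ with hgap
  set S : Ed → Finset Ed :=
    fun e => Finset.univ.filter (fun e' => σ e' = σ e ∧ ιe e' < ιe e) with hS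
  set D : Ed → ℝ :=
    fun e => β * (∑ e' ∈ S e, u (τ e')) + ((S e).card + 1) * (u (σ e) * θ) with hD
  have hgappos : 0 < gap := mul_pos (hu vmin) hθpos
  have hDnn : ∀ e, 0 ≤ D e := by
    intro e
    apply add_nonneg
    · apply mul_nonneg hβ0.le
      exact Finset.sum_nonneg (fun e' _ => (hu _).le)
    · apply mul_nonneg (by positivity)
      exact mul_nonneg (hu _).le hθpos.le
  have hnotmem : ∀ e, e ∉ S e := by
    intro e hmem
    rw [hS, Finset.mem_filter] at hmem
    exact lt_irrefl _ hmem.2.2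
  have hcardE : ∀ e, ((S e).card : ℝ) + 1 ≤ (E : ℝ) := by
    intro e
    have h1 : S e ⊆ Finset.univ.erase e := by
      intro e' he'
      rw [hS, Finset.mem_filter] at he'
      rw [Finset.mem_erase]
      exact ⟨fun h => absurd (h ▸ he'.2.2) (lt_irrefl _), Finset.mem_univ _⟩
    have h2 := Finset.card_le_card h1
    rw [Finset.card_erase_of_mem (Finset.mem_univ e), Finset.card_univ] at h2
    have h3 : 1 ≤ E := by
      rw [hE]
      exact Fintype.card_pos_iff.mpr ⟨e⟩
    have : (S e).card + 1 ≤ E := by omega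
    exact_mod_cast this
  refine ⟨gap, D, hgappos, hDnn, ?_, ?_⟩
  · -- step
    intro e
    have hsub : insert e (S e) ⊆ Finset.univ.filter (fun e' => σ e' = σ e) := by
      intro e' he'
      rw [Finset.mem_insert] at he'
      rw [Finset.mem_filter]
      rcases he' with rfl | he'
      · exact ⟨Finset.mem_univ _, rfl⟩
      · rw [hS, Finset.mem_filter] at he'
        exact ⟨Finset.mem_univ _, he'.2.1⟩
    have h1 : ∑ e' ∈ insert e (S e), u (τ e') ≤ Λ * u (σ e) := by
      rw [← hEig (σ e)]
      exact Finset.sum_le_sum_of_subset_of_nonneg hsub (fun i _ _ => (hu _).le)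
    rw [Finset.sum_insert (hnotmem e)] at h1
    have h2 := hcardE e
    have h3 : ((S e).card + 1 : ℝ) * (u (σ e) * θ) ≤ (E:ℝ) * (u (σ e) * θ) :=
      mul_le_mul_of_nonneg_right h2 (mul_nonneg (hu _).le hθpos.le)
    have h4 : (E:ℝ) * θ ≤ 1 - β * Λ := by
      have h5 : (0:ℝ) < (E:ℝ) + 1 := by positivity
      rw [hθ, mul_div_assoc']
      rw [div_le_iff₀ h5]
      nlinarith [hθpos, mul_pos hβ0 (hu vmin)]
    have h5 : β * (u (τ e) + ∑ e' ∈ S e, u (τ e')) ≤ β * (Λ * u (σ e)) :=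
      mul_le_mul_of_nonneg_left h1 hβ0.le
    have h6 : (E:ℝ) * (u (σ e) * θ) ≤ (1 - β*Λ) * u (σ e) := by
      nlinarith [mul_le_mul_of_nonneg_right h4 (hu (σ e)).le]
    rw [hD]; simp only []
    nlinarith
  · -- separation
    intro e f heq hlt
    have hsub : insert f (S f) ⊆ S e := by
      intro e' he'
      rw [Finset.mem_insert] at he'
      rw [hS, Finset.mem_filter]
      rcases he' with rfl | he'
      · exact ⟨Finset.mem_univ _, heq.symm, hlt⟩
      · rw [hS, Finset.mem_filter] at he'
        exact ⟨Finset.mem_univ _, he'.2.1.trans heq.symm, he'.2.2.trans hlt⟩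
    have hsum : ∑ e' ∈ insert f (S f), u (τ e') ≤ ∑ e' ∈ S e, u (τ e') :=
      Finset.sum_le_sum_of_subset_of_nonneg hsub (fun i _ _ => (hu _).le)
    rw [Finset.sum_insert (hnotmem f)] at hsum
    have hcard : (S f).card + 1 ≤ (S e).card := by
      have h7 := Finset.card_le_card hsub
      rw [Finset.card_insert_of_notMem (hnotmem f)] at h7
      exact h7
    have hcard' : ((S f).card : ℝ) + 1 ≤ ((S e).card : ℝ) := by exact_mod_cast hcard
    have hgapv : gap ≤ u (σ e) * θ := mul_le_mul_of_nonneg_right (humin (σ e)) hθpos.le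
    have huθ : 0 ≤ u (σ e) * θ := mul_nonneg (hu _).le hθpos.le
    rw [hD]; simp only [← heq]
    nlinarith [mul_le_mul_of_nonneg_left hsum hβ0.le,
      mul_le_mul_of_nonneg_right hcard' huθ]

end BuildD

section Assemble
variable {V Ed : Type} [Fintype V] [Fintype Ed] [Nonempty V] [DecidableEq V]

lemma eig_identity (σ τ : Ed → V) (A : Matrix V V ℕ)
    (hA : ∀ v v', A v v' = Nat.card {e : Ed // σ e = v ∧ τ e = v'})
    (Λ : ℝ) (u : V → ℝ)
    (hPF : (A.map (Nat.cast : ℕ → ℝ)).mulVec u = Λ • u) :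
    ∀ v, ∑ e ∈ Finset.univ.filter (fun e => σ e = v), u (τ e) = Λ * u v := by
  classical
  intro v
  have h1 : ∑ v', ((A v v' : ℝ)) * u v' = Λ * u v := by
    have := congrFun hPF v
    simpa [Matrix.mulVec, dotProduct, Matrix.map_apply] using this
  have h3 : ∀ v' : V, ((A v v' : ℝ)) * u v' =
      ∑ e ∈ (Finset.univ.filter (fun e => σ e = v)).filter (fun e => τ e = v'), u (τ e) := by
    intro v'
    rw [Finset.filter_filter]
    have hconst : ∀ e ∈ Finset.univ.filter (fun e => σ e = v ∧ τ e = v'), u (τ e) = u v' := by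
      intro e he
      rw [Finset.mem_filter] at he
      rw [he.2.2]
    rw [Finset.sum_congr rfl hconst, Finset.sum_const, nsmul_eq_mul]
    congr 1
    rw [hA v v', Nat.card_eq_fintype_card, Fintype.card_subtype]
  rw [← h1, Finset.sum_congr rfl (fun v' _ => h3 v')]
  exact (Finset.sum_fiberwise_of_maps_to (fun e _ => Finset.mem_univ (τ e))
    (fun e => u (τ e))).symm

lemma spath_nonempty (σ τ : Ed → V) (hout : ∀ v : V, ∃ e : Ed, σ e = v) :
    Nonempty (SPath Ed σ τ) := by
  classical
  choose f hf using hout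
  refine ⟨⟨fun n => Nat.rec (f (Classical.arbitrary V)) (fun _ e => f (τ e)) n, fun n => ?_⟩⟩
  exact (hf _).symm

lemma upper_bound (σ τ : Ed → V) (A : Matrix V V ℕ)
    (hA : ∀ v v', A v v' = Nat.card {e : Ed // σ e = v ∧ τ e = v'})
    (Λ : ℝ) (hΛ : 1 < Λ)
    (hPF : ∃ u : V → ℝ, (∀ v, 0 < u v) ∧ (A.map (Nat.cast : ℕ → ℝ)).mulVec u = Λ • u)
    (α : ℝ) (hα : α ∈ Set.Ioo (0 : ℝ) 1)
    (a : SPath Ed σ τ → ℕ → ℝ) (a₁ a₂ : ℝ) (ha₁ : 0 < a₁)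
    (hab : ∀ x n, a x n ∈ Set.Icc a₁ a₂)
    [MetricSpace (SPath Ed σ τ)]
    (hdist : ∀ x y : SPath Ed σ τ, x ≠ y → dist x y = a x (slcp x y) * α ^ slcp x y) :
    dimH (Set.univ : Set (SPath Ed σ τ)) ≤
      ENNReal.ofReal (Real.log Λ / (-Real.log α)) := by
  classical
  obtain ⟨u, hu, hPF'⟩ := hPF
  have hEig := eig_identity σ τ A hA Λ u hPF'
  obtain ⟨hα0, hα1⟩ := hα
  have hΛ0 : (0:ℝ) < Λ := lt_trans one_pos hΛ
  have hlogΛ : 0 < Real.log Λ := Real.log_pos hΛ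
  have hlogα : 0 < -Real.log α := by
    have := Real.log_neg hα0 hα1
    linarith
  set d : ℝ := Real.log Λ / (-Real.log α) with hd
  have hd0 : 0 < d := div_pos hlogΛ hlogα
  -- edges out of every vertex
  have hout : ∀ v : V, ∃ e : Ed, σ e = v := by
    intro v
    have h1 : ∑ e ∈ Finset.univ.filter (fun e => σ e = v), u (τ e) ≠ 0 := by
      rw [hEig v]
      exact (mul_pos hΛ0 (hu v)).ne'
    obtain ⟨e, he⟩ := Finset.nonempty_of_sum_ne_zero h1
    exact ⟨e, (Finset.mem_filter.mp he).2⟩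
  haveI hEd : Nonempty Ed := ⟨(hout (Classical.arbitrary V)).choose⟩
  haveI hSP : Nonempty (SPath Ed σ τ) := spath_nonempty σ τ hout
  have ha₂ : 0 < a₂ := lt_of_lt_of_le ha₁ (le_trans (hab (Classical.arbitrary _) 0).1
    (hab (Classical.arbitrary _) 0).2)
  -- main step: for every t > d, dimH ≤ ofReal t
  have hmain : ∀ t : ℝ, d < t → dimH (Set.univ : Set (SPath Ed σ τ)) ≤ ENNReal.ofReal t := by
    intro t ht
    have ht0 : 0 < t := lt_trans hd0 ht
    set β : ℝ := α ^ t with hβ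
    have hβ0 : 0 < β := Real.rpow_pos_of_pos hα0 t
    have hβ1 : β < 1 := Real.rpow_lt_one hα0.le hα1 ht0
    have hβΛ : β * Λ < 1 := by
      have h1 : β * Λ = Real.exp (Real.log α * t + Real.log Λ) := by
        rw [Real.exp_add, ← Real.rpow_def_of_pos hα0, Real.exp_log hΛ0]
      rw [h1, ← Real.exp_zero, Real.exp_lt_exp]
      have h2 : Real.log Λ < t * (-Real.log α) := by
        rw [hd, div_lt_iff₀ hlogα] at ht
        exact ht
      nlinarith
    set ιe : Ed → ℕ := fun e => ((Fintype.equivFin Ed) e : ℕ) with hιe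
    have hιinj : Function.Injective ιe :=
      Fin.val_injective.comp (Fintype.equivFin Ed).injective
    obtain ⟨gap, D, hgap, hD0, hstep, hsep⟩ := build_D σ τ ιe u hu Λ hEig β hβ0 hβΛ
    obtain ⟨g, hg⟩ := core_upper σ τ u hu β hβ0 hβ1 ιe hιinj gap hgap D hD0 hstep hsep
    -- Hölder-type bound for the inverse
    set C : ℝ := a₂ * (gap ^ (1/t))⁻¹ with hC
    have hgapt : 0 < gap ^ (1/t) := Real.rpow_pos_of_pos hgap _
    have hC0 : 0 ≤ C := mul_nonneg ha₂.le (inv_nonneg.mpr hgapt.le)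
    have hkey : ∀ x y : SPath Ed σ τ, dist x y ≤ C.toNNReal * |g x - g y| ^ ((1/t).toNNReal : ℝ) := by
      intro x y
      have hcoe : ((1/t).toNNReal : ℝ) = 1/t := Real.coe_toNNReal _ (by positivity)
      have hCcoe : (C.toNNReal : ℝ) = C := Real.coe_toNNReal _ hC0
      rw [hcoe, hCcoe]
      rcases eq_or_ne x y with rfl | hxy
      · rw [dist_self]
        apply mul_nonneg hC0
        exact Real.rpow_nonneg (abs_nonneg _) _
      · set n := slcp x y with hn
        have hsepa := hg x y hxy
        have hdxy : dist x y ≤ a₂ * α ^ n := by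
          rw [hdist x y hxy]
          exact mul_le_mul_of_nonneg_right (hab x n).2 (pow_nonneg hα0.le n)
        -- α ^ n = (β ^ n) ^ (1/t)
        have hβn : (β ^ n : ℝ) ^ (1/t) = α ^ n := by
          rw [hβ]
          rw [← Real.rpow_natCast (α ^ t) n, ← Real.rpow_mul hα0.le, ← Real.rpow_mul hα0.le]
          rw [show t * n * (1/t) = (n:ℝ) by field_simp]
          rw [Real.rpow_natCast]
        have h4 : (gap * β ^ n) ^ (1/t) ≤ |g x - g y| ^ (1/t) :=
          Real.rpow_le_rpow (by positivity) hsepa (by positivity)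
        rw [Real.mul_rpow hgap.le (by positivity), hβn] at h4
        calc dist x y ≤ a₂ * α ^ n := hdxy
        _ ≤ a₂ * ((gap ^ (1/t))⁻¹ * (gap ^ (1/t) * α ^ n)) := by
            rw [inv_mul_cancel_left₀ hgapt.ne']
        _ ≤ a₂ * ((gap ^ (1/t))⁻¹ * |g x - g y| ^ (1/t)) := by
            apply mul_le_mul_of_nonneg_left _ ha₂.le
            exact mul_le_mul_of_nonneg_left h4 (inv_nonneg.mpr hgapt.le)
        _ = C * |g x - g y| ^ (1/t) := by rw [hC]; ring
    have hrpos : 0 < (1/t).toNNReal := Real.toNNReal_pos.mpr (by positivity)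
    have := aux_dimH_le g C.toNNReal (1/t).toNNReal hrpos hkey
    calc dimH (Set.univ : Set (SPath Ed σ τ)) ≤ 1 / ((1/t).toNNReal : ℝ≥0∞) := this
    _ = ENNReal.ofReal t := by
        rw [one_div]
        have h5 : ((1/t).toNNReal : ℝ≥0∞) = ENNReal.ofReal (1/t) := rfl
        rw [h5, one_div, ENNReal.ofReal_inv_of_pos ht0, inv_inv]
  -- conclude
  by_contra hcon
  push_neg at hcon
  obtain ⟨q, hq0, hq1, hq2⟩ := ENNReal.lt_iff_exists_rat_btwn.mp hcon
  have hdq : d < (q:ℝ) := by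
    rw [← ENNReal.ofReal_lt_ofReal_iff_of_nonneg hd0.le] at *
    exact_mod_cast (by exact_mod_cast hq1 : ENNReal.ofReal d < ENNReal.ofReal q)
  exact absurd (hmain q hdq) (not_le.mpr (by exact_mod_cast hq2))

end Assemble


section Paths
variable {V Ed : Type} [Fintype V] [Fintype Ed] [Nonempty V] [DecidableEq V] (σ τ : Ed → V)

/-- composability of a finite edge word -/
def EdChain {k : ℕ} (p : Fin k → Ed) : Prop :=
  ∀ i j : Fin k, (i : ℕ) + 1 = (j : ℕ) → τ (p i) = σ (p j)

instance {k : ℕ} (p : Fin k → Ed) : Decidable (EdChain σ τ p) := by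
  unfold EdChain; infer_instance

/-- finite paths of length `k` starting at `v` -/
def PathFrom (k : ℕ) (v : V) : Type _ :=
  {p : Fin k → Ed // EdChain σ τ p ∧ ∀ h : 0 < k, σ (p ⟨0, h⟩) = v}

noncomputable instance {k : ℕ} {v : V} : Fintype (PathFrom σ τ k v) := by
  unfold PathFrom; infer_instance

def pathEquiv (k : ℕ) (v : V) :
    PathFrom σ τ (k+1) v ≃ Σ e : {e : Ed // σ e = v}, PathFrom σ τ k (τ e.1) where
  toFun p := ⟨⟨p.1 0, p.2.2 (Nat.succ_pos k)⟩,
    ⟨Fin.tail p.1, fun i j hij => p.2.1 i.succ j.succ (by simpa using hij),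
      fun h => by
        have := p.2.1 0 (⟨0, h⟩ : Fin k).succ (by simp)
        exact this.symm⟩⟩
  invFun eq := ⟨Fin.cons eq.1.1 eq.2.1, by
      constructor
      · intro i j hij
        induction j using Fin.cases with
        | zero => simp at hij
        | succ j' =>
          rw [Fin.cons_succ]
          induction i using Fin.cases with
          | zero =>
            rw [Fin.cons_zero]
            have hj0 : j' = ⟨0, j'.pos⟩ := by
              apply Fin.ext
              show (j' : ℕ) = 0
              simp [Fin.val_succ] at hij
              omega
            rw [hj0]
            exact (eq.2.2.2 j'.pos).symm
          | succ i' =>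
            rw [Fin.cons_succ]
            exact eq.2.2.1 i' j' (by simp at hij; omega)
      · intro _
        exact (Fin.cons_zero _ _) ▸ eq.1.2⟩
  left_inv p := by
    apply Subtype.ext
    exact Fin.cons_self_tail p.1
  right_inv eq := by
    rcases eq with ⟨e, q⟩
    refine Sigma.ext ?_ ?_
    · apply Subtype.ext; simp
    · apply heq_of_eq_of_heq (b := q) ?_ HEq.rfl
      apply Subtype.ext
      simp [Fin.tail_cons]

lemma pathFrom_zero_card (v : V) : Fintype.card (PathFrom σ τ 0 v) = 1 := by
  have : Unique (PathFrom σ τ 0 v) :=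
    { default := ⟨fun i => i.elim0, fun i => i.elim0, fun h => absurd h (lt_irrefl 0)⟩
      uniq := fun p => Subtype.ext (funext fun i => i.elim0) }
  exact Fintype.card_unique

lemma pathFrom_card_succ (k : ℕ) (v : V) :
    Fintype.card (PathFrom σ τ (k+1) v) =
      ∑ e ∈ Finset.univ.filter (fun e => σ e = v), Fintype.card (PathFrom σ τ k (τ e)) := by
  rw [Fintype.card_congr (pathEquiv σ τ k v), Fintype.card_sigma]
  exact (Finset.sum_subtype (Finset.univ.filter (fun e => σ e = v))
    (fun e => by simp) (fun e => Fintype.card (PathFrom σ τ k (τ e)))).symm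

lemma pathFrom_card_growth {Λ : ℝ} (u : V → ℝ) (hu : ∀ v, 0 < u v) (umax : ℝ)
    (humax : ∀ v, u v ≤ umax)
    (hEig : ∀ v, ∑ e ∈ Finset.univ.filter (fun e => σ e = v), u (τ e) = Λ * u v)
    (hΛ0 : 0 < Λ) :
    ∀ (k : ℕ) (v : V), Λ ^ k * u v ≤ umax * Fintype.card (PathFrom σ τ k v) := by
  intro k
  induction k with
  | zero =>
    intro v
    rw [pathFrom_zero_card]
    simpa using (humax v)
  | succ k ih =>
    intro v
    rw [pathFrom_card_succ σ τ k v]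
    push_cast
    rw [Finset.mul_sum]
    have h1 : Λ ^ (k+1) * u v = ∑ e ∈ Finset.univ.filter (fun e => σ e = v), Λ ^ k * u (τ e) := by
      rw [← Finset.mul_sum, hEig v]; ring
    rw [h1]
    exact Finset.sum_le_sum (fun e _ => ih (τ e))

def consP (e : Ed) {k : ℕ} {v : V} (he : σ e = v) (q : PathFrom σ τ k (τ e)) :
    PathFrom σ τ (k+1) v := (pathEquiv σ τ k v).symm ⟨⟨e, he⟩, q⟩

lemma consP_val (e : Ed) {k : ℕ} {v : V} (he : σ e = v) (q : PathFrom σ τ k (τ e)) :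
    (consP σ τ e he q).1 = Fin.cons e q.1 := rfl

lemma exists_fiber (k : ℕ) (hk : 0 < k) (w : V) :
    ∃ v' : V, Fintype.card (PathFrom σ τ k w) ≤
      Fintype.card V *
        (Finset.univ.filter
          (fun p : PathFrom σ τ k w => τ (p.1 ⟨k-1, by omega⟩) = v')).card := by
  classical
  set f : PathFrom σ τ k w → V := fun p => τ (p.1 ⟨k-1, by omega⟩) with hf
  have hcard : (Finset.univ : Finset (PathFrom σ τ k w)).card =
      ∑ v' : V, ((Finset.univ : Finset (PathFrom σ τ k w)).filter (fun p => f p = v')).card :=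
    Finset.card_eq_sum_card_fiberwise (fun p _ => Finset.mem_univ (f p))
  obtain ⟨v', -, hmax⟩ := Finset.exists_max_image (Finset.univ : Finset V)
      (fun v' => ((Finset.univ : Finset (PathFrom σ τ k w)).filter (fun p => f p = v')).card)
      Finset.univ_nonempty
  refine ⟨v', ?_⟩
  rw [← Finset.card_univ, hcard]
  calc ∑ v'' : V, ((Finset.univ : Finset (PathFrom σ τ k w)).filter (fun p => f p = v'')).card
      ≤ ∑ _v'' : V,
        ((Finset.univ : Finset (PathFrom σ τ k w)).filter (fun p => f p = v')).card :=
        Finset.sum_le_sum (fun v'' _ => hmax v'' (Finset.mem_univ _))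
  _ = Fintype.card V *
      ((Finset.univ : Finset (PathFrom σ τ k w)).filter (fun p => f p = v')).card := by
      rw [Finset.sum_const, Finset.card_univ, smul_eq_mul]

lemma exists_path_of_pos (A : Matrix V V ℕ)
    (hA : ∀ v v', A v v' = Nat.card {e : Ed // σ e = v ∧ τ e = v'}) :
    ∀ (k : ℕ) (v v' : V), 0 < (A ^ k) v v' →
      ∃ p : PathFrom σ τ k v,
        (∀ h : 0 < k, τ (p.1 ⟨k-1, by omega⟩) = v') ∧ (k = 0 → v = v') := by
  intro k
  induction k with
  | zero =>
    intro v v' hpos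
    rw [pow_zero] at hpos
    by_cases hvv : v = v'
    · exact ⟨⟨fun i => i.elim0, fun i => i.elim0, fun h => absurd h (by omega)⟩,
        fun h => absurd h (by omega), fun _ => hvv⟩
    · rw [Matrix.one_apply_ne hvv] at hpos; omega
  | succ k ih =>
    intro v v' hpos
    rw [pow_succ', Matrix.mul_apply] at hpos
    obtain ⟨v'', -, hv''⟩ : ∃ v'' ∈ Finset.univ, 0 < A v v'' * (A^k) v'' v' := by
      by_contra h
      push_neg at h
      have h0 : ∑ v'' : V, A v v'' * (A^k) v'' v' = 0 :=
        Finset.sum_eq_zero (fun x hx => by have := h x (Finset.mem_univ x); omega)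
      omega
    have h1 : 0 < A v v'' := Nat.pos_of_ne_zero (fun h0 => by simp [h0] at hv'')
    have h2 : 0 < (A^k) v'' v' := Nat.pos_of_ne_zero (fun h0 => by simp [h0] at hv'')
    rw [hA] at h1
    have hne : Nonempty {e : Ed // σ e = v ∧ τ e = v''} := (Nat.card_pos_iff.mp h1).1
    obtain ⟨e, he1, he2⟩ := hne.some
    subst he2
    obtain ⟨q, hq1, hq2⟩ := ih (τ e) v' h2
    refine ⟨consP σ τ e he1 q, ?_, fun h => by omega⟩
    intro _
    rw [consP_val]
    rcases Nat.eq_zero_or_pos k with rfl | hk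
    · rw [show (⟨0+1-1, by omega⟩ : Fin (0+1)) = 0 from rfl, Fin.cons_zero]
      exact hq2 rfl
    · have hidx : (⟨k+1-1, by omega⟩ : Fin (k+1)) = (⟨k-1, by omega⟩ : Fin k).succ := by
        apply Fin.ext
        simp [Fin.val_succ]
        omega
      rw [hidx, Fin.cons_succ]
      exact hq1 hk

def ccat {K' k0 : ℕ} (p : Fin K' → Ed) (q : Fin k0 → Ed) : Fin (K' + k0) → Ed :=
  fun i => if h : (i : ℕ) < K' then p ⟨i, h⟩ else q ⟨(i : ℕ) - K', by omega⟩

lemma ccat_lt {K' k0 : ℕ} (p : Fin K' → Ed) (q : Fin k0 → Ed) (i : Fin (K' + k0))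
    (h : (i : ℕ) < K') : ccat p q i = p ⟨i, h⟩ := dif_pos h

lemma ccat_ge {K' k0 : ℕ} (p : Fin K' → Ed) (q : Fin k0 → Ed) (i : Fin (K' + k0))
    (h : ¬ (i : ℕ) < K') : ccat p q i = q ⟨(i : ℕ) - K', by omega⟩ := dif_neg h

lemma ccat_lt' {K' k0 : ℕ} (p : Fin K' → Ed) (q : Fin k0 → Ed) (n : ℕ)
    (hn : n < K') (hn2 : n < K' + k0) : ccat p q ⟨n, hn2⟩ = p ⟨n, hn⟩ := dif_pos hn

lemma ccat_ge' {K' k0 : ℕ} (p : Fin K' → Ed) (q : Fin k0 → Ed) (n : ℕ)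
    (hn : ¬ n < K') (hn2 : n < K' + k0) : ccat p q ⟨n, hn2⟩ = q ⟨n - K', by omega⟩ := dif_neg hn

lemma ccat_chain {K' k0 : ℕ} (p : Fin K' → Ed) (q : Fin k0 → Ed)
    (hp : EdChain σ τ p) (hq : EdChain σ τ q)
    (hj : ∀ (h1 : 0 < K') (h2 : 0 < k0), τ (p ⟨K'-1, by omega⟩) = σ (q ⟨0, h2⟩)) :
    EdChain σ τ (ccat p q) := by
  intro i j hij
  by_cases hi : (i : ℕ) < K'
  · by_cases hjj : (j : ℕ) < K'
    · rw [ccat_lt p q i hi, ccat_lt p q j hjj]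
      exact hp ⟨i, hi⟩ ⟨j, hjj⟩ (by simpa using hij)
    · rw [ccat_lt p q i hi, ccat_ge p q j hjj]
      have hKpos : 0 < K' := by omega
      have hk0pos : 0 < k0 := by have := j.isLt; omega
      have hival : (i : ℕ) = K' - 1 := by omega
      have hjval : (j : ℕ) - K' = 0 := by omega
      have e1 : (⟨i, hi⟩ : Fin K') = ⟨K'-1, by omega⟩ := by apply Fin.ext; simpa using hival
      have e2 : (⟨(j : ℕ) - K', by omega⟩ : Fin k0) = ⟨0, hk0pos⟩ := by
        apply Fin.ext; simpa using hjval
      rw [e1, e2]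
      exact hj hKpos hk0pos
  · have hjj : ¬ (j : ℕ) < K' := by omega
    rw [ccat_ge p q i hi, ccat_ge p q j hjj]
    exact hq ⟨(i:ℕ) - K', by omega⟩ ⟨(j:ℕ) - K', by omega⟩ (by simp; omega)

lemma exists_blocks (A : Matrix V V ℕ)
    (hA : ∀ v v', A v v' = Nat.card {e : Ed // σ e = v ∧ τ e = v'})
    (k0 : ℕ) (hk0 : ∀ v v', 0 < (A^k0) v v')
    (Λ : ℝ) (u : V → ℝ) (hu : ∀ v, 0 < u v) (umax : ℝ) (humax : ∀ v, u v ≤ umax)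
    (hEig : ∀ v, ∑ e ∈ Finset.univ.filter (fun e => σ e = v), u (τ e) = Λ * u v)
    (hΛ0 : 0 < Λ) (w : V) (K' : ℕ) (hK' : 0 < K') :
    ∃ (K N : ℕ) (B : Fin N → (Fin K → Ed)),
      K = K' + k0 ∧
      Function.Injective B ∧
      (∀ i, EdChain σ τ (B i)) ∧
      (∀ i (z : Fin K), (z : ℕ) = 0 → σ (B i z) = w) ∧
      (∀ i (z : Fin K), (z : ℕ) = K - 1 → τ (B i z) = w) ∧
      Λ ^ K' * u w ≤ umax * Fintype.card V * N := by
  classical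
  obtain ⟨v', hv'⟩ := exists_fiber σ τ K' hK' w
  set Fib : Finset (PathFrom σ τ K' w) :=
    Finset.univ.filter (fun p => τ (p.1 ⟨K'-1, by omega⟩) = v') with hFib
  obtain ⟨q, hq1, hq2⟩ := exists_path_of_pos σ τ A hA k0 v' w (hk0 v' w)
  set N := Fib.card with hN
  set eqv := Fib.equivFin.symm with heqv
  have hmem : ∀ (i : Fin N) (z : Fin K'), (z : ℕ) = K' - 1 → τ ((eqv i).1.1 z) = v' := by
    intro i z hz
    have h1 := (eqv i).2
    simp only [hFib, Finset.mem_filter] at h1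
    have h2 : z = ⟨K'-1, by omega⟩ := Fin.ext (by simpa using hz)
    rw [h2]
    exact h1.2
  have hstart : ∀ (i : Fin N) (z : Fin K'), (z : ℕ) = 0 → σ ((eqv i).1.1 z) = w := by
    intro i z hz
    have h2 : z = ⟨0, hK'⟩ := Fin.ext (by simpa using hz)
    rw [h2]
    exact (eqv i).1.2.2 hK'
  have hqlast : ∀ (z : Fin k0), (z : ℕ) = k0 - 1 → 0 < k0 → τ (q.1 z) = w := by
    intro z hz h0
    have h2 : z = ⟨k0-1, by omega⟩ := Fin.ext (by simpa using hz)
    rw [h2]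
    exact hq1 h0
  refine ⟨K' + k0, N, fun i => ccat (eqv i).1.1 q.1, rfl, ?_, ?_, ?_, ?_, ?_⟩
  · -- injective
    intro i i' hii
    have hpe : ((eqv i).1 : PathFrom σ τ K' w).1 = ((eqv i').1 : PathFrom σ τ K' w).1 := by
      funext z
      have h3 := congrFun hii (⟨(z : ℕ), by omega⟩ : Fin (K'+k0))
      dsimp only at h3
      rw [ccat_lt' _ _ _ z.isLt, ccat_lt' _ _ _ z.isLt] at h3
      simpa using h3
    have : (eqv i).1 = (eqv i').1 := Subtype.ext hpe
    exact eqv.injective (Subtype.ext this)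
  · -- chain
    intro i
    apply ccat_chain
    · exact (eqv i).1.2.1
    · exact q.2.1
    · intro h1 h2
      rw [hmem i _ (by simp)]
      exact (q.2.2 h2).symm
  · -- start
    intro i z hz
    have h2 : z = ⟨0, by omega⟩ := Fin.ext (by simpa using hz)
    rw [h2]
    dsimp only
    rw [ccat_lt' _ _ 0 hK']
    exact hstart i _ (by simp)
  · -- end
    intro i z hz
    have h2 : z = ⟨K'+k0-1, by omega⟩ := Fin.ext (by simpa using hz)
    rw [h2]
    dsimp only
    rcases Nat.eq_zero_or_pos k0 with hk00 | hk0pos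
    · rw [ccat_lt' _ _ _ (show K'+k0-1 < K' by omega)]
      rw [hmem i _ (by simp; omega)]
      exact hq2 hk00
    · rw [ccat_ge' _ _ _ (show ¬ K'+k0-1 < K' by omega)]
      exact hqlast _ (by simp; omega) hk0pos
  · -- count
    have hg := pathFrom_card_growth σ τ u hu umax humax hEig hΛ0 K' w
    have humax0 : 0 < umax := lt_of_lt_of_le (hu w) (humax w)
    have h2 : (Fintype.card (PathFrom σ τ K' w) : ℝ) ≤ (Fintype.card V : ℝ) * N := by
      exact_mod_cast hv'
    calc Λ ^ K' * u w ≤ umax * Fintype.card (PathFrom σ τ K' w) := hg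
    _ ≤ umax * ((Fintype.card V : ℝ) * N) := mul_le_mul_of_nonneg_left h2 humax0.le
    _ = umax * Fintype.card V * N := by ring

end Paths


section Digits
variable (N : ℕ)

noncomputable def dg (b : ℕ → Fin N) : ℝ := ∑' m, (b m : ℝ) / (N:ℝ) ^ (m+1)

lemma dg_term_bound (hN : 2 ≤ N) (b : ℕ → Fin N) (m : ℕ) :
    (b m : ℝ) / (N:ℝ) ^ (m+1) ≤ ((N:ℝ)⁻¹) ^ m := by
  have hN1 : (1:ℝ) < N := by exact_mod_cast hN
  have hN0 : (0:ℝ) < N := by linarith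
  have h1 : (b m : ℝ) ≤ N := by
    have := (b m).isLt
    exact_mod_cast this.le
  rw [div_le_iff₀ (by positivity), inv_pow, inv_mul_eq_div, le_div_iff₀ (by positivity)]
  calc (b m : ℝ) * (N:ℝ)^m ≤ (N:ℝ) * (N:ℝ)^m := by
        exact mul_le_mul_of_nonneg_right h1 (by positivity)
  _ = (N:ℝ)^(m+1) := by ring
  _ ≤ (N:ℝ)^(m+1) := le_refl _

lemma dg_term_nonneg (b : ℕ → Fin N) (m : ℕ) : 0 ≤ (b m : ℝ) / (N:ℝ) ^ (m+1) := by
  positivity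

lemma dg_summable (hN : 2 ≤ N) (b : ℕ → Fin N) :
    Summable (fun m => (b m : ℝ) / (N:ℝ) ^ (m+1)) := by
  have hN1 : (1:ℝ) < N := by exact_mod_cast hN
  apply Summable.of_nonneg_of_le (dg_term_nonneg N b) (dg_term_bound N hN b)
  apply summable_geometric_of_lt_one (by positivity)
  rw [inv_lt_one_iff₀]; right; exact hN1

lemma dg_inv_lt (hN : 2 ≤ N) : ((N:ℝ))⁻¹ < 1 := by
  have hN1 : (1:ℝ) < N := by exact_mod_cast hN
  rw [inv_lt_one_iff₀]; right; exact hN1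

lemma dg_geo_sum (hN : 2 ≤ N) : ∑' j : ℕ, (((N:ℝ))⁻¹) ^ j ≤ 2 := by
  have hN1 : (1:ℝ) < N := by exact_mod_cast hN
  have h2 : (N:ℝ)⁻¹ ≤ 2⁻¹ := by
    apply inv_anti₀ (by norm_num)
    exact_mod_cast hN
  have h4 : (2:ℝ)⁻¹ ≤ 1 - (N:ℝ)⁻¹ := by norm_num at h2 ⊢; linarith
  rw [tsum_geometric_of_lt_one (by positivity) (dg_inv_lt N hN)]
  calc (1 - (N:ℝ)⁻¹)⁻¹ ≤ ((2:ℝ)⁻¹)⁻¹ := by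
        apply inv_anti₀ (by norm_num) h4
  _ = 2 := by norm_num

lemma dg_tail_bound (hN : 2 ≤ N) (b : ℕ → Fin N) (M : ℕ) :
    ∑' j : ℕ, (b (j + M) : ℝ) / (N:ℝ) ^ (j + M + 1) ≤ 2 * (((N:ℝ))⁻¹) ^ M := by
  have hsum : Summable (fun j => (b (j + M) : ℝ) / (N:ℝ) ^ (j + M + 1)) :=
    (summable_nat_add_iff (f := fun m => (b m : ℝ) / (N:ℝ) ^ (m+1)) M).mpr
      (dg_summable N hN b)
  calc ∑' j : ℕ, (b (j + M) : ℝ) / (N:ℝ) ^ (j + M + 1)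
      ≤ ∑' j : ℕ, (((N:ℝ))⁻¹) ^ M * (((N:ℝ))⁻¹) ^ j := by
        refine Summable.tsum_le_tsum (fun j => ?_) hsum ?_
        · calc (b (j + M) : ℝ) / (N:ℝ) ^ (j + M + 1) ≤ (((N:ℝ))⁻¹) ^ (j + M) :=
              dg_term_bound N hN b (j + M)
          _ = (((N:ℝ))⁻¹) ^ M * (((N:ℝ))⁻¹) ^ j := by rw [← pow_add]; ring_nf
        · exact Summable.mul_left _
            (summable_geometric_of_lt_one (by positivity) (dg_inv_lt N hN))
  _ = (((N:ℝ))⁻¹) ^ M * ∑' j : ℕ, (((N:ℝ))⁻¹) ^ j := by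
      rw [tsum_mul_left]
  _ ≤ (((N:ℝ))⁻¹) ^ M * 2 := by
      apply mul_le_mul_of_nonneg_left (dg_geo_sum N hN) (by positivity)
  _ = 2 * (((N:ℝ))⁻¹) ^ M := by ring

lemma dg_diff (hN : 2 ≤ N) (b b' : ℕ → Fin N) (M : ℕ) (hagree : ∀ m < M, b m = b' m) :
    |dg N b - dg N b'| ≤ 4 * (((N:ℝ))⁻¹) ^ M := by
  have hs1 := dg_summable N hN b
  have hs2 := dg_summable N hN b'
  have e1 := Summable.sum_add_tsum_nat_add (f := fun m => (b m : ℝ) / (N:ℝ) ^ (m+1)) M hs1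
  have e2 := Summable.sum_add_tsum_nat_add (f := fun m => (b' m : ℝ) / (N:ℝ) ^ (m+1)) M hs2
  have hpre : ∑ m ∈ Finset.range M, (b m : ℝ) / (N:ℝ) ^ (m+1)
      = ∑ m ∈ Finset.range M, (b' m : ℝ) / (N:ℝ) ^ (m+1) := by
    apply Finset.sum_congr rfl
    intro m hm
    rw [hagree m (Finset.mem_range.mp hm)]
  have hdd : dg N b - dg N b' = (∑' j : ℕ, (b (j + M) : ℝ) / (N:ℝ) ^ (j + M + 1))
      - (∑' j : ℕ, (b' (j + M) : ℝ) / (N:ℝ) ^ (j + M + 1)) := by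
    unfold dg
    rw [← e1, ← e2, hpre]
    ring
  rw [hdd]
  have h1 := dg_tail_bound N hN b M
  have h2 := dg_tail_bound N hN b' M
  have h3 : 0 ≤ ∑' j : ℕ, (b (j + M) : ℝ) / (N:ℝ) ^ (j + M + 1) :=
    tsum_nonneg (fun j => dg_term_nonneg N b _)
  have h4 : 0 ≤ ∑' j : ℕ, (b' (j + M) : ℝ) / (N:ℝ) ^ (j + M + 1) :=
    tsum_nonneg (fun j => dg_term_nonneg N b' _)
  rw [abs_le]
  constructor <;> nlinarith

lemma dg_surj (hN : 2 ≤ N) (y : ℝ) (hy : y ∈ Set.Icc (0:ℝ) 1) : ∃ b : ℕ → Fin N, dg N b = y := by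
  have hN1 : (1:ℝ) < N := by exact_mod_cast hN
  have hN0 : (0:ℝ) < N := by linarith
  set rseq : ℕ → ℝ := fun m =>
    Nat.rec y (fun _ rm => (N:ℝ) * rm - (min (N-1) ⌊(N:ℝ)*rm⌋₊ : ℕ)) m with hrseq
  have hr0 : rseq 0 = y := rfl
  have hrsucc : ∀ m, rseq (m+1) = (N:ℝ) * rseq m - (min (N-1) ⌊(N:ℝ)*rseq m⌋₊ : ℕ) := fun m => rfl
  have hinv : ∀ m, 0 ≤ rseq m ∧ rseq m ≤ 1 := by
    intro m
    induction m with
    | zero => exact ⟨hy.1, hy.2⟩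
    | succ m ih =>
      rw [hrsucc m]
      set z := (N:ℝ) * rseq m with hz
      have hz0 : 0 ≤ z := mul_nonneg hN0.le ih.1
      have hzN : z ≤ N := by
        calc z ≤ (N:ℝ) * 1 := mul_le_mul_of_nonneg_left ih.2 hN0.le
        _ = N := mul_one _
      by_cases hcase : ⌊z⌋₊ ≤ N - 1
      · rw [min_eq_right hcase]
        have hfl : (⌊z⌋₊ : ℝ) ≤ z := Nat.floor_le hz0
        have hfu : z < ⌊z⌋₊ + 1 := Nat.lt_floor_add_one z
        exact ⟨by linarith, by linarith⟩
      · push_neg at hcase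
        rw [min_eq_left (by omega)]
        have hNfl : (N:ℝ) ≤ ⌊z⌋₊ := by exact_mod_cast (by omega : N ≤ ⌊z⌋₊)
        have hfl : (⌊z⌋₊ : ℝ) ≤ z := Nat.floor_le hz0
        have hcast : ((N - 1 : ℕ) : ℝ) = (N:ℝ) - 1 := by
          have : 1 ≤ N := by omega
          push_cast [this]
          ring
        rw [hcast]
        constructor <;> linarith
  set b : ℕ → Fin N := fun m => ⟨min (N-1) ⌊(N:ℝ)*rseq m⌋₊, by omega⟩ with hb
  have hbval : ∀ m, (b m : ℝ) = ((min (N-1) ⌊(N:ℝ)*rseq m⌋₊ : ℕ) : ℝ) := fun m => rfl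
  have hpart : ∀ M, y = (∑ m ∈ Finset.range M, (b m : ℝ) / (N:ℝ) ^ (m+1)) + rseq M / (N:ℝ) ^ M := by
    intro M
    induction M with
    | zero => simp [hr0]
    | succ M ih =>
      rw [Finset.sum_range_succ]
      have h5 : rseq (M+1) / (N:ℝ)^(M+1) = rseq M / (N:ℝ)^M - (b M : ℝ)/(N:ℝ)^(M+1) := by
        rw [hrsucc M, hbval M]
        have hNM : (N:ℝ)^(M+1) ≠ 0 := by positivity
        field_simp
        ring
      rw [h5]
      linarith [ih]
  refine ⟨b, ?_⟩
  have hclose : ∀ M : ℕ, |dg N b - y| ≤ 3 * (((N:ℝ))⁻¹) ^ M := by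
    intro M
    have e1 := Summable.sum_add_tsum_nat_add (f := fun m => (b m : ℝ) / (N:ℝ) ^ (m+1)) M (dg_summable N hN b)
    have htail := dg_tail_bound N hN b M
    have htail0 : 0 ≤ ∑' j : ℕ, (b (j + M) : ℝ) / (N:ℝ) ^ (j + M + 1) :=
      tsum_nonneg (fun j => dg_term_nonneg N b _)
    have hsplit : dg N b = (∑ m ∈ Finset.range M, (b m : ℝ) / (N:ℝ) ^ (m+1))
        + ∑' j : ℕ, (b (j + M) : ℝ) / (N:ℝ) ^ (j + M + 1) := by
      unfold dg
      rw [← e1]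
    have hy2 := hpart M
    have hrm := hinv M
    have hpow : rseq M / (N:ℝ)^M ≤ (((N:ℝ))⁻¹) ^ M := by
      rw [inv_pow, div_eq_mul_inv]
      calc rseq M * ((N:ℝ)^M)⁻¹ ≤ 1 * ((N:ℝ)^M)⁻¹ :=
          mul_le_mul_of_nonneg_right hrm.2 (by positivity)
      _ = ((N:ℝ)^M)⁻¹ := one_mul _
    have hpow0 : 0 ≤ rseq M / (N:ℝ)^M := div_nonneg hrm.1 (by positivity)
    rw [abs_le]
    constructor <;> nlinarith
  by_contra hne
  have habs : 0 < |dg N b - y| := abs_pos.mpr (sub_ne_zero.mpr hne)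
  obtain ⟨M, hM⟩ := exists_pow_lt_of_lt_one (by positivity : (0:ℝ) < |dg N b - y| / 3)
    (dg_inv_lt N hN)
  have := hclose M
  have h6 : 3 * ((N:ℝ)⁻¹) ^ M < 3 * (|dg N b - y| / 3) := by
    apply mul_lt_mul_of_pos_left hM (by norm_num)
  linarith

end Digits

section Lower
variable {V Ed : Type} [Fintype V] [Fintype Ed] [Nonempty V] [DecidableEq V]

set_option maxHeartbeats 2000000 in
lemma lower_bound (σ τ : Ed → V) (A : Matrix V V ℕ)
    (hA : ∀ v v', A v v' = Nat.card {e : Ed // σ e = v ∧ τ e = v'})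
    (hprim : ∃ k : ℕ, ∀ v v', 0 < (A ^ k) v v')
    (Λ : ℝ) (hΛ : 1 < Λ)
    (hPF : ∃ u : V → ℝ, (∀ v, 0 < u v) ∧ (A.map (Nat.cast : ℕ → ℝ)).mulVec u = Λ • u)
    (α : ℝ) (hα : α ∈ Set.Ioo (0 : ℝ) 1)
    (a : SPath Ed σ τ → ℕ → ℝ) (a₁ a₂ : ℝ) (ha₁ : 0 < a₁)
    (hab : ∀ x n, a x n ∈ Set.Icc a₁ a₂)
    [MetricSpace (SPath Ed σ τ)]
    (hdist : ∀ x y : SPath Ed σ τ, x ≠ y → dist x y = a x (slcp x y) * α ^ slcp x y) :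
    ENNReal.ofReal (Real.log Λ / (-Real.log α)) ≤
      dimH (Set.univ : Set (SPath Ed σ τ)) := by
  classical
  obtain ⟨u, hu, hPF'⟩ := hPF
  have hEig := eig_identity σ τ A hA Λ u hPF'
  obtain ⟨hα0, hα1⟩ := hα
  have hΛ0 : (0:ℝ) < Λ := lt_trans one_pos hΛ
  have hlogΛ : 0 < Real.log Λ := Real.log_pos hΛ
  have hlogα : 0 < -Real.log α := by
    have := Real.log_neg hα0 hα1; linarith
  set d : ℝ := Real.log Λ / (-Real.log α) with hd
  have hd0 : 0 < d := div_pos hlogΛ hlogα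
  obtain ⟨k0, hk0⟩ := hprim
  obtain ⟨vm, -, humax⟩ : ∃ vm ∈ Finset.univ, ∀ v : V, u v ≤ u vm := by
    obtain ⟨vm, h1, h2⟩ := Finset.exists_max_image Finset.univ u
      ⟨Classical.arbitrary V, Finset.mem_univ _⟩
    exact ⟨vm, h1, fun v => h2 v (Finset.mem_univ v)⟩
  set umax := u vm with humaxdef
  have humax0 : 0 < umax := hu vm
  set w : V := Classical.arbitrary V with hw
  set cV : ℝ := (Fintype.card V : ℝ) with hcV
  have hcV0 : 0 < cV := by
    rw [hcV]; exact_mod_cast Fintype.card_pos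
  set c₂ : ℝ := u w / (umax * cV) with hc₂
  have hc₂0 : 0 < c₂ := div_pos (hu w) (mul_pos humax0 hcV0)
  have hkey : ∀ s : ℝ, 0 < s → s < d →
      ENNReal.ofReal s ≤ dimH (Set.univ : Set (SPath Ed σ τ)) := by
    intro s hs0 hsd
    set δ₀ : ℝ := Real.log Λ - s * (-Real.log α) with hδ₀
    have hδ₀0 : 0 < δ₀ := by
      rw [hd, lt_div_iff₀ hlogα] at hsd
      rw [hδ₀]; linarith
    set K' : ℕ := max 1 (max ⌈(Real.log 2 - Real.log c₂)/Real.log Λ⌉₊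
        ⌈(s * k0 * (-Real.log α) - Real.log c₂)/δ₀⌉₊) with hK'
    have hK'1 : 1 ≤ K' := le_max_left _ _
    have hK'a : Real.log 2 ≤ Real.log c₂ + K' * Real.log Λ := by
      have h1 : ((Real.log 2 - Real.log c₂)/Real.log Λ) ≤ (K' : ℝ) := by
        calc ((Real.log 2 - Real.log c₂)/Real.log Λ)
            ≤ (⌈(Real.log 2 - Real.log c₂)/Real.log Λ⌉₊ : ℝ) := Nat.le_ceil _
        _ ≤ (K' : ℝ) := by
            have : ⌈(Real.log 2 - Real.log c₂)/Real.log Λ⌉₊ ≤ K' :=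
              le_trans (le_max_left _ _) (le_max_right 1 _)
            exact_mod_cast this
      rw [div_le_iff₀ hlogΛ] at h1
      linarith
    have hK'b : s * ((K' : ℝ) + (k0:ℝ)) * (-Real.log α) ≤ Real.log c₂ + K' * Real.log Λ := by
      have h1 : ((s * k0 * (-Real.log α) - Real.log c₂)/δ₀) ≤ (K' : ℝ) := by
        calc ((s * k0 * (-Real.log α) - Real.log c₂)/δ₀)
            ≤ (⌈(s * k0 * (-Real.log α) - Real.log c₂)/δ₀⌉₊ : ℝ) := Nat.le_ceil _
        _ ≤ (K' : ℝ) := by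
            have : ⌈(s * k0 * (-Real.log α) - Real.log c₂)/δ₀⌉₊ ≤ K' :=
              le_trans (le_max_right _ _) (le_max_right 1 _)
            exact_mod_cast this
      rw [div_le_iff₀ hδ₀0, hδ₀] at h1
      nlinarith
    obtain ⟨K, N, B, hKdef, hBinj, hBchain, hBstart, hBend, hBcount⟩ :=
      exists_blocks σ τ A hA k0 hk0 Λ u hu umax humax hEig hΛ0 w K' (by omega)
    have hK0 : 0 < K := by omega
    have hNreal : Real.exp (Real.log c₂ + K' * Real.log Λ) ≤ (N : ℝ) := by
      have h2 : Real.exp (Real.log c₂ + (K':ℝ) * Real.log Λ) = c₂ * Λ ^ K' := by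
        rw [Real.exp_add, Real.exp_log hc₂0, Real.exp_nat_mul, Real.exp_log hΛ0]
      rw [h2, hc₂, div_mul_eq_mul_div, div_le_iff₀ (mul_pos humax0 hcV0)]
      calc u w * Λ ^ K' = Λ ^ K' * u w := by ring
      _ ≤ umax * cV * N := hBcount
      _ = (N:ℝ) * (umax * cV) := by ring
    have hN2 : 2 ≤ N := by
      have h3 : (2:ℝ) ≤ (N:ℝ) := by
        calc (2:ℝ) = Real.exp (Real.log 2) := (Real.exp_log (by norm_num)).symm
        _ ≤ Real.exp (Real.log c₂ + K' * Real.log Λ) := Real.exp_le_exp.mpr hK'a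
        _ ≤ (N:ℝ) := hNreal
      exact_mod_cast h3
    have hN1r : (1:ℝ) < (N:ℝ) := by exact_mod_cast (by omega : 1 < N)
    have hN0r : (0:ℝ) < (N:ℝ) := by linarith
    set r : ℝ := Real.log N / ((K:ℝ) * (-Real.log α)) with hr
    have hKr0 : 0 < (K:ℝ) * (-Real.log α) :=
      mul_pos (by exact_mod_cast hK0) hlogα
    have hlogN : 0 < Real.log N := Real.log_pos hN1r
    have hr0 : 0 < r := div_pos hlogN hKr0
    have hlogc₂N : Real.log c₂ + K' * Real.log Λ ≤ Real.log N := by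
      have := Real.log_le_log (Real.exp_pos _) hNreal
      rwa [Real.log_exp] at this
    have hsr : s ≤ r := by
      rw [hr, le_div_iff₀ hKr0]
      have hKcast : (K:ℝ) = (K':ℝ) + (k0:ℝ) := by rw [hKdef]; push_cast; ring
      rw [hKcast]
      calc s * (((K':ℝ) + (k0:ℝ)) * (-Real.log α))
          = s * ((K':ℝ) + (k0:ℝ)) * (-Real.log α) := by ring
      _ ≤ Real.log c₂ + K' * Real.log Λ := hK'b
      _ ≤ Real.log N := hlogc₂N
    have hrK : r * ((K:ℝ) * Real.log α) = - Real.log N := by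
      have hKne : ((K:ℕ):ℝ) ≠ 0 := by exact_mod_cast hK0.ne'
      have hLne : Real.log α ≠ 0 := by
        intro h; rw [h] at hlogα; norm_num at hlogα
      rw [hr]
      field_simp
    -- the coding map
    have hFcomp : ∀ (bb : ℕ → Fin N) (n : ℕ),
        τ (B (bb (n / K)) ⟨n % K, Nat.mod_lt n hK0⟩)
          = σ (B (bb ((n+1) / K)) ⟨(n+1) % K, Nat.mod_lt (n+1) hK0⟩) := by
      intro bb n
      have hrrK : n % K < K := Nat.mod_lt n hK0
      have e0 : K * (n / K) + n % K = n := Nat.div_add_mod n K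
      rcases Nat.lt_or_ge (n % K + 1) K with hlt | hge
      · have e1 : n + 1 = (n % K + 1) + K * (n / K) := by omega
        have hdiv : (n+1) / K = n / K := by
          rw [e1, Nat.add_mul_div_left _ _ hK0, Nat.div_eq_of_lt hlt, Nat.zero_add]
        have hmod : (n+1) % K = n % K + 1 := by
          rw [e1, Nat.add_mul_mod_self_left, Nat.mod_eq_of_lt hlt]
        rw [hdiv]
        exact hBchain (bb (n / K)) _ _ (by show n % K + 1 = (n+1) % K; omega)
      · have hrr1 : n % K + 1 = K := by omega
        have e1 : n + 1 = K * (n / K + 1) := by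
          calc n + 1 = K * (n / K) + (n % K + 1) := by omega
          _ = K * (n / K) + K := by rw [hrr1]
          _ = K * (n / K + 1) := by ring
        have hdiv : (n+1) / K = n / K + 1 := by
          rw [e1, Nat.mul_div_cancel_left _ hK0]
        have hmod : (n+1) % K = 0 := by
          rw [e1, Nat.mul_mod_right]
        rw [hdiv]
        rw [hBend (bb (n / K)) _ (by show n % K = K - 1; omega),
          hBstart (bb (n / K + 1)) _ (by show (n+1) % K = 0; omega)]
    set F : (ℕ → Fin N) → SPath Ed σ τ := fun bb =>
      ⟨fun n => B (bb (n / K)) ⟨n % K, Nat.mod_lt n hK0⟩, hFcomp bb⟩ with hF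
    have hFval : ∀ (bb : ℕ → Fin N) (n : ℕ),
        (F bb).1 n = B (bb (n / K)) ⟨n % K, Nat.mod_lt n hK0⟩ := fun bb n => rfl
    have hdisag : ∀ (bb bb' : ℕ → Fin N) (M : ℕ), bb M ≠ bb' M →
        ∃ n, M*K ≤ n ∧ n ≤ M*K + K - 1 ∧ (F bb).1 n ≠ (F bb').1 n := by
      intro bb bb' M hMne
      have hBne : B (bb M) ≠ B (bb' M) := fun h => hMne (hBinj h)
      obtain ⟨i₀, hi₀⟩ := Function.ne_iff.mp hBne
      refine ⟨M*K + (i₀ : ℕ), by omega, by have := i₀.isLt; omega, ?_⟩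
      have e1 : M*K + (i₀ : ℕ) = (i₀ : ℕ) + K * M := by ring
      have hdiv : (M*K + (i₀ : ℕ)) / K = M := by
        rw [e1, Nat.add_mul_div_left _ _ hK0, Nat.div_eq_of_lt i₀.isLt, Nat.zero_add]
      have hmod : (M*K + (i₀ : ℕ)) % K = (i₀ : ℕ) := by
        rw [e1, Nat.add_mul_mod_self_left, Nat.mod_eq_of_lt i₀.isLt]
      rw [hFval, hFval, hdiv]
      have hidx : (⟨(M*K + (i₀ : ℕ)) % K, Nat.mod_lt _ hK0⟩ : Fin K) = i₀ :=
        Fin.ext (by show (M*K + (i₀ : ℕ)) % K = (i₀ : ℕ); omega)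
      rw [hidx]
      exact hi₀
    have hFinj : Function.Injective F := by
      intro bb bb' hFe
      by_contra hne
      obtain ⟨M, hM⟩ : ∃ M, bb M ≠ bb' M := by
        by_contra h; push_neg at h; exact hne (funext h)
      obtain ⟨n, -, -, hDn⟩ := hdisag bb bb' M hM
      exact hDn (by rw [hFe])
    have hFag : ∀ (bb bb' : ℕ → Fin N) (M : ℕ), (∀ m < M, bb m = bb' m) →
        ∀ n < M * K, (F bb).1 n = (F bb').1 n := by
      intro bb bb' M hag n hn
      rw [hFval, hFval, hag (n / K) ((Nat.div_lt_iff_lt_mul hK0).mpr hn)]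
    haveI : Nonempty (ℕ → Fin N) := ⟨fun _ => ⟨0, by omega⟩⟩
    set g₂ : SPath Ed σ τ → ℝ := fun x => dg N (Function.invFun F x) with hg₂
    have hlinv := Function.leftInverse_invFun hFinj
    -- key exponent inequality
    have hexp : ∀ M : ℕ, ((N:ℝ)⁻¹)^(M+1) ≤ ((α : ℝ) ^ (M*K + K - 1)) ^ r := by
      intro M
      have hα' : (α : ℝ) ^ (M*K + K - 1) = Real.exp (((M*K + K - 1 : ℕ):ℝ) * Real.log α) := by
        rw [Real.exp_nat_mul, Real.exp_log hα0]
      have hNinv : ((N:ℝ)⁻¹)^(M+1) = Real.exp (((M+1 : ℕ):ℝ) * Real.log ((N:ℝ)⁻¹)) := by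
        rw [Real.exp_nat_mul, Real.exp_log (by positivity)]
      rw [hα', hNinv, ← Real.exp_mul, Real.exp_le_exp, Real.log_inv]
      have hjcast : ((M*K + K - 1 : ℕ):ℝ) = ((M:ℝ)+1) * (K:ℝ) - 1 := by
        have h1 : M*K + K - 1 + 1 = M*K + K := by omega
        have h2 : ((M*K + K : ℕ):ℝ) = ((M:ℝ)+1) * (K:ℝ) := by push_cast; ring
        have h3 : ((M*K + K - 1 : ℕ):ℝ) + 1 = ((M:ℝ)+1) * (K:ℝ) := by
          rw [← h2]; exact_mod_cast congrArg (Nat.cast : ℕ → ℝ) h1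
        linarith
      rw [hjcast]
      push_cast
      have hkey2 : (((M:ℝ)+1) * (K:ℝ) - 1) * Real.log α * r
          = ((M:ℝ)+1) * (r * ((K:ℝ) * Real.log α)) - r * Real.log α := by ring
      rw [hkey2, hrK]
      have : 0 < r * (-Real.log α) := mul_pos hr0 hlogα
      linarith
    -- Hölder estimate
    set C : ℝ := 4 * (N:ℝ) * ((a₁ ^ r))⁻¹ with hC
    have ha₁r : 0 < a₁ ^ r := Real.rpow_pos_of_pos ha₁ r
    have hC0 : 0 < C := by
      rw [hC]
      exact mul_pos (mul_pos (by norm_num) hN0r) (inv_pos.mpr ha₁r)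
    have hold : ∀ x ∈ Set.range F, ∀ y ∈ Set.range F,
        dist (g₂ x) (g₂ y) ≤ (C.toNNReal : ℝ) * dist x y ^ ((r.toNNReal : ℝ≥0) : ℝ) := by
      have hCcoe : (C.toNNReal : ℝ) = C := Real.coe_toNNReal _ hC0.le
      have hrcoe : ((r.toNNReal : ℝ≥0) : ℝ) = r := Real.coe_toNNReal _ hr0.le
      rintro x ⟨bb, rfl⟩ y ⟨bb', rfl⟩
      rw [hCcoe, hrcoe]
      rcases eq_or_ne bb bb' with rfl | hbne
      · simp only [dist_self]
        positivity
      · obtain ⟨M, hMne, hagr⟩ : ∃ M, bb M ≠ bb' M ∧ ∀ m < M, bb m = bb' m := by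
          have hse : {m | bb m ≠ bb' m}.Nonempty := by
            by_contra h
            rw [Set.not_nonempty_iff_eq_empty, Set.eq_empty_iff_forall_notMem] at h
            exact hbne (funext fun m => not_not.mp (h m))
          refine ⟨sInf {m | bb m ≠ bb' m}, Nat.sInf_mem hse, fun m hm => ?_⟩
          by_contra hc
          exact absurd (Nat.sInf_le (Set.mem_setOf.mpr hc)) (not_le.mpr hm)
        obtain ⟨n₀, hn₀l, hn₀h, hn₀ne⟩ := hdisag bb bb' M hMne
        have hxy : F bb ≠ F bb' := fun h => hn₀ne (by rw [h])
        set n : ℕ := slcp (F bb) (F bb') with hn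
        have hsne : {m | (F bb).1 m ≠ (F bb').1 m}.Nonempty := ⟨n₀, hn₀ne⟩
        have hnmem : (F bb).1 n ≠ (F bb').1 n := Nat.sInf_mem hsne
        have hnlow : M * K ≤ n := by
          by_contra hc
          push_neg at hc
          exact hnmem (hFag bb bb' M hagr n hc)
        have hnhigh : n ≤ M*K + K - 1 := le_trans (Nat.sInf_le hn₀ne) hn₀h
        have hdlow : a₁ * α ^ (M*K + K - 1) ≤ dist (F bb) (F bb') := by
          rw [hdist _ _ hxy, ← hn]
          have h1 : α ^ (M*K + K - 1) ≤ α ^ n := pow_le_pow_of_le_one hα0.le hα1.le hnhigh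
          have h2 : a₁ ≤ a (F bb) n := (hab _ n).1
          have h3 : (0:ℝ) < α ^ n := pow_pos hα0 n
          nlinarith [pow_pos hα0 (M*K + K - 1)]
        have hdg : dist (g₂ (F bb)) (g₂ (F bb')) ≤ 4 * ((N:ℝ)⁻¹)^M := by
          rw [hg₂]
          simp only [hlinv bb, hlinv bb']
          rw [Real.dist_eq]
          exact dg_diff N hN2 bb bb' M hagr
        have hrpow : a₁ ^ r * ((N:ℝ)⁻¹)^(M+1) ≤ dist (F bb) (F bb') ^ r := by
          calc a₁ ^ r * ((N:ℝ)⁻¹)^(M+1)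
              ≤ a₁ ^ r * ((α : ℝ) ^ (M*K + K - 1)) ^ r :=
                mul_le_mul_of_nonneg_left (hexp M) ha₁r.le
          _ = (a₁ * α ^ (M*K + K - 1)) ^ r :=
                (Real.mul_rpow ha₁.le (by positivity)).symm
          _ ≤ dist (F bb) (F bb') ^ r :=
                Real.rpow_le_rpow (by positivity) hdlow hr0.le
        calc dist (g₂ (F bb)) (g₂ (F bb')) ≤ 4 * ((N:ℝ)⁻¹)^M := hdg
        _ = 4 * (N:ℝ) * ((N:ℝ)⁻¹)^(M+1) := by
            rw [pow_succ]
            field_simp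
        _ = C * (a₁ ^ r * ((N:ℝ)⁻¹)^(M+1)) := by
            rw [hC]
            field_simp
        _ ≤ C * dist (F bb) (F bb') ^ r := mul_le_mul_of_nonneg_left hrpow hC0.le
    have hold' : HolderOnWith C.toNNReal r.toNNReal g₂ (Set.range F) :=
      holderOnWith_of_dist_le hold
    have himg : Set.Icc (0:ℝ) 1 ⊆ g₂ '' (Set.range F) := by
      intro y hy
      obtain ⟨bb, hbb⟩ := dg_surj N hN2 y hy
      refine ⟨F bb, Set.mem_range_self bb, ?_⟩
      rw [hg₂]
      simp only [hlinv bb]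
      exact hbb
    have hdim := aux_le_dimH g₂ (Set.range F) C.toNNReal r.toNNReal
      (Real.toNNReal_pos.mpr hr0) hold' himg
    calc ENNReal.ofReal s ≤ ENNReal.ofReal r := ENNReal.ofReal_le_ofReal hsr
    _ = (r.toNNReal : ℝ≥0∞) := rfl
    _ ≤ dimH (Set.univ : Set (SPath Ed σ τ)) := hdim
  -- conclude
  by_contra hcon
  push_neg at hcon
  obtain ⟨q, hq0, hq1, hq2⟩ := ENNReal.lt_iff_exists_rat_btwn.mp hcon
  have hofq : (Real.toNNReal ((q:ℝ)) : ℝ≥0∞) = ENNReal.ofReal ((q:ℝ)) := rfl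
  rw [hofq] at hq1 hq2
  have hqd : ((q:ℝ)) < d := (ENNReal.ofReal_lt_ofReal_iff hd0).mp hq2
  rcases lt_or_eq_of_le hq0 with hq0' | hq0'
  · have hq0r : (0:ℝ) < (q:ℝ) := by exact_mod_cast hq0'
    exact absurd (hkey (q:ℝ) hq0r hqd) (not_le.mpr hq1)
  · rw [← hq0'] at hq1
    norm_num at hq1

end Lower


/-- The Hausdorff dimension of a self-similar ultrametric Cantor set (the path space of a
stationary Bratteli diagram with primitive adjacency matrix `A`, Perron–Frobenius eigenvalue
`Λ`, and ultrametric `ρ(x,y) = a_{x∧y}·α^{|x∧y|}` with weights `a_γ` uniformly bounded away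
from `0` and `∞`) equals the abscissa of convergence of its zeta function,
`log Λ / (−log α)`. -/
theorem stmt5 {V Ed : Type} [Fintype V] [Fintype Ed] [Nonempty V] [DecidableEq V]
    (σ τ : Ed → V)
    (A : Matrix V V ℕ)
    (hA : ∀ v v', A v v' = Nat.card {e : Ed // σ e = v ∧ τ e = v'})
    (hprim : ∃ k : ℕ, ∀ v v', 0 < (A ^ k) v v')
    (Λ : ℝ) (hΛ : 1 < Λ)
    (hPF : ∃ u : V → ℝ, (∀ v, 0 < u v) ∧ (A.map (Nat.cast : ℕ → ℝ)).mulVec u = Λ • u)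
    (α : ℝ) (hα : α ∈ Set.Ioo (0 : ℝ) 1)
    (a : SPath Ed σ τ → ℕ → ℝ) (a₁ a₂ : ℝ) (ha₁ : 0 < a₁)
    (hab : ∀ x n, a x n ∈ Set.Icc a₁ a₂)
    (hagree : ∀ x y : SPath Ed σ τ, ∀ n, (∀ i < n, x.1 i = y.1 i) → a x n = a y n)
    [MetricSpace (SPath Ed σ τ)]
    (hdist : ∀ x y : SPath Ed σ τ, x ≠ y → dist x y = a x (slcp x y) * α ^ slcp x y) :
    dimH (Set.univ : Set (SPath Ed σ τ)) =
      ENNReal.ofReal (Real.log Λ / (-Real.log α)) := by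
  apply le_antisymm
  · exact upper_bound σ τ A hA Λ hΛ hPF α hα a a₁ a₂ ha₁ hab hdist
  · exact lower_bound σ τ A hA hprim Λ hΛ hPF α hα a a₁ a₂ ha₁ hab hdist
end

section
/- Let C be an ultrametric space in which every ball is a cylinder of a path in a Bratteli diagram, and suppose for some d > 0 that every cylinder [γ] satisfies diam([γ])^d < Σ_{η ∈ ext(γ)} diam([η])^d, where ext(γ) are the one-step extensions of γ (whose cylinders partition [γ]). Then for any finite partition of C by cylinders one has Σ_i diam(u_i)^d ≥ diam(C)^d, hence the d-dimensional Hausdorff content of C is at least diam(C)^d > 0, and dim_H(C) ≥ d. -/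
open Metric Set MeasureTheory
open scoped ENNReal NNReal

private lemma sum_image_le_aux {α β : Type*} [DecidableEq β] (s : Finset α) (g : α → β)
    (f : β → ℝ) (hf : ∀ b, 0 ≤ f b) :
    ∑ b ∈ s.image g, f b ≤ ∑ a ∈ s, f (g a) := by
  classical
  induction s using Finset.induction_on with
  | empty => simp
  | @insert a s ha ih =>
      rw [Finset.image_insert, Finset.sum_insert ha]
      by_cases hg : g a ∈ s.image g
      · rw [Finset.insert_eq_self.mpr hg]
        exact le_add_of_nonneg_of_le (hf _) ih
      · rw [Finset.sum_insert hg]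
        exact add_le_add (le_refl _) ih

/-- In a compact ultrametric space whose balls are the cylinders of the finite paths of a
Bratteli diagram (one-step extensions of a path partition its cylinder), if for some `d > 0`
every cylinder satisfies `diam([γ])^d < Σ_{η ∈ ext(γ)} diam([η])^d`, then every finite
partition of the space by cylinders satisfies `Σ diam^d ≥ diam(C)^d`; hence the `d`-dimensional
Hausdorff content is at least `diam(C)^d > 0` and `dim_H(C) ≥ d`. -/
theorem stmt6 {C : Type*} [MetricSpace C] [CompactSpace C]
    (hultra : ∀ x y z : C, dist x z ≤ max (dist x y) (dist y z))
    (P : Type) (root : P) (ext : P → Finset P) (cyl : P → Set C)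
    (hroot : cyl root = Set.univ)
    (hne : ∀ γ, (cyl γ).Nonempty)
    (hreach : ∀ γ : P, Relation.ReflTransGen (fun a b => b ∈ ext a) root γ)
    (hdisj : ∀ γ, (↑(ext γ) : Set P).PairwiseDisjoint cyl)
    (hpart : ∀ γ, (⋃ η ∈ ext γ, cyl η) = cyl γ)
    (hball : ∀ (x : C) (ρ : ℝ), 0 < ρ → ∃ γ, Metric.closedBall x ρ = cyl γ)
    (d : ℝ) (hd : 0 < d)
    (hgrow : ∀ γ, Metric.diam (cyl γ) ^ d < ∑ η ∈ ext γ, Metric.diam (cyl η) ^ d)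
    (hdiamC : 0 < Metric.diam (Set.univ : Set C)) :
    (∀ F : Finset P, (↑F : Set P).PairwiseDisjoint cyl → (⋃ γ ∈ F, cyl γ) = Set.univ →
      Metric.diam (Set.univ : Set C) ^ d ≤ ∑ γ ∈ F, Metric.diam (cyl γ) ^ d) ∧
    ENNReal.ofReal d ≤ dimH (Set.univ : Set C) := by
  classical
  -- cylinders of descendants are contained in the cylinder of the ancestor
  have hsub : ∀ {δ γ : P}, Relation.ReflTransGen (fun a b => b ∈ ext a) δ γ →
      cyl γ ⊆ cyl δ := by
    intro δ γ h
    induction h with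
    | refl => exact subset_rfl
    | @tail b c hb hmem ih =>
        refine subset_trans ?_ ih
        intro x hx
        rw [← hpart b]
        exact Set.mem_biUnion hmem hx
  -- main combinatorial lemma
  have key : ∀ n (δ : P) (F : Finset P), F.card ≤ n →
      (∀ η ∈ F, Relation.ReflTransGen (fun a b => b ∈ ext a) δ η) →
      (↑F : Set P).PairwiseDisjoint cyl → (⋃ γ ∈ F, cyl γ) = cyl δ →
      Metric.diam (cyl δ) ^ d ≤ ∑ γ ∈ F, Metric.diam (cyl γ) ^ d := by
    intro n
    induction n with
    | zero =>
        intro δ F hcard _ _ hcov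
        exfalso
        have hF : F = ∅ := Finset.card_eq_zero.mp (le_antisymm hcard (Nat.zero_le _))
        rw [hF] at hcov
        simp only [Finset.notMem_empty, Set.iUnion_of_empty, Set.iUnion_empty] at hcov
        exact (hne δ).ne_empty hcov.symm
    | succ n ih =>
        intro δ F hcard hreach' hdisj' hcov
        by_cases hA : ∃ η ∈ F, cyl η = cyl δ
        · obtain ⟨η, hηF, hηδ⟩ := hA
          calc Metric.diam (cyl δ) ^ d = Metric.diam (cyl η) ^ d := by rw [hηδ]
            _ ≤ ∑ γ ∈ F, Metric.diam (cyl γ) ^ d :=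
                Finset.single_le_sum (fun γ _ => Real.rpow_nonneg Metric.diam_nonneg d) hηF
        · push_neg at hA
          have hchild : ∀ η ∈ F, ∃ c ∈ ext δ,
              Relation.ReflTransGen (fun a b => b ∈ ext a) c η ∧ cyl η ⊆ cyl c := by
            intro η hη
            rcases (hreach' η hη).cases_head with h | ⟨c, hc, hrc⟩
            · exact absurd (h ▸ rfl) (hA η hη)
            · exact ⟨c, hc, hrc, hsub hrc⟩
          set Fe : P → Finset P := fun e => F.filter (fun η => cyl η ⊆ cyl e) with hFe
          have huniq : ∀ η, ∀ e ∈ ext δ, ∀ e' ∈ ext δ,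
              cyl η ⊆ cyl e → cyl η ⊆ cyl e' → e = e' := by
            intro η e he e' he' h1 h2
            by_contra hne'
            obtain ⟨x, hx⟩ := hne η
            exact Set.disjoint_left.mp
              (hdisj δ (Finset.mem_coe.mpr he) (Finset.mem_coe.mpr he') hne') (h1 hx) (h2 hx)
          have hbiU : F = (ext δ).biUnion Fe := by
            apply Finset.Subset.antisymm
            · intro η hη
              obtain ⟨c, hc, _, hsubc⟩ := hchild η hη
              exact Finset.mem_biUnion.mpr ⟨c, hc, Finset.mem_filter.mpr ⟨hη, hsubc⟩⟩
            · intro η hη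
              obtain ⟨c, _, hc⟩ := Finset.mem_biUnion.mp hη
              exact (Finset.mem_filter.mp hc).1
          have hfib : (↑(ext δ) : Set P).PairwiseDisjoint Fe := by
            intro e he e' he' hee'
            simp only [Function.onFun]
            rw [Finset.disjoint_left]
            intro η h1 h2
            exact hee' (huniq η e (Finset.mem_coe.mp he) e' (Finset.mem_coe.mp he')
              (Finset.mem_filter.mp h1).2 (Finset.mem_filter.mp h2).2)
          have hcove : ∀ e ∈ ext δ, (⋃ γ ∈ Fe e, cyl γ) = cyl e := by
            intro e he
            apply Set.Subset.antisymm
            · exact Set.iUnion₂_subset fun γ hγ => (Finset.mem_filter.mp hγ).2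
            · intro x hx
              have hxδ : x ∈ cyl δ := by
                rw [← hpart δ]; exact Set.mem_biUnion he hx
              rw [← hcov] at hxδ
              obtain ⟨η, hηF, hxη⟩ := Set.mem_iUnion₂.mp hxδ
              obtain ⟨c, hc, _, hsubc⟩ := hchild η hηF
              have hce : c = e := by
                by_contra hce
                exact Set.disjoint_left.mp
                  (hdisj δ (Finset.mem_coe.mpr hc) (Finset.mem_coe.mpr he) hce) (hsubc hxη) hx
              exact Set.mem_biUnion (Finset.mem_filter.mpr ⟨hηF, hce ▸ hsubc⟩) hxη
          have hcard' : ∀ e ∈ ext δ, (Fe e).card ≤ n := by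
            intro e he
            have h2 : ∃ e' ∈ ext δ, e' ≠ e := by
              by_contra h
              push_neg at h
              have hext : ext δ = {e} :=
                Finset.eq_singleton_iff_unique_mem.mpr ⟨he, h⟩
              have hgr := hgrow δ
              rw [hext, Finset.sum_singleton] at hgr
              have hcyl : cyl e = cyl δ := by
                rw [← hpart δ, hext]; simp
              rw [hcyl] at hgr
              exact lt_irrefl _ hgr
            obtain ⟨e', he', hee'⟩ := h2
            obtain ⟨x, hx⟩ := hne e'
            have hxδ : x ∈ cyl δ := by
              rw [← hpart δ]; exact Set.mem_biUnion he' hx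
            rw [← hcov] at hxδ
            obtain ⟨η', hη'F, hxη'⟩ := Set.mem_iUnion₂.mp hxδ
            have hη'notin : η' ∉ Fe e := by
              intro hmem
              exact Set.disjoint_left.mp
                (hdisj δ (Finset.mem_coe.mpr he) (Finset.mem_coe.mpr he') (Ne.symm hee'))
                ((Finset.mem_filter.mp hmem).2 hxη') hx
            have hss : Fe e ⊂ F :=
              (Finset.ssubset_iff_of_subset (Finset.filter_subset _ _)).mpr ⟨η', hη'F, hη'notin⟩
            exact Nat.lt_succ_iff.mp (lt_of_lt_of_le (Finset.card_lt_card hss) hcard)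
          have hreachFe : ∀ e ∈ ext δ, ∀ η ∈ Fe e,
              Relation.ReflTransGen (fun a b => b ∈ ext a) e η := by
            intro e he η hη
            obtain ⟨hηF, hsube⟩ := Finset.mem_filter.mp hη
            obtain ⟨c, hc, hrc, hsubc⟩ := hchild η hηF
            rwa [huniq η c hc e he hsubc hsube] at hrc
          calc Metric.diam (cyl δ) ^ d
              ≤ ∑ e ∈ ext δ, Metric.diam (cyl e) ^ d := (hgrow δ).le
            _ ≤ ∑ e ∈ ext δ, ∑ γ ∈ Fe e, Metric.diam (cyl γ) ^ d := by
                refine Finset.sum_le_sum fun e he => ?_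
                exact ih e (Fe e) (hcard' e he) (hreachFe e he)
                  (hdisj'.subset (Finset.coe_subset.mpr (Finset.filter_subset _ _)))
                  (hcove e he)
            _ = ∑ γ ∈ F, Metric.diam (cyl γ) ^ d := by
                conv_rhs => rw [hbiU]
                exact (Finset.sum_biUnion hfib).symm
  have part1 : ∀ F : Finset P, (↑F : Set P).PairwiseDisjoint cyl →
      (⋃ γ ∈ F, cyl γ) = Set.univ →
      Metric.diam (Set.univ : Set C) ^ d ≤ ∑ γ ∈ F, Metric.diam (cyl γ) ^ d := by
    intro F hdisjF hcovF
    have := key F.card root F le_rfl (fun η _ => hreach η) hdisjF (by rw [hcovF, hroot])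
    rwa [hroot] at this
  refine ⟨part1, ?_⟩
  borelize C
  set D := Metric.diam (Set.univ : Set C) with hDdef
  have hbounded : ∀ s : Set C, Bornology.IsBounded s :=
    fun s => isCompact_univ.isBounded.subset (Set.subset_univ s)
  obtain ⟨x₀⟩ : Nonempty C := ⟨(hne root).some⟩
  set r : ℝ := ((1:ℝ)/2) ^ d with hrdef
  have hr0 : 0 ≤ r := Real.rpow_nonneg (by norm_num) d
  have hr1 : r < 1 := Real.rpow_lt_one (by norm_num) (by norm_num) hd
  set K : ℝ := (1 - r)⁻¹ with hKdef
  have hK0 : 0 < K := inv_pos.mpr (by linarith)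
  have h2d : (0:ℝ) < 2 ^ d := Real.rpow_pos_of_pos (by norm_num) d
  have h4d : (0:ℝ) < 4 ^ d := Real.rpow_pos_of_pos (by norm_num) d
  have hDd : 0 < D ^ d := Real.rpow_pos_of_pos hdiamC d
  set A : ℝ := D ^ d / (2 * 2 ^ d * K) with hAdef
  have hA0 : 0 < A := div_pos hDd (by positivity)
  set ε : ℝ := A ^ d⁻¹ with hεdef
  have hε0 : 0 < ε := Real.rpow_pos_of_pos hA0 _
  have hεd : ε ^ d = A := Real.rpow_inv_rpow hA0.le hd.ne'
  set w : ℕ → ℝ := fun n => ε * ((1:ℝ)/2) ^ n with hwdef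
  have hw0 : ∀ n, 0 < w n := fun n => mul_pos hε0 (by positivity)
  have hwd : ∀ n : ℕ, w n ^ d = ε ^ d * r ^ n := by
    intro n
    rw [hwdef]
    simp only []
    rw [Real.mul_rpow hε0.le (by positivity)]
    congr 1
    rw [← Real.rpow_natCast ((1:ℝ)/2) n, ← Real.rpow_mul (by norm_num), mul_comm,
      Real.rpow_mul (by norm_num), Real.rpow_natCast]
  have hsplit : ∀ a b : ℝ, 0 ≤ a → 0 ≤ b → (a + b) ^ d ≤ 2 ^ d * (a ^ d + b ^ d) := by
    intro a b ha hb
    have h1 : a + b ≤ 2 * max a b := by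
      rcases max_cases a b with ⟨h, h'⟩ | ⟨h, h'⟩ <;> rw [h] <;> linarith
    calc (a + b) ^ d ≤ (2 * max a b) ^ d :=
          Real.rpow_le_rpow (by linarith) h1 hd.le
      _ = 2 ^ d * (max a b) ^ d := Real.mul_rpow (by norm_num) (le_max_iff.mpr (Or.inl ha))
      _ ≤ 2 ^ d * (a ^ d + b ^ d) := by
          refine mul_le_mul_of_nonneg_left ?_ h2d.le
          rcases max_cases a b with ⟨h, _⟩ | ⟨h, _⟩ <;> rw [h]
          · exact le_add_of_nonneg_right (Real.rpow_nonneg hb d)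
          · exact le_add_of_nonneg_left (Real.rpow_nonneg ha d)
  have hK : 2 ^ d * (ε ^ d * K) = D ^ d / 2 := by
    rw [hεd, hAdef]
    field_simp
  set c1 : ℝ := (D ^ d / 2) / 4 ^ d with hc1def
  have hc10 : 0 < c1 := div_pos (by linarith) h4d
  -- ultrametric nesting of closed balls
  have hnestball : ∀ (x1 x2 : C) (p q : ℝ), p ≤ q →
      ∀ z, z ∈ Metric.closedBall x1 p → z ∈ Metric.closedBall x2 q →
      Metric.closedBall x1 p ⊆ Metric.closedBall x2 q := by
    intro x1 x2 p q hpq z hz1 hz2 a ha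
    rw [Metric.mem_closedBall] at hz1 hz2 ha ⊢
    have h1 : dist a z ≤ p := by
      refine le_trans (hultra a x1 z) (max_le ha ?_)
      rw [dist_comm]; exact hz1
    exact le_trans (hultra a z x2) (max_le (le_trans h1 hpq) hz2)
  -- disjointification
  have hsel : ∀ N : ℕ, ∀ G : Finset P, G.card ≤ N →
      (∀ a ∈ G, ∀ b ∈ G, Disjoint (cyl a) (cyl b) ∨ cyl a ⊆ cyl b ∨ cyl b ⊆ cyl a) →
      ∃ F, F ⊆ G ∧ (↑F : Set P).PairwiseDisjoint cyl ∧
        (⋃ g ∈ F, cyl g) = ⋃ g ∈ G, cyl g := by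
    intro N
    induction N with
    | zero => intro G _ _; exact ⟨G, subset_rfl, by
        have hG : G = ∅ := Finset.card_eq_zero.mp (le_antisymm (by assumption) (Nat.zero_le _))
        subst hG; simp, rfl⟩
    | succ N ihN =>
        intro G hG hnest
        by_cases hpd : (↑G : Set P).PairwiseDisjoint cyl
        · exact ⟨G, subset_rfl, hpd, rfl⟩
        · simp only [Set.PairwiseDisjoint, Set.Pairwise, Function.onFun] at hpd
          push_neg at hpd
          obtain ⟨a, ha, b, hb, hab, hnd⟩ := hpd
          rw [Finset.mem_coe] at ha hb
          have hmain : ∀ a b : P, a ∈ G → b ∈ G → a ≠ b → cyl a ⊆ cyl b →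
              ∃ F, F ⊆ G ∧ (↑F : Set P).PairwiseDisjoint cyl ∧
                (⋃ g ∈ F, cyl g) = ⋃ g ∈ G, cyl g := by
            intro a b ha hb hab hss
            obtain ⟨F, hFsub, hFpd, hFU⟩ := ihN (G.erase a)
              (Nat.lt_succ_iff.mp (lt_of_lt_of_le (Finset.card_erase_lt_of_mem ha) hG))
              (fun g hg g' hg' =>
                hnest g (Finset.mem_of_mem_erase hg) g' (Finset.mem_of_mem_erase hg'))
            refine ⟨F, subset_trans hFsub (Finset.erase_subset _ _), hFpd, ?_⟩
            rw [hFU]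
            apply Set.Subset.antisymm
            · exact Set.iUnion₂_subset fun g hg =>
                fun z hz => Set.mem_biUnion (Finset.mem_of_mem_erase hg) hz
            · intro z hz
              obtain ⟨g, hgG, hzg⟩ := Set.mem_iUnion₂.mp hz
              by_cases hga : g = a
              · exact Set.mem_biUnion (Finset.mem_erase.mpr ⟨Ne.symm hab, hb⟩)
                  (hss (by rw [← hga]; exact hzg))
              · exact Set.mem_biUnion (Finset.mem_erase.mpr ⟨hga, hgG⟩) hzg
          rcases hnest a ha b hb with hdj | hss | hss
          · exact absurd hdj hnd
          · exact hmain a b ha hb hab hss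
          · exact hmain b a hb ha (Ne.symm hab) hss
  -- the key content bound
  have hcontent : ∀ t : ℕ → Set C, (Set.univ : Set C) ⊆ ⋃ n, t n →
      ENNReal.ofReal c1 ≤ ∑' n, ⨆ _ : (t n).Nonempty, EMetric.diam (t n) ^ d := by
    intro t hcov
    set x : ℕ → C := fun n => if h : (t n).Nonempty then h.some else x₀ with hx
    set ρ : ℕ → ℝ := fun n => 2 * Metric.diam (t n) + w n with hρ
    have hρ0 : ∀ n, 0 < ρ n := fun n =>
      add_pos_of_nonneg_of_pos (mul_nonneg (by norm_num) Metric.diam_nonneg) (hw0 n)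
    choose γ hγ using fun n => hball (x n) (ρ n) (hρ0 n)
    have htsub : ∀ n, t n ⊆ cyl (γ n) := by
      intro n y hy
      have hn : (t n).Nonempty := ⟨y, hy⟩
      have hxn : x n ∈ t n := by rw [hx]; simp only [dif_pos hn]; exact hn.some_mem
      rw [← hγ n, Metric.mem_closedBall]
      calc dist y (x n) ≤ Metric.diam (t n) :=
            Metric.dist_le_diam_of_mem (hbounded _) hy hxn
        _ ≤ ρ n := by
            have h1 := (hw0 n).le
            have h2 := Metric.diam_nonneg (s := t n)
            rw [hρ]; simp only []; linarith
    have hdiamball : ∀ n, Metric.diam (cyl (γ n)) ≤ ρ n := by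
      intro n
      rw [← hγ n]
      refine Metric.diam_le_of_forall_dist_le (hρ0 n).le fun a ha b hb => ?_
      rw [Metric.mem_closedBall] at ha hb
      refine le_trans (hultra a (x n) b) (max_le ha ?_)
      rw [dist_comm]; exact hb
    have hopen : ∀ n, IsOpen (cyl (γ n)) := by
      intro n
      rw [← hγ n, Metric.isOpen_iff]
      intro y hy
      refine ⟨ρ n, hρ0 n, fun z hz => ?_⟩
      rw [Metric.mem_closedBall] at hy ⊢
      rw [Metric.mem_ball] at hz
      exact le_trans (hultra z y (x n)) (max_le hz.le hy)
    have hcov' : (Set.univ : Set C) ⊆ ⋃ n, cyl (γ n) := fun z hz => by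
      obtain ⟨n, hn⟩ := Set.mem_iUnion.mp (hcov hz)
      exact Set.mem_iUnion.mpr ⟨n, htsub n hn⟩
    obtain ⟨I, hI⟩ := isCompact_univ.elim_finite_subcover (fun n => cyl (γ n)) hopen hcov'
    have hnestG : ∀ a ∈ I.image γ, ∀ b ∈ I.image γ,
        Disjoint (cyl a) (cyl b) ∨ cyl a ⊆ cyl b ∨ cyl b ⊆ cyl a := by
      intro a ha b hb
      obtain ⟨n, _, rfl⟩ := Finset.mem_image.mp ha
      obtain ⟨m, _, rfl⟩ := Finset.mem_image.mp hb
      by_cases hdj : Disjoint (cyl (γ n)) (cyl (γ m))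
      · exact Or.inl hdj
      · obtain ⟨z, hz1, hz2⟩ := Set.not_disjoint_iff.mp hdj
        rw [← hγ n] at hz1 ⊢
        rw [← hγ m] at hz2 ⊢
        rcases le_total (ρ n) (ρ m) with hle | hle
        · exact Or.inr (Or.inl (hnestball _ _ _ _ hle z hz1 hz2))
        · exact Or.inr (Or.inr (hnestball _ _ _ _ hle z hz2 hz1))
    obtain ⟨F, hFG, hFpd, hFU⟩ := hsel (I.image γ).card (I.image γ) le_rfl hnestG
    have hGcov : (Set.univ : Set C) ⊆ ⋃ g ∈ I.image γ, cyl g := by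
      intro z hz
      obtain ⟨n, hnI, hzn⟩ := Set.mem_iUnion₂.mp (hI hz)
      exact Set.mem_biUnion (Finset.mem_image_of_mem γ hnI) hzn
    have hFcov : (⋃ g ∈ F, cyl g) = Set.univ :=
      Set.eq_univ_of_univ_subset (by rw [hFU]; exact hGcov)
    have h0 := part1 F hFpd hFcov
    have hsum1 : ∑ g ∈ F, Metric.diam (cyl g) ^ d ≤ ∑ g ∈ I.image γ, Metric.diam (cyl g) ^ d :=
      Finset.sum_le_sum_of_subset_of_nonneg hFG
        (fun g _ _ => Real.rpow_nonneg Metric.diam_nonneg d)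
    have hsum2 : ∑ g ∈ I.image γ, Metric.diam (cyl g) ^ d
        ≤ ∑ n ∈ I, Metric.diam (cyl (γ n)) ^ d :=
      sum_image_le_aux I γ _ (fun g => Real.rpow_nonneg Metric.diam_nonneg d)
    have hsum3 : ∑ n ∈ I, Metric.diam (cyl (γ n)) ^ d
        ≤ ∑ n ∈ I, (4 ^ d * Metric.diam (t n) ^ d + 2 ^ d * w n ^ d) := by
      refine Finset.sum_le_sum fun n _ => ?_
      calc Metric.diam (cyl (γ n)) ^ d ≤ ρ n ^ d :=
            Real.rpow_le_rpow Metric.diam_nonneg (hdiamball n) hd.le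
        _ ≤ 2 ^ d * ((2 * Metric.diam (t n)) ^ d + w n ^ d) :=
            hsplit _ _ (mul_nonneg (by norm_num) Metric.diam_nonneg) (hw0 n).le
        _ = 4 ^ d * Metric.diam (t n) ^ d + 2 ^ d * w n ^ d := by
            rw [Real.mul_rpow (by norm_num) Metric.diam_nonneg, mul_add, ← mul_assoc,
              ← Real.mul_rpow (by norm_num) (by norm_num)]
            norm_num
    have hsum4 : ∑ n ∈ I, w n ^ d ≤ ε ^ d * K := by
      have heq : ∑ n ∈ I, w n ^ d = ε ^ d * ∑ n ∈ I, r ^ n := by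
        rw [Finset.mul_sum]; exact Finset.sum_congr rfl fun n _ => hwd n
      rw [heq]
      refine mul_le_mul_of_nonneg_left ?_ (Real.rpow_nonneg hε0.le d)
      have hsummable := summable_geometric_of_lt_one hr0 hr1
      calc ∑ n ∈ I, r ^ n ≤ ∑' n, r ^ n := Summable.sum_le_tsum I (fun n _ => pow_nonneg hr0 n) hsummable
        _ = K := by rw [tsum_geometric_of_lt_one hr0 hr1]
    set Sfin : ℝ := ∑ n ∈ I, Metric.diam (t n) ^ d with hSfin
    have hmain : D ^ d ≤ 4 ^ d * Sfin + D ^ d / 2 := by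
      have hsum5 : ∑ n ∈ I, (4 ^ d * Metric.diam (t n) ^ d + 2 ^ d * w n ^ d)
          = 4 ^ d * Sfin + 2 ^ d * ∑ n ∈ I, w n ^ d := by
        rw [Finset.sum_add_distrib, ← Finset.mul_sum, ← Finset.mul_sum]
      have herr : 2 ^ d * ∑ n ∈ I, w n ^ d ≤ D ^ d / 2 := by
        calc 2 ^ d * ∑ n ∈ I, w n ^ d ≤ 2 ^ d * (ε ^ d * K) :=
              mul_le_mul_of_nonneg_left hsum4 h2d.le
          _ = D ^ d / 2 := hK
      linarith
    have hSc : c1 ≤ Sfin := by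
      rw [hc1def, div_le_iff₀ h4d]
      linarith
    calc ENNReal.ofReal c1 ≤ ENNReal.ofReal Sfin := ENNReal.ofReal_le_ofReal hSc
      _ = ∑ n ∈ I, ENNReal.ofReal (Metric.diam (t n) ^ d) :=
          ENNReal.ofReal_sum_of_nonneg (fun n _ => Real.rpow_nonneg Metric.diam_nonneg d)
      _ ≤ ∑ n ∈ I, ⨆ _ : (t n).Nonempty, EMetric.diam (t n) ^ d := by
          refine Finset.sum_le_sum fun n _ => ?_
          by_cases hn : (t n).Nonempty
          · rw [iSup_pos hn]
            have hdne : EMetric.diam (t n) ≠ ⊤ := (hbounded (t n)).ediam_ne_top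
            have he : EMetric.diam (t n) = ENNReal.ofReal (Metric.diam (t n)) := by
              rw [Metric.diam]; exact (ENNReal.ofReal_toReal hdne).symm
            rw [he, ENNReal.ofReal_rpow_of_nonneg Metric.diam_nonneg hd.le]
          · simp [Set.not_nonempty_iff_eq_empty.mp hn, Real.zero_rpow hd.ne']
      _ ≤ ∑' n, ⨆ _ : (t n).Nonempty, EMetric.diam (t n) ^ d := ENNReal.sum_le_tsum I
  have hμ : ENNReal.ofReal c1 ≤ μH[d] (Set.univ : Set C) := by
    rw [MeasureTheory.Measure.hausdorffMeasure_apply]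
    refine le_iSup₂_of_le (⊤ : ℝ≥0∞) ENNReal.zero_lt_top ?_
    exact le_iInf fun t => le_iInf fun ht => le_iInf fun _ => hcontent t ht
  have hfin : (↑(d.toNNReal) : ℝ≥0∞) ≤ dimH (Set.univ : Set C) := by
    apply le_dimH_of_hausdorffMeasure_ne_zero
    rw [Real.coe_toNNReal d hd.le]
    intro h0
    rw [h0] at hμ
    exact (ENNReal.ofReal_pos.mpr hc10).ne' (le_antisymm hμ zero_le)
  exact hfin
end

section
/- A regular self-similar ultrametric Cantor set with edge set of cardinality p and ultrametric parameter α ∈ (0,1) admits a bi-Lipschitz embedding into ℝⁿ whenever n > log(p)/(−log α); in particular it embeds bi-Lipschitz into ℝ^{⌊log(p)/(−log α)⌋ + 1}. -/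
theorem stmt8_key {V Ed : Type} [Fintype Ed] (σ τ : Ed → V)
    (α : ℝ) (hα : α ∈ Set.Ioo (0 : ℝ) 1)
    (p : ℕ) (hp : p = Fintype.card Ed) (hp2 : 2 ≤ p)
    [MetricSpace (SPath Ed σ τ)]
    (hdist : ∀ x y : SPath Ed σ τ, x ≠ y → dist x y = α ^ slcp x y)
    (n : ℕ) (hn : Real.log p / (-Real.log α) < n) :
    ∃ F : SPath Ed σ τ → EuclideanSpace ℝ (Fin n), ∃ cm cp : ℝ, 0 < cm ∧ cm ≤ cp ∧
      ∀ x y, cm * dist x y ≤ dist (F x) (F y) ∧ dist (F x) (F y) ≤ cp * dist x y := by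
  obtain ⟨hα0, hα1⟩ := hα
  have hlogα : Real.log α < 0 := Real.log_neg hα0 hα1
  have hpR : (2:ℝ) ≤ (p:ℝ) := by exact_mod_cast hp2
  have hlogp : 0 < Real.log p := Real.log_pos (by linarith)
  have hn0 : 0 < n := by
    rcases Nat.eq_zero_or_pos n with h | h
    · exfalso; rw [h] at hn; push_cast at hn
      have : 0 < Real.log p / (-Real.log α) := div_pos hlogp (by linarith)
      linarith
    · exact h
  have hαn : α ^ n < 1 / p := by
    have h1 : Real.log p < n * (-Real.log α) := (div_lt_iff₀ (by linarith)).mp hn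
    have h2 : Real.log (α ^ n) < Real.log (1 / p) := by
      rw [Real.log_pow, one_div, Real.log_inv]
      push_cast
      nlinarith
    exact (Real.log_lt_log_iff (pow_pos hα0 n) (by positivity)).mp h2
  set r1 : ℝ := α ^ n with hr1def
  have hr10 : 0 < r1 := pow_pos hα0 n
  have hr11 : r1 < 1 := pow_lt_one₀ hα0.le hα1 hn0.ne'
  have hr1s : (0:ℝ) < 1 - r1 := by linarith
  -- digit map
  set φ := Fintype.equivFin Ed with hφ
  set β : Ed → ℝ := fun e => (φ e : ℝ) / ((p:ℝ) - 1) with hβ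
  have hcard : ∀ e : Ed, ((φ e : ℕ) : ℝ) ≤ (p:ℝ) - 1 := by
    intro e
    have h0 : (φ e : ℕ) < Fintype.card Ed := (φ e).2
    have h1 : (φ e : ℕ) + 1 ≤ p := by omega
    have h2 : ((φ e : ℕ) : ℝ) + 1 ≤ (p:ℝ) := by exact_mod_cast h1
    linarith
  have hβ0 : ∀ e, 0 ≤ β e := fun e => div_nonneg (Nat.cast_nonneg _) (by linarith)
  have hβ1 : ∀ e, β e ≤ 1 := fun e => by
    rw [hβ]; exact div_le_one_of_le₀ (hcard e) (by linarith)
  have hβd1 : ∀ e e', |β e - β e'| ≤ 1 := fun e e' => by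
    rw [abs_sub_le_iff]; constructor <;> nlinarith [hβ0 e, hβ1 e, hβ0 e', hβ1 e']
  have hβgap : ∀ e e', e ≠ e' → 1 / ((p:ℝ) - 1) ≤ |β e - β e'| := by
    intro e e' hee
    have hne : ((φ e : ℕ) : ℤ) ≠ ((φ e' : ℕ) : ℤ) := by
      simp only [Ne, Int.natCast_inj, ← Fin.val_eq_val]
      exact fun h => hee (φ.injective (Fin.ext h))
    have h1 : (1:ℤ) ≤ |((φ e : ℕ) : ℤ) - ((φ e' : ℕ) : ℤ)| := Int.one_le_abs (sub_ne_zero.mpr hne)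
    have h1R : (1:ℝ) ≤ |((φ e : ℕ) : ℝ) - ((φ e' : ℕ) : ℝ)| := by
      exact_mod_cast h1
    rw [hβ, div_sub_div_same, abs_div, abs_of_pos (by linarith : (0:ℝ) < (p:ℝ) - 1)]
    apply div_le_div_of_nonneg_right ?_ (by linarith)
    exact h1R
  -- summability
  have hgeo : Summable (fun j : ℕ => r1 ^ j) := summable_geometric_of_lt_one hr10.le hr11
  have hsum : ∀ (x : SPath Ed σ τ) (i : ℕ),
      Summable (fun j : ℕ => β (x.1 (i + n * j)) * r1 ^ j) := by
    intro x i
    apply Summable.of_norm_bounded hgeo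
    intro j
    rw [Real.norm_eq_abs, abs_mul, abs_of_nonneg (hβ0 _), abs_of_nonneg (pow_nonneg hr10.le _)]
    calc β (x.1 (i + n * j)) * r1 ^ j ≤ 1 * r1 ^ j := by
          exact mul_le_mul_of_nonneg_right (hβ1 _) (pow_nonneg hr10.le _)
      _ = r1 ^ j := one_mul _
  -- the embedding
  set F : SPath Ed σ τ → EuclideanSpace ℝ (Fin n) :=
    fun x => WithLp.toLp 2 (fun i : Fin n => ∑' j : ℕ, β (x.1 (i.1 + n * j)) * r1 ^ j) with hF
  -- constants
  set cm : ℝ := 1 / ((p:ℝ) - 1) - r1 / (1 - r1) with hcm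
  set C : ℝ := (α ^ (n-1) * (1 - r1))⁻¹ with hC
  have hr1p : r1 * p < 1 := by
    rw [lt_div_iff₀ (by linarith : (0:ℝ) < (p:ℝ))] at hαn
    linarith [hαn]
  have hcm0 : 0 < cm := by
    rw [hcm, sub_pos, div_lt_div_iff₀ hr1s (by linarith : (0:ℝ) < (p:ℝ)-1)]
    nlinarith
  have hC0 : 0 < C := by
    rw [hC]; positivity
  refine ⟨F, cm, max cm (Real.sqrt n * C), hcm0, le_max_left _ _, ?_⟩
  intro x y
  rcases eq_or_ne x y with rfl | hxy
  · simp
  -- main estimates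
  set m : ℕ := slcp x y with hmdef
  have hdxy : dist x y = α ^ m := hdist x y hxy
  have hxy1 : x.1 ≠ y.1 := fun h => hxy (Subtype.ext h)
  have hSne : {k | x.1 k ≠ y.1 k}.Nonempty := by
    by_contra h
    rw [Set.not_nonempty_iff_eq_empty, Set.eq_empty_iff_forall_notMem] at h
    apply hxy1; funext k
    by_contra hk
    exact h k hk
  have hm : x.1 m ≠ y.1 m := Nat.sInf_mem hSne
  have hmlt : ∀ k, k < m → x.1 k = y.1 k := by
    intro k hk
    by_contra h
    exact absurd (Nat.sInf_le h) (not_le.mpr hk)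
  -- per-coordinate difference
  set g : ℕ → ℕ → ℝ := fun i j => (β (x.1 (i + n*j)) - β (y.1 (i + n*j))) * r1 ^ j with hg
  have hgsum : ∀ i, Summable (g i) := fun i => by
    simpa [hg, sub_mul] using (hsum x i).sub (hsum y i)
  have hD : ∀ i : Fin n, F x i - F y i = ∑' j, g i.1 j := by
    intro i
    rw [hF]
    simp only [PiLp.toLp_apply]
    rw [← Summable.tsum_sub (hsum x i.1) (hsum y i.1)]
    congr 1; funext j; rw [hg]; ring
  have hg0 : ∀ i j, i + n * j < m → g i j = 0 := by
    intro i j hj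
    simp only [hg]
    rw [hmlt _ hj, sub_self, zero_mul]
  have hgabs : ∀ i j, |g i j| ≤ r1 ^ j := by
    intro i j
    simp only [hg]
    rw [abs_mul, abs_of_nonneg (pow_nonneg hr10.le _)]
    simpa using mul_le_mul_of_nonneg_right (hβd1 _ _) (pow_nonneg hr10.le j)
  have habs_tsum : ∀ (f b : ℕ → ℝ), Summable b → (∀ k, |f k| ≤ b k) →
      |∑' k, f k| ≤ ∑' k, b k := by
    intro f b hb hfb
    have hf : Summable f := hb.of_norm_bounded (by simpa [Real.norm_eq_abs] using hfb)
    calc |∑' k, f k| ≤ ∑' k, |f k| := by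
          simpa [Real.norm_eq_abs] using
            norm_tsum_le_tsum_norm (f := f) (by simpa [Real.norm_eq_abs] using hf.abs)
      _ ≤ ∑' k, b k := Summable.tsum_le_tsum hfb hf.abs hb
  have hgeo_tail : ∀ j0 : ℕ, ∑' k : ℕ, r1 ^ (k + j0) = r1 ^ j0 * (1 - r1)⁻¹ := by
    intro j0
    simp_rw [pow_add]
    rw [tsum_mul_right, tsum_geometric_of_lt_one hr10.le hr11]
    ring
  -- upper bound per coordinate
  have hup : ∀ i : Fin n, |∑' j, g i.1 j| ≤ α ^ m * C := by
    intro i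
    have hex : ∃ j, m ≤ i.1 + n * j := ⟨m, by nlinarith [i.1.zero_le, hn0]⟩
    set j0 := Nat.find hex with hj0def
    have hj0 : m ≤ i.1 + n * j0 := Nat.find_spec hex
    have hj0min : ∀ j, j < j0 → i.1 + n * j < m := fun j hj =>
      lt_of_not_ge (Nat.find_min hex hj)
    have hsplit : ∑' j, g i.1 j = ∑' k, g i.1 (k + j0) := by
      rw [← Summable.sum_add_tsum_nat_add j0 (hgsum i.1), Finset.sum_eq_zero, zero_add]
      intro j hj
      exact hg0 _ _ (hj0min j (Finset.mem_range.mp hj))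
    rw [hsplit]
    have h1 : |∑' k, g i.1 (k + j0)| ≤ ∑' k : ℕ, r1 ^ (k + j0) :=
      habs_tsum _ _ ((summable_nat_add_iff j0).mpr hgeo) (fun k => hgabs _ _)
    rw [hgeo_tail] at h1
    have h2 : r1 ^ j0 * α ^ (n-1) ≤ α ^ m := by
      rw [hr1def, ← pow_mul, ← pow_add]
      apply pow_le_pow_of_le_one hα0.le hα1.le
      have h4 : i.1 ≤ n - 1 := by omega
      have h5 : n - 1 + 1 = n := by omega
      linarith [hj0]
    have h3 : r1 ^ j0 ≤ α ^ m / α ^ (n-1) := by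
      rw [le_div_iff₀ (pow_pos hα0 _)]
      exact h2
    calc |∑' k, g i.1 (k + j0)| ≤ r1 ^ j0 * (1 - r1)⁻¹ := h1
      _ ≤ (α ^ m / α ^ (n-1)) * (1 - r1)⁻¹ := by
          exact mul_le_mul_of_nonneg_right h3 (by positivity)
      _ = α ^ m * C := by rw [hC]; field_simp
  -- lower bound at coordinate r = m % n
  set rr : ℕ := m % n with hrr
  set q : ℕ := m / n with hq
  have hrrn : rr < n := Nat.mod_lt _ hn0
  have hrq : rr + n * q = m := Nat.mod_add_div m n
  have hlow : cm * α ^ m ≤ |∑' j, g rr j| := by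
    have hsplit : ∑' j, g rr j = g rr q + ∑' k, g rr (k + 1 + q) := by
      rw [← Summable.sum_add_tsum_nat_add q (hgsum rr), Finset.sum_eq_zero, zero_add]
      · rw [Summable.tsum_eq_zero_add ((summable_nat_add_iff q).mpr (hgsum rr))]
        simp only [zero_add]
      · intro j hj
        apply hg0
        have h1 : j + 1 ≤ q := Finset.mem_range.mp hj
        have h2 : n * (j+1) ≤ n * q := Nat.mul_le_mul_left n h1
        rw [Nat.mul_succ] at h2
        linarith [hrq]
    have htail : |∑' k, g rr (k + 1 + q)| ≤ r1 ^ (q+1) * (1 - r1)⁻¹ := by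
      have hb : Summable (fun k : ℕ => r1 ^ (k + 1 + q)) := by
        simpa only [← add_assoc] using (summable_nat_add_iff (1+q)).mpr hgeo
      have h := habs_tsum (fun k => g rr (k+1+q)) (fun k => r1 ^ (k+1+q)) hb (fun k => hgabs _ _)
      calc |∑' k, g rr (k+1+q)| ≤ ∑' k : ℕ, r1 ^ (k+1+q) := h
        _ = r1 ^ (q+1) * (1-r1)⁻¹ := by
            simp only [add_assoc]
            rw [hgeo_tail (1+q), add_comm 1 q]
    have hmain : (1 / ((p:ℝ)-1)) * r1 ^ q ≤ |g rr q| := by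
      simp only [hg]
      rw [hrq, abs_mul, abs_of_nonneg (pow_nonneg hr10.le _)]
      exact mul_le_mul_of_nonneg_right (hβgap _ _ hm) (pow_nonneg hr10.le _)
    have h4 : cm * r1 ^ q ≤ |g rr q| - |∑' k, g rr (k + 1 + q)| := by
      have : cm * r1 ^ q = (1/((p:ℝ)-1)) * r1 ^ q - r1 ^ (q+1) * (1-r1)⁻¹ := by
        rw [hcm, pow_succ]
        field_simp
      rw [this]
      linarith
    have h5 : |g rr q| - |∑' k, g rr (k + 1 + q)| ≤ |∑' j, g rr j| := by
      rw [hsplit]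
      have := abs_sub_abs_le_abs_sub (g rr q) (-(∑' k, g rr (k + 1 + q)))
      simp only [abs_neg, sub_neg_eq_add] at this
      exact this
    have h6 : α ^ m ≤ r1 ^ q := by
      rw [hr1def, ← pow_mul]
      apply pow_le_pow_of_le_one hα0.le hα1.le
      linarith [hrq]
    calc cm * α ^ m ≤ cm * r1 ^ q := mul_le_mul_of_nonneg_left h6 hcm0.le
      _ ≤ |g rr q| - |∑' k, g rr (k + 1 + q)| := h4
      _ ≤ |∑' j, g rr j| := h5
  -- assemble
  have hdistF : dist (F x) (F y) = Real.sqrt (∑ i : Fin n, |F x i - F y i| ^ 2) := by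
    rw [EuclideanSpace.dist_eq]
    simp_rw [Real.dist_eq]
  constructor
  · -- lower bound
    rw [hdistF, hdxy]
    have hlow' : cm * α ^ m ≤ |F x ⟨rr, hrrn⟩ - F y ⟨rr, hrrn⟩| := by
      rw [hD ⟨rr, hrrn⟩]; exact hlow
    have h1 : (cm * α ^ m) ^ 2 ≤ ∑ i : Fin n, |F x i - F y i| ^ 2 := by
      refine le_trans (pow_le_pow_left₀ (by positivity) hlow' 2) ?_
      exact Finset.single_le_sum (f := fun i : Fin n => |F x i - F y i| ^ 2)
        (fun i _ => sq_nonneg _) (Finset.mem_univ _)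
    calc cm * α ^ m = Real.sqrt ((cm * α ^ m)^2) := by
          rw [Real.sqrt_sq (by positivity)]
      _ ≤ Real.sqrt (∑ i : Fin n, |F x i - F y i| ^ 2) := Real.sqrt_le_sqrt h1
  · -- upper bound
    rw [hdistF, hdxy]
    have h1 : ∑ i : Fin n, |F x i - F y i| ^ 2 ≤ n * (α ^ m * C) ^ 2 := by
      calc ∑ i : Fin n, |F x i - F y i| ^ 2 ≤ ∑ _i : Fin n, (α ^ m * C) ^ 2 :=
            Finset.sum_le_sum fun i _ =>
              pow_le_pow_left₀ (abs_nonneg _) (by rw [hD i]; exact hup i) 2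
        _ = n * (α ^ m * C) ^ 2 := by
            rw [Finset.sum_const, Finset.card_univ, Fintype.card_fin, nsmul_eq_mul]
    calc Real.sqrt (∑ i : Fin n, |F x i - F y i| ^ 2)
        ≤ Real.sqrt (n * (α ^ m * C)^2) := Real.sqrt_le_sqrt h1
      _ = Real.sqrt n * (α ^ m * C) := by
          rw [Real.sqrt_mul (Nat.cast_nonneg n), Real.sqrt_sq (by positivity)]
      _ = (Real.sqrt n * C) * α ^ m := by ring
      _ ≤ max cm (Real.sqrt n * C) * α ^ m :=
          mul_le_mul_of_nonneg_right (le_max_right _ _) (by positivity)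

/-- A regular self-similar ultrametric Cantor set with edge set of cardinality `p` and
parameter `α ∈ (0,1)` embeds bi-Lipschitz into `ℝⁿ` whenever `n > log p / (−log α)`;
in particular into `ℝ^{⌊log p /(−log α)⌋ + 1}`. -/
theorem stmt8 {V Ed : Type} [Fintype Ed] (σ τ : Ed → V)
    (α : ℝ) (hα : α ∈ Set.Ioo (0 : ℝ) 1)
    (p : ℕ) (hp : p = Fintype.card Ed) (hp2 : 2 ≤ p)
    [MetricSpace (SPath Ed σ τ)]
    (hdist : ∀ x y : SPath Ed σ τ, x ≠ y → dist x y = α ^ slcp x y) :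
    (∀ n : ℕ, Real.log p / (-Real.log α) < n →
      ∃ F : SPath Ed σ τ → EuclideanSpace ℝ (Fin n), ∃ cm cp : ℝ, 0 < cm ∧ cm ≤ cp ∧
        ∀ x y, cm * dist x y ≤ dist (F x) (F y) ∧ dist (F x) (F y) ≤ cp * dist x y) ∧
    (∃ F : SPath Ed σ τ →
        EuclideanSpace ℝ (Fin (Nat.floor (Real.log p / (-Real.log α)) + 1)),
      ∃ cm cp : ℝ, 0 < cm ∧ cm ≤ cp ∧
        ∀ x y, cm * dist x y ≤ dist (F x) (F y) ∧ dist (F x) (F y) ≤ cp * dist x y) := by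
  refine ⟨fun n hn => stmt8_key σ τ α hα p hp hp2 hdist n hn, ?_⟩
  exact stmt8_key σ τ α hα p hp hp2 hdist _ (by push_cast; exact Nat.lt_floor_add_one _)
end

section
/- The canonical transversal Ξ of a primitive substitution tiling of ℝ^d, with ultrametric given by weights w(γ) = (ν_{r(γ)})^{1/d}·Λ^{−|γ|/d}, has Hausdorff dimension equal to d, and d is also the abscissa of convergence of its zeta function ζ(s) = Σ_γ diam([γ])^s. -/
open Finset MeasureTheory
open scoped ENNReal NNReal

/-- The finite paths of length `n` in a stationary Bratteli diagram. -/
def FinPath (Ed : Type) {V : Type} (σ τ : Ed → V) (n : ℕ) : Type :=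
  {γ : Fin n → Ed // ∀ i j : Fin n, (j : ℕ) = (i : ℕ) + 1 → τ (γ i) = σ (γ j)}

open Finset

section Comb
variable {V Ed : Type} [Fintype V] [Fintype Ed] [DecidableEq V] [DecidableEq Ed]

/-- the path condition on a finite tuple of edges -/
def pathCond (σ τ : Ed → V) (n : ℕ) (γ : Fin n → Ed) : Prop :=
  ∀ i j : Fin n, (j : ℕ) = (i : ℕ) + 1 → τ (γ i) = σ (γ j)

instance (σ τ : Ed → V) (n : ℕ) : DecidablePred (pathCond σ τ n) := fun _ => by
  unfold pathCond; infer_instance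

/-- weight of the end vertex of a tuple -/
def νend (τ : Ed → V) (ν : V → ℝ) : ∀ {n : ℕ}, (Fin n → Ed) → ℝ
  | 0, _ => 1
  | (n+1), γ => ν (τ (γ (Fin.last n)))

variable {σ τ : Ed → V} {ν : V → ℝ} {Λ : ℝ}

theorem pathCond_snoc {n : ℕ} (γ : Fin n → Ed) (e : Ed) :
    pathCond σ τ (n+1) (Fin.snoc γ e) ↔
      pathCond σ τ n γ ∧ (∀ i : Fin n, (n : ℕ) = (i : ℕ) + 1 → τ (γ i) = σ e) := by
  constructor
  · intro H
    refine ⟨fun i j hij => ?_, fun i hi => ?_⟩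
    · have := H i.castSucc j.castSucc (by simpa using hij)
      simpa using this
    · have := H i.castSucc (Fin.last n) (by simpa using hi)
      simpa using this
  · rintro ⟨h1, h2⟩ i j hij
    rcases lt_or_eq_of_le (Nat.lt_succ_iff.mp j.2) with hj | hj
    · have hi : (i : ℕ) < n := by omega
      have e1 : i = Fin.castSucc ⟨i, hi⟩ := by ext; rfl
      have e2 : j = Fin.castSucc ⟨j, hj⟩ := by ext; rfl
      rw [e1, e2, Fin.snoc_castSucc, Fin.snoc_castSucc]
      exact h1 ⟨i, hi⟩ ⟨j, hj⟩ (by simpa using hij)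
    · have hi : (i : ℕ) < n := by omega
      have e1 : i = Fin.castSucc ⟨i, hi⟩ := by ext; rfl
      have e2 : j = Fin.last n := by ext; exact hj
      rw [e1, e2, Fin.snoc_castSucc, Fin.snoc_last]
      refine h2 ⟨i, hi⟩ ?_
      simp only [Fin.val_mk]
      omega

theorem linkSum (hedge : ∀ v, (∑ e : Ed, if σ e = v then ν (τ e) else 0) = Λ * ν v)
    (hνsum : ∑ v, ν v = 1) :
    ∀ {n : ℕ} (γ : Fin n → Ed),
      (∑ e : Ed, if (∀ i : Fin n, (n : ℕ) = (i : ℕ) + 1 → τ (γ i) = σ e) then ν (τ e) else 0)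
        = Λ * νend τ ν γ := by
  intro n
  match n with
  | 0 =>
    intro γ
    have h0 : ∀ e : Ed, (∀ i : Fin 0, (0:ℕ) = (i : ℕ) + 1 → τ (γ i) = σ e) := by
      intro e i; exact i.elim0
    rw [Finset.sum_congr rfl fun e _ => if_pos (h0 e)]
    have : (∑ e : Ed, ν (τ e)) = Λ := by
      have h1 : (∑ e : Ed, ν (τ e)) = ∑ v : V, ∑ e : Ed, if σ e = v then ν (τ e) else 0 := by
        rw [Finset.sum_comm]
        refine Finset.sum_congr rfl fun e _ => ?_
        rw [Finset.sum_ite_eq Finset.univ (σ e) (fun _ => ν (τ e))]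
        simp
      rw [h1]
      simp only [hedge]
      rw [← Finset.mul_sum, hνsum, mul_one]
    rw [this]
    show Λ = Λ * 1
    rw [mul_one]
  | (m+1) =>
    intro γ
    have hiff : ∀ e : Ed,
        (∀ i : Fin (m+1), ((m+1 : ℕ)) = (i : ℕ) + 1 → τ (γ i) = σ e) ↔
          σ e = τ (γ (Fin.last m)) := by
      intro e
      constructor
      · intro h; exact (h (Fin.last m) (by simp)).symm
      · intro h i hi
        have : i = Fin.last m := by
          ext
          simp only [Fin.val_last]
          omega
        rw [this, h]
    simp only [hiff]
    rw [hedge (τ (γ (Fin.last m)))]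
    rfl

theorem stepSum (hedge : ∀ v, (∑ e : Ed, if σ e = v then ν (τ e) else 0) = Λ * ν v)
    (hνsum : ∑ v, ν v = 1)
    {n : ℕ} (p : (Fin n → Ed) → Prop) [DecidablePred p] :
    (∑ δ : Fin (n+1) → Ed, if pathCond σ τ (n+1) δ ∧ p (Fin.init δ) then νend τ ν δ else 0)
      = Λ * ∑ γ : Fin n → Ed, if pathCond σ τ n γ ∧ p γ then νend τ ν γ else 0 := by
  rw [← Equiv.sum_comp (Fin.snocEquiv (fun _ => Ed))
    (fun δ => if pathCond σ τ (n+1) δ ∧ p (Fin.init δ) then νend τ ν δ else 0)]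
  rw [Fintype.sum_prod_type]
  rw [Finset.sum_comm]
  rw [Finset.mul_sum]
  refine Finset.sum_congr rfl fun γ _ => ?_
  have hsnoc : ∀ e : Ed, (Fin.snocEquiv (fun _ => Ed)) (e, γ) = Fin.snoc γ e := by
    intro e
    funext i
    simp [Fin.snocEquiv]
  simp only [hsnoc]
  have hinit : ∀ e : Ed, Fin.init (α := fun _ : Fin (n+1) => Ed) (Fin.snoc γ e) = γ := by
    intro e
    exact Fin.init_snoc (α := fun _ : Fin (n+1) => Ed) e γ
  have hlast : ∀ e : Ed, νend τ ν (Fin.snoc γ e) = ν (τ e) := by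
    intro e
    show ν (τ ((Fin.snoc γ e : Fin (n+1) → Ed) (Fin.last n))) = ν (τ e)
    rw [Fin.snoc_last]
  simp only [hinit, hlast, pathCond_snoc]
  by_cases hp : pathCond σ τ n γ ∧ p γ
  · have key : ∀ e : Ed,
        (if (pathCond σ τ n γ ∧ (∀ i : Fin n, (n : ℕ) = (i : ℕ) + 1 → τ (γ i) = σ e)) ∧ p γ
          then ν (τ e) else 0)
        = (if (∀ i : Fin n, (n : ℕ) = (i : ℕ) + 1 → τ (γ i) = σ e) then ν (τ e) else 0) := by
      intro e
      by_cases hl : (∀ i : Fin n, (n : ℕ) = (i : ℕ) + 1 → τ (γ i) = σ e)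
      · rw [if_pos hl, if_pos ⟨⟨hp.1, hl⟩, hp.2⟩]
      · rw [if_neg hl, if_neg (fun hc => hl hc.1.2)]
    rw [Finset.sum_congr rfl fun e _ => key e, linkSum hedge hνsum γ, if_pos hp]
  · have key : ∀ e : Ed,
        (if (pathCond σ τ n γ ∧ (∀ i : Fin n, (n : ℕ) = (i : ℕ) + 1 → τ (γ i) = σ e)) ∧ p γ
          then ν (τ e) else 0) = 0 := by
      intro e
      exact if_neg (fun hc => hp ⟨hc.1.1, hc.2⟩)
    rw [Finset.sum_congr rfl fun e _ => key e, if_neg hp]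
    simp

theorem sumA (hedge : ∀ v, (∑ e : Ed, if σ e = v then ν (τ e) else 0) = Λ * ν v)
    (hνsum : ∑ v, ν v = 1) :
    ∀ n : ℕ, (∑ γ : Fin n → Ed, if pathCond σ τ n γ then νend τ ν γ else 0) = Λ ^ n := by
  intro n
  induction n with
  | zero =>
    rw [Finset.sum_eq_single (fun i : Fin 0 => i.elim0)]
    · have hp : pathCond σ τ 0 (fun i : Fin 0 => i.elim0) := fun i => i.elim0
      rw [if_pos hp]
      rfl
    · intro b _ hb; exact absurd (funext fun i => i.elim0) hb
    · intro h; exact absurd (Finset.mem_univ _) h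
  | succ n ih =>
    have hs := stepSum hedge hνsum (n := n) (fun _ => True)
    simp only [and_true] at hs
    rw [hs, ih, pow_succ]
    ring

theorem sumB (hedge : ∀ v, (∑ e : Ed, if σ e = v then ν (τ e) else 0) = Λ * ν v)
    (hνsum : ∑ v, ν v = 1)
    (m : ℕ) (γ₀ : Fin m → Ed) (hγ₀ : pathCond σ τ m γ₀) :
    ∀ n : ℕ, ∀ h : m ≤ n,
      (∑ δ : Fin n → Ed,
        if pathCond σ τ n δ ∧ (∀ i : Fin m, δ (Fin.castLE h i) = γ₀ i) then νend τ ν δ else 0)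
        = Λ ^ (n - m) * νend τ ν γ₀ := by
  intro n
  induction n with
  | zero =>
    intro h
    have hm : m = 0 := Nat.le_zero.mp h
    subst hm
    rw [Finset.sum_eq_single γ₀]
    · have hpre : ∀ i : Fin 0, γ₀ (Fin.castLE h i) = γ₀ i := fun i => i.elim0
      rw [if_pos ⟨hγ₀, hpre⟩]
      simp
    · intro b _ hb
      rw [if_neg]
      rintro ⟨-, hpre⟩
      exact hb (funext fun i => i.elim0)
    · intro h; exact absurd (Finset.mem_univ _) h
  | succ n ih =>
    intro h
    by_cases hmn : m ≤ n
    · have hcast : ∀ (δ : Fin (n+1) → Ed),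
          (∀ i : Fin m, δ (Fin.castLE h i) = γ₀ i) ↔
            (∀ i : Fin m, (Fin.init δ) (Fin.castLE hmn i) = γ₀ i) := by
        intro δ
        have : ∀ i : Fin m, (Fin.init δ) (Fin.castLE hmn i) = δ (Fin.castLE h i) := by
          intro i
          rfl
        constructor
        · intro hp i; rw [this i]; exact hp i
        · intro hp i; rw [← this i]; exact hp i
      have hs := stepSum hedge hνsum (n := n)
        (fun γ => ∀ i : Fin m, γ (Fin.castLE hmn i) = γ₀ i)
      calc (∑ δ : Fin (n+1) → Ed,
              if pathCond σ τ (n+1) δ ∧ (∀ i : Fin m, δ (Fin.castLE h i) = γ₀ i)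
              then νend τ ν δ else 0)
          = ∑ δ : Fin (n+1) → Ed,
              if pathCond σ τ (n+1) δ ∧ (∀ i : Fin m, (Fin.init δ) (Fin.castLE hmn i) = γ₀ i)
              then νend τ ν δ else 0 := by
            refine Finset.sum_congr rfl fun δ _ => ?_
            rw [if_congr (and_congr_right fun _ => hcast δ) rfl rfl]
        _ = Λ * ∑ γ : Fin n → Ed,
              if pathCond σ τ n γ ∧ (∀ i : Fin m, γ (Fin.castLE hmn i) = γ₀ i)
              then νend τ ν γ else 0 := hs
        _ = Λ * (Λ ^ (n - m) * νend τ ν γ₀) := by rw [ih hmn]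
        _ = Λ ^ (n + 1 - m) * νend τ ν γ₀ := by
            rw [← mul_assoc, ← pow_succ']
            congr 2
            omega
    · -- m = n + 1
      have hm : m = n + 1 := by omega
      subst hm
      rw [Finset.sum_eq_single γ₀]
      · have hpre : ∀ i : Fin (n+1), γ₀ (Fin.castLE h i) = γ₀ i := by
          intro i
          rfl
        rw [if_pos ⟨hγ₀, hpre⟩]
        simp
      · intro b _ hb
        rw [if_neg]
        rintro ⟨-, hpre⟩
        refine hb (funext fun i => ?_)
        have := hpre i
        rwa [show Fin.castLE h i = i from by ext; rfl] at this
      · intro h; exact absurd (Finset.mem_univ _) h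
end Comb

section More
variable {V Ed : Type} [Fintype V] [Fintype Ed] [DecidableEq V]
variable {σ τ : Ed → V} {ν : V → ℝ} {Λ : ℝ}

/-- derivation of the edge-sum identity from the Perron-Frobenius hypothesis -/
theorem edgeSum (A : Matrix V V ℕ)
    (hA : ∀ v v', A v v' = Nat.card {e : Ed // σ e = v ∧ τ e = v'})
    (hPF : (A.map (Nat.cast : ℕ → ℝ)).mulVec ν = Λ • ν) :
    ∀ v, (∑ e : Ed, if σ e = v then ν (τ e) else 0) = Λ * ν v := by
  intro v
  have h1 : (∑ v', ((A v v' : ℕ) : ℝ) * ν v') = Λ * ν v := by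
    have h := congrFun hPF v
    simpa [Matrix.mulVec, dotProduct, Matrix.map_apply] using h
  have h2 : ∀ v', ((A v v' : ℕ) : ℝ)
      = ((Finset.univ.filter fun e => σ e = v ∧ τ e = v').card : ℝ) := by
    intro v'
    rw [hA, Nat.card_eq_fintype_card, Fintype.card_subtype]
  calc (∑ e : Ed, if σ e = v then ν (τ e) else 0)
      = ∑ e : Ed, ∑ v', if σ e = v ∧ τ e = v' then ν v' else 0 := by
        refine Finset.sum_congr rfl fun e _ => ?_
        by_cases hσ : σ e = v
        · simp only [hσ, true_and, if_pos rfl]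
          rw [Finset.sum_ite_eq Finset.univ (τ e) ν]
          simp
        · simp [hσ]
    _ = ∑ v', ∑ e : Ed, if σ e = v ∧ τ e = v' then ν v' else 0 := Finset.sum_comm
    _ = ∑ v', ((A v v' : ℕ) : ℝ) * ν v' := by
        refine Finset.sum_congr rfl fun v' _ => ?_
        rw [← Finset.sum_filter, Finset.sum_const, nsmul_eq_mul, h2 v']
    _ = Λ * ν v := h1

instance finPathFintype (σ τ : Ed → V) (n : ℕ) : Fintype (FinPath Ed σ τ n) := by
  unfold FinPath; infer_instance

theorem tsum_finPath (σ τ : Ed → V) (n : ℕ) (f : (Fin n → Ed) → ℝ) :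
    (∑' γ : FinPath Ed σ τ n, f γ.1) = ∑ γ : Fin n → Ed, if pathCond σ τ n γ then f γ else 0 := by
  rw [tsum_fintype, ← Finset.sum_filter]
  exact (Finset.sum_subtype (Finset.univ.filter (pathCond σ τ n))
    (by intro x; rw [Finset.mem_filter]; exact ⟨fun h => h.2, fun h => ⟨Finset.mem_univ x, h⟩⟩) f).symm

end More

section Ext
variable {V Ed : Type}

/-- extend a finite path to an infinite edge sequence using a section `nxt` of `σ` -/
def extFun (τ : Ed → V) (nxt : V → Ed) (v₀ : V) (N : ℕ) (γ : Fin N → Ed) : ℕ → Ed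
  | 0 => if h : 0 < N then γ ⟨0, h⟩ else nxt v₀
  | (i+1) => if h : i+1 < N then γ ⟨i+1, h⟩ else nxt (τ (extFun τ nxt v₀ N γ i))

theorem extFun_lt (τ : Ed → V) (nxt : V → Ed) (v₀ : V) (N : ℕ) (γ : Fin N → Ed) :
    ∀ (i : ℕ) (h : i < N), extFun τ nxt v₀ N γ i = γ ⟨i, h⟩ := by
  intro i h
  cases i with
  | zero => rw [extFun, dif_pos h]
  | succ m => rw [extFun, dif_pos h]

theorem extFun_path {σ τ : Ed → V} (nxt : V → Ed) (hnxt : ∀ v, σ (nxt v) = v) (v₀ : V)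
    (N : ℕ) (γ : Fin N → Ed) (hγ : pathCond σ τ N γ) :
    ∀ i, τ (extFun τ nxt v₀ N γ i) = σ (extFun τ nxt v₀ N γ (i+1)) := by
  intro i
  by_cases h : i + 1 < N
  · have hi : i < N := by omega
    rw [extFun_lt τ nxt v₀ N γ i hi, extFun_lt τ nxt v₀ N γ (i+1) h]
    exact hγ ⟨i, hi⟩ ⟨i+1, h⟩ rfl
  · have : extFun τ nxt v₀ N γ (i+1) = nxt (τ (extFun τ nxt v₀ N γ i)) := by
      rw [extFun, dif_neg h]
    rw [this, hnxt]

/-- the infinite path extending a finite path -/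
def pointOf (σ τ : Ed → V) (nxt : V → Ed) (hnxt : ∀ v, σ (nxt v) = v) (v₀ : V)
    (N : ℕ) (γ : Fin N → Ed) (hγ : pathCond σ τ N γ) : SPath Ed σ τ :=
  ⟨extFun τ nxt v₀ N γ, extFun_path nxt hnxt v₀ N γ hγ⟩

theorem pointOf_pref (σ τ : Ed → V) (nxt : V → Ed) (hnxt : ∀ v, σ (nxt v) = v) (v₀ : V)
    (N : ℕ) (γ : Fin N → Ed) (hγ : pathCond σ τ N γ) (i : ℕ) (h : i < N) :
    (pointOf σ τ nxt hnxt v₀ N γ hγ).1 i = γ ⟨i, h⟩ :=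
  extFun_lt τ nxt v₀ N γ i h

end Ext

theorem div_le_div_of_nonneg_right' {a b c : ℝ} (h : a ≤ b) (hc : 0 < c) : a / c ≤ b / c := by
  rw [div_eq_mul_inv, div_eq_mul_inv]
  exact mul_le_mul_of_nonneg_right h (inv_nonneg.mpr hc.le)

/-- The canonical transversal of a primitive substitution tiling of `ℝ^d` (modelled as the
path space of the stationary Bratteli diagram with primitive Abelianization matrix `A`,
Perron–Frobenius eigenvalue `Λ` and normalized positive eigenvector `ν`, with ultrametric
given by the weights `w(γ) = ν_{r(γ)}^{1/d}·Λ^{−|γ|/d}`) has Hausdorff dimension `d`, and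
`d` is the abscissa of convergence of its zeta function `ζ(s) = Σ_γ diam([γ])^s`. -/
theorem stmt11 {V Ed : Type} [Fintype V] [Fintype Ed] [Nonempty V] [DecidableEq V]
    (σ τ : Ed → V)
    (A : Matrix V V ℕ)
    (hA : ∀ v v', A v v' = Nat.card {e : Ed // σ e = v ∧ τ e = v'})
    (hprim : ∃ k : ℕ, ∀ v v', 0 < (A ^ k) v v')
    (Λ : ℝ) (hΛ : 1 < Λ)
    (ν : V → ℝ) (hν : ∀ v, 0 < ν v) (hνsum : ∑ v, ν v = 1)
    (hPF : (A.map (Nat.cast : ℕ → ℝ)).mulVec ν = Λ • ν)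
    (d : ℕ) (hd : 1 ≤ d)
    (W : ∀ n : ℕ, (Fin n → Ed) → ℝ)
    (hW0 : ∀ γ : Fin 0 → Ed, W 0 γ = 1)
    (hWs : ∀ (n : ℕ) (γ : Fin (n + 1) → Ed),
      W (n + 1) γ = ν (τ (γ (Fin.last n))) ^ ((1 : ℝ) / (d : ℝ)) *
        Λ ^ (-((n : ℝ) + 1) / (d : ℝ)))
    [MetricSpace (SPath Ed σ τ)]
    (hdist : ∀ x y : SPath Ed σ τ, x ≠ y →
      dist x y = W (slcp x y) (fun i : Fin (slcp x y) => x.1 i)) :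
    dimH (Set.univ : Set (SPath Ed σ τ)) = (d : ENNReal) ∧
    (∀ t : ℝ, (d : ℝ) < t →
      Summable (fun n : ℕ => ∑' γ : FinPath Ed σ τ n, W n γ.1 ^ t)) ∧
    ¬ Summable (fun n : ℕ => ∑' γ : FinPath Ed σ τ n, W n γ.1 ^ (d : ℝ)) := by
  classical
  have hΛ0 : (0:ℝ) < Λ := lt_trans one_pos hΛ
  have hd0 : (0:ℝ) < (d:ℝ) := by
    have : 0 < d := lt_of_lt_of_le one_pos hd
    exact_mod_cast this
  have hdne : (d:ℝ) ≠ 0 := ne_of_gt hd0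
  have hedge : ∀ v, (∑ e : Ed, if σ e = v then ν (τ e) else 0) = Λ * ν v := edgeSum A hA hPF
  have hν1 : ∀ v, ν v ≤ 1 := by
    intro v
    calc ν v ≤ ∑ v', ν v' :=
          Finset.single_le_sum (fun w _ => (hν w).le) (Finset.mem_univ v)
      _ = 1 := hνsum
  have hWpos : ∀ (n : ℕ) (γ : Fin n → Ed), 0 < W n γ := by
    intro n γ
    match n with
    | 0 => rw [hW0]; norm_num
    | (m+1) =>
      rw [hWs]
      exact mul_pos (Real.rpow_pos_of_pos (hν _) _) (Real.rpow_pos_of_pos hΛ0 _)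
  -- rpow of W
  have hWt : ∀ (t : ℝ) (n : ℕ) (γ : Fin (n+1) → Ed),
      W (n+1) γ ^ t
        = ν (τ (γ (Fin.last n))) ^ (t / (d:ℝ)) * Λ ^ (-((n:ℝ)+1) * t / (d:ℝ)) := by
    intro t n γ
    have hx : (0:ℝ) < ν (τ (γ (Fin.last n))) := hν _
    rw [hWs]
    rw [Real.mul_rpow (Real.rpow_pos_of_pos hx _).le (Real.rpow_pos_of_pos hΛ0 _).le]
    rw [← Real.rpow_mul hx.le, ← Real.rpow_mul hΛ0.le]
    congr 1
    · congr 1; ring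
    · congr 1; ring
  have hrpow_nat : ∀ (k : ℕ), Λ ^ (-(k:ℝ)) = (Λ ^ k)⁻¹ := by
    intro k
    rw [Real.rpow_neg hΛ0.le, Real.rpow_natCast]
  have hWd : ∀ (n : ℕ) (γ : Fin n → Ed), W n γ ^ (d:ℝ) = νend τ ν γ / Λ ^ n := by
    intro n γ
    match n with
    | 0 =>
      rw [hW0, Real.one_rpow]
      show (1:ℝ) = 1 / Λ ^ 0
      simp
    | (m+1) =>
      rw [hWt]
      have e1 : (d:ℝ) / (d:ℝ) = 1 := div_self hdne
      have e2 : -((m:ℝ)+1) * (d:ℝ) / (d:ℝ) = -(((m+1:ℕ):ℝ)) := by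
        field_simp
        push_cast
        ring
      rw [e1, e2, Real.rpow_one, hrpow_nat]
      show ν (τ (γ (Fin.last m))) * (Λ ^ (m+1))⁻¹ = νend τ ν γ / Λ ^ (m+1)
      rw [div_eq_mul_inv]
      rfl
  have hZd : ∀ n : ℕ, (∑' γ : FinPath Ed σ τ n, W n γ.1 ^ (d:ℝ)) = 1 := by
    intro n
    rw [tsum_finPath σ τ n (fun γ => W n γ ^ (d:ℝ))]
    have hterm : ∀ γ : Fin n → Ed,
        (if pathCond σ τ n γ then W n γ ^ (d:ℝ) else 0)
          = (if pathCond σ τ n γ then νend τ ν γ else 0) * (Λ ^ n)⁻¹ := by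
      intro γ
      by_cases h : pathCond σ τ n γ
      · rw [if_pos h, if_pos h, hWd, div_eq_mul_inv]
      · rw [if_neg h, if_neg h, zero_mul]
    rw [Finset.sum_congr rfl fun γ _ => hterm γ, ← Finset.sum_mul, sumA hedge hνsum n]
    field_simp
  refine ⟨?_, ?_, ?_⟩
  ·     -- PART 1 : Hausdorff dimension
    have hexist : ∀ v, ∃ e : Ed, σ e = v := by
      intro v
      by_contra hne
      push_neg at hne
      have h0 := hedge v
      rw [Finset.sum_eq_zero (fun e _ => if_neg (hne e))] at h0
      have := mul_pos hΛ0 (hν v)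
      linarith
    choose nxt hnxt using hexist
    have hv₀ex : ∃ v₀ ∈ Finset.univ, ∀ v ∈ Finset.univ, ν v₀ ≤ ν v :=
      Finset.exists_min_image Finset.univ ν ⟨Classical.arbitrary V, Finset.mem_univ _⟩
    obtain ⟨v₀, -, hv₀⟩ := hv₀ex
    set α : ℝ := Λ ^ (-(1:ℝ)/(d:ℝ)) with hαdef
    have hα0 : 0 < α := Real.rpow_pos_of_pos hΛ0 _
    have hα1 : α < 1 := by
      apply Real.rpow_lt_one_of_one_lt_of_neg hΛ
      apply div_neg_of_neg_of_pos _ hd0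
      norm_num
    have hαpow : ∀ n : ℕ, α ^ n = Λ ^ (-(n:ℝ)/(d:ℝ)) := by
      intro n
      rw [hαdef, ← Real.rpow_natCast (Λ ^ (-(1:ℝ)/(d:ℝ))) n, ← Real.rpow_mul hΛ0.le]
      congr 1
      ring
    set c : ℝ := ν v₀ ^ ((1:ℝ)/(d:ℝ)) with hcdef
    have hc0 : 0 < c := Real.rpow_pos_of_pos (hν v₀) _
    have hc1 : c ≤ 1 := Real.rpow_le_one (hν v₀).le (hν1 v₀) (by positivity)
    have hWub : ∀ (n : ℕ) (γ : Fin n → Ed), W n γ ≤ α ^ n := by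
      intro n γ
      match n with
      | 0 => rw [hW0, pow_zero]
      | (m+1) =>
        rw [hWs, show Λ ^ (-((m:ℝ)+1)/(d:ℝ)) = α ^ (m+1) from by rw [hαpow]; push_cast; ring_nf]
        calc ν (τ (γ (Fin.last m))) ^ ((1:ℝ)/(d:ℝ)) * α ^ (m+1)
            ≤ 1 * α ^ (m+1) := by
              apply mul_le_mul_of_nonneg_right _ (pow_pos hα0 _).le
              exact Real.rpow_le_one (hν _).le (hν1 _) (by positivity)
          _ = α ^ (m+1) := one_mul _
    have hWlb : ∀ (n : ℕ) (γ : Fin n → Ed), c * α ^ n ≤ W n γ := by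
      intro n γ
      match n with
      | 0 =>
        rw [hW0, pow_zero, mul_one]
        exact hc1
      | (m+1) =>
        rw [hWs, show Λ ^ (-((m:ℝ)+1)/(d:ℝ)) = α ^ (m+1) from by rw [hαpow]; push_cast; ring_nf]
        apply mul_le_mul_of_nonneg_right _ (pow_pos hα0 _).le
        exact Real.rpow_le_rpow (hν v₀).le (hv₀ _ (Finset.mem_univ _)) (by positivity)
    -- slcp facts
    have hne1 : ∀ x y : SPath Ed σ τ, x ≠ y → {n | x.1 n ≠ y.1 n}.Nonempty := by
      intro x y hxy
      have h1 : x.1 ≠ y.1 := fun h => hxy (Subtype.ext h)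
      exact Function.ne_iff.mp h1
    have hagree : ∀ (x y : SPath Ed σ τ) (i : ℕ), i < slcp x y → x.1 i = y.1 i := by
      intro x y i hi
      by_contra hne
      exact Nat.notMem_of_lt_sInf hi hne
    have hle_slcp : ∀ (x y : SPath Ed σ τ) (n : ℕ), x ≠ y →
        (∀ i, i < n → x.1 i = y.1 i) → n ≤ slcp x y := by
      intro x y n hxy h
      refine le_csInf (hne1 x y hxy) fun m hm => ?_
      by_contra hmn
      exact hm (h m (by omega))
    have hdub : ∀ (x y : SPath Ed σ τ) (n : ℕ),
        (∀ i, i < n → x.1 i = y.1 i) → dist x y ≤ α ^ n := by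
      intro x y n h
      by_cases hxy : x = y
      · rw [hxy, dist_self]
        positivity
      · rw [hdist x y hxy]
        calc W (slcp x y) (fun i : Fin (slcp x y) => x.1 i) ≤ α ^ (slcp x y) := hWub _ _
          _ ≤ α ^ n := pow_le_pow_of_le_one hα0.le hα1.le (hle_slcp x y n hxy h)
    have hdlb : ∀ (x y : SPath Ed σ τ), x ≠ y → c * α ^ (slcp x y) ≤ dist x y := by
      intro x y hxy
      rw [hdist x y hxy]
      exact hWlb _ _
    have hdagree : ∀ (x y : SPath Ed σ τ) (n : ℕ),
        dist x y < c * α ^ n → ∀ i, i < n → x.1 i = y.1 i := by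
      intro x y n h i hi
      by_cases hxy : x = y
      · rw [hxy]
      · by_contra hne
        have h1 : slcp x y ≤ i := Nat.sInf_le hne
        have h2 : α ^ n ≤ α ^ (slcp x y) :=
          pow_le_pow_of_le_one hα0.le hα1.le (by omega)
        have h3 := hdlb x y hxy
        nlinarith
    -- cylinders
    set cylP : ∀ n : ℕ, (Fin n → Ed) → Set (SPath Ed σ τ) :=
      fun n γ => {y | ∀ i : Fin n, y.1 i = γ i} with hcylPdef
    set pref : SPath Ed σ τ → ∀ n : ℕ, Fin n → Ed := fun x n i => x.1 i with hprefdef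
    have hprefPath : ∀ (x : SPath Ed σ τ) (n : ℕ), pathCond σ τ n (pref x n) := by
      intro x n i j hij
      show τ (x.1 i) = σ (x.1 j)
      rw [hij]
      exact x.2 i
    have hdiam : ∀ (n : ℕ) (γ : Fin n → Ed),
        EMetric.diam (cylP n γ) ≤ ENNReal.ofReal (α ^ n) := by
      intro n γ
      refine EMetric.diam_le fun y hy z hz => ?_
      rw [edist_dist]
      refine ENNReal.ofReal_le_ofReal (hdub y z n fun i hi => ?_)
      exact (hy ⟨i, hi⟩).trans (hz ⟨i, hi⟩).symm
    have hopen : ∀ (n : ℕ) (γ : Fin n → Ed), IsOpen (cylP n γ) := by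
      intro n γ
      rw [Metric.isOpen_iff]
      intro y hy
      refine ⟨c * α ^ n, by positivity, fun z hz => ?_⟩
      intro i
      have h1 : z.1 i = y.1 i := hdagree z y n (by rwa [Metric.mem_ball] at hz) i i.2
      rw [h1]
      exact hy i
    have hXne : Nonempty (SPath Ed σ τ) :=
      ⟨pointOf σ τ nxt hnxt (Classical.arbitrary V) 0 (fun i => i.elim0) (fun i => i.elim0)⟩
    -- completeness
    have hcompl : CompleteSpace (SPath Ed σ τ) := by
      apply Metric.complete_of_cauchySeq_tendsto
      intro u hu
      have hN : ∀ k : ℕ, ∃ N : ℕ, ∀ p, N ≤ p → ∀ q, N ≤ q → dist (u p) (u q) < c * α ^ k := by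
        intro k
        exact Metric.cauchySeq_iff.mp hu (c * α ^ k) (by positivity)
      choose Nf hNf using hN
      have hag : ∀ k p q, Nf k ≤ p → Nf k ≤ q → ∀ i, i < k → (u p).1 i = (u q).1 i :=
        fun k p q hp hq => hdagree _ _ _ (hNf k p hp q hq)
      have hzc : ∀ k i, i < k → (u (Nf k)).1 i = (u (Nf (i+1))).1 i := by
        intro k i hik
        have h1 := hag k (Nf k) (max (Nf k) (Nf (i+1))) le_rfl (le_max_left _ _) i hik
        have h2 := hag (i+1) (Nf (i+1)) (max (Nf k) (Nf (i+1))) le_rfl (le_max_right _ _) i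
          (Nat.lt_succ_self i)
        exact h1.trans h2.symm
      have hz : ∀ i, τ ((fun i => (u (Nf (i+1))).1 i) i) = σ ((fun i => (u (Nf (i+1))).1 i) (i+1)) := by
        intro i
        have e1 : (u (Nf (i+1))).1 i = (u (Nf (i+2))).1 i := (hzc (i+2) i (by omega)).symm
        show τ ((u (Nf (i+1))).1 i) = σ ((u (Nf (i+2))).1 (i+1))
        rw [e1]
        exact (u (Nf (i+2))).2 i
      refine ⟨⟨fun i => (u (Nf (i+1))).1 i, hz⟩, ?_⟩
      refine Metric.tendsto_atTop.mpr ?_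
      intro ε hε
      obtain ⟨k, hk⟩ : ∃ k : ℕ, α ^ k < ε := exists_pow_lt_of_lt_one hε hα1
      refine ⟨Nf (k+1), fun n hn => ?_⟩
      have hagnz : ∀ i, i < k+1 → (u n).1 i = (u (Nf (i+1))).1 i := by
        intro i hi
        exact (hag (k+1) n (Nf (k+1)) hn le_rfl i hi).trans (hzc (k+1) i hi)
      calc dist (u n) ⟨fun i => (u (Nf (i+1))).1 i, hz⟩ ≤ α ^ (k+1) := hdub _ _ _ hagnz
        _ ≤ α ^ k := pow_le_pow_of_le_one hα0.le hα1.le (Nat.le_succ k)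
        _ < ε := hk
    -- total boundedness
    have htb : TotallyBounded (Set.univ : Set (SPath Ed σ τ)) := by
      rw [Metric.totallyBounded_iff]
      intro ε hε
      obtain ⟨k, hk⟩ : ∃ k : ℕ, α ^ k < ε := exists_pow_lt_of_lt_one hε hα1
      have hfin : (Set.range (fun x : SPath Ed σ τ => pref x k)).Finite := Set.toFinite _
      haveI := hfin.to_subtype
      refine ⟨Set.range (fun b : ↥(Set.range (fun x : SPath Ed σ τ => pref x k)) =>
        Classical.choose b.2), Set.finite_range _, ?_⟩
      intro x _
      rw [Set.mem_iUnion₂]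
      set b : ↥(Set.range (fun x : SPath Ed σ τ => pref x k)) :=
        ⟨pref x k, Set.mem_range_self x⟩ with hbdef
      refine ⟨Classical.choose b.2, ⟨b, rfl⟩, ?_⟩
      have hb : pref (Classical.choose b.2) k = pref x k := Classical.choose_spec b.2
      rw [Metric.mem_ball]
      have hagr : ∀ i, i < k → x.1 i = (Classical.choose b.2).1 i := by
        intro i hi
        exact (congrFun hb ⟨i, hi⟩).symm
      calc dist x (Classical.choose b.2) ≤ α ^ k := hdub _ _ _ hagr
        _ < ε := hk
    have hcompact : IsCompact (Set.univ : Set (SPath Ed σ τ)) :=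
      isCompact_iff_totallyBounded_isComplete.mpr
        ⟨htb, completeSpace_iff_isComplete_univ.mp hcompl⟩
    borelize (SPath Ed σ τ)
    have hνendlb : ∀ (n : ℕ) (γ : Fin n → Ed), ν v₀ ≤ νend τ ν γ := by
      intro n γ
      match n with
      | 0 => exact hν1 v₀
      | (m+1) => exact hv₀ _ (Finset.mem_univ _)
    have hνendub : ∀ (n : ℕ) (γ : Fin n → Ed), νend τ ν γ ≤ 1 := by
      intro n γ
      match n with
      | 0 => exact le_refl 1
      | (m+1) => exact hν1 _
    have hcard : ∀ n : ℕ, (Fintype.card (FinPath Ed σ τ n) : ℝ) * ν v₀ ≤ Λ ^ n := by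
      intro n
      have h1 : Fintype.card (FinPath Ed σ τ n)
          = Fintype.card {γ : Fin n → Ed // pathCond σ τ n γ} :=
        Fintype.card_congr (Equiv.refl _)
      rw [h1, Fintype.card_subtype]
      calc ((Finset.univ.filter (pathCond σ τ n)).card : ℝ) * ν v₀
          = ∑ _γ ∈ Finset.univ.filter (pathCond σ τ n), ν v₀ := by
            rw [Finset.sum_const, nsmul_eq_mul]
        _ ≤ ∑ γ ∈ Finset.univ.filter (pathCond σ τ n), νend τ ν γ :=
            Finset.sum_le_sum fun γ _ => hνendlb n γ
        _ = ∑ γ : Fin n → Ed, if pathCond σ τ n γ then νend τ ν γ else 0 :=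
            Finset.sum_filter _ _
        _ = Λ ^ n := sumA hedge hνsum n
    have hαrpowd : ∀ n : ℕ, (α ^ n) ^ (d:ℝ) = (Λ ^ n)⁻¹ := by
      intro n
      rw [hαpow, ← Real.rpow_mul hΛ0.le]
      have : -(n:ℝ)/(d:ℝ) * (d:ℝ) = -(n:ℝ) := by field_simp
      rw [this, hrpow_nat]
    -- upper bound for the Hausdorff measure
    have hμle : μH[(d:ℝ)] (Set.univ : Set (SPath Ed σ τ)) ≤ ENNReal.ofReal ((ν v₀)⁻¹) := by
      have hr : Filter.Tendsto (fun n : ℕ => ENNReal.ofReal (α ^ n)) Filter.atTop (nhds 0) := by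
        rw [← ENNReal.ofReal_zero]
        exact ENNReal.tendsto_ofReal (tendsto_pow_atTop_nhds_zero_of_lt_one hα0.le hα1)
      have hbound := MeasureTheory.Measure.hausdorffMeasure_le_liminf_sum (d:ℝ)
        (Set.univ : Set (SPath Ed σ τ)) (fun n => ENNReal.ofReal (α ^ n)) hr
        (fun n (γ : FinPath Ed σ τ n) => cylP n γ.1)
        (Filter.Eventually.of_forall fun n γ => hdiam n γ.1)
        (Filter.Eventually.of_forall fun n => by
          intro x _
          exact Set.mem_iUnion.mpr ⟨⟨pref x n, hprefPath x n⟩, fun i => rfl⟩)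
      have hFn : ∀ n : ℕ,
          (∑ γ : FinPath Ed σ τ n, EMetric.diam (cylP n γ.1) ^ (d:ℝ))
            ≤ ENNReal.ofReal ((ν v₀)⁻¹) := by
        intro n
        have h2 : ∀ γ : FinPath Ed σ τ n,
            EMetric.diam (cylP n γ.1) ^ (d:ℝ) ≤ ENNReal.ofReal ((Λ ^ n)⁻¹) := by
          intro γ
          calc EMetric.diam (cylP n γ.1) ^ (d:ℝ)
              ≤ ENNReal.ofReal (α ^ n) ^ (d:ℝ) :=
                ENNReal.rpow_le_rpow (hdiam n γ.1) hd0.le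
            _ = ENNReal.ofReal ((α ^ n) ^ (d:ℝ)) :=
                ENNReal.ofReal_rpow_of_pos (pow_pos hα0 n)
            _ = ENNReal.ofReal ((Λ ^ n)⁻¹) := by rw [hαrpowd]
        calc (∑ γ : FinPath Ed σ τ n, EMetric.diam (cylP n γ.1) ^ (d:ℝ))
            ≤ ∑ _γ : FinPath Ed σ τ n, ENNReal.ofReal ((Λ ^ n)⁻¹) :=
              Finset.sum_le_sum fun γ _ => h2 γ
          _ = (Fintype.card (FinPath Ed σ τ n) : ℝ≥0∞) * ENNReal.ofReal ((Λ ^ n)⁻¹) := by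
              rw [Finset.sum_const, nsmul_eq_mul, Finset.card_univ]
          _ = ENNReal.ofReal ((Fintype.card (FinPath Ed σ τ n) : ℝ) * (Λ ^ n)⁻¹) := by
              rw [← ENNReal.ofReal_natCast (Fintype.card (FinPath Ed σ τ n)),
                ← ENNReal.ofReal_mul (by positivity)]
          _ ≤ ENNReal.ofReal ((ν v₀)⁻¹) := by
              apply ENNReal.ofReal_le_ofReal
              have h3 : (Fintype.card (FinPath Ed σ τ n) : ℝ) ≤ Λ ^ n * (ν v₀)⁻¹ := by
                rw [← div_eq_mul_inv]
                exact (le_div_iff₀ (hν v₀)).mpr (hcard n)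
              calc (Fintype.card (FinPath Ed σ τ n) : ℝ) * (Λ ^ n)⁻¹
                  ≤ (Λ ^ n * (ν v₀)⁻¹) * (Λ ^ n)⁻¹ :=
                    mul_le_mul_of_nonneg_right h3 (by positivity)
                _ = (ν v₀)⁻¹ := by
                    rw [mul_comm (Λ ^ n), mul_assoc, mul_inv_cancel₀ (pow_ne_zero n hΛ0.ne'),
                      mul_one]
      refine hbound.trans ?_
      calc Filter.liminf
            (fun n => ∑ γ : FinPath Ed σ τ n, EMetric.diam (cylP n γ.1) ^ (d:ℝ))
            Filter.atTop
          ≤ Filter.liminf (fun _n : ℕ => ENNReal.ofReal ((ν v₀)⁻¹)) Filter.atTop :=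
            Filter.liminf_le_liminf (Filter.Eventually.of_forall hFn)
        _ = ENNReal.ofReal ((ν v₀)⁻¹) := Filter.liminf_const _
    have hlow : ENNReal.ofReal (ν v₀) ≤ μH[(d:ℝ)] (Set.univ : Set (SPath Ed σ τ)) := by
      rw [MeasureTheory.Measure.hausdorffMeasure_apply]
      have key : ∀ t : ℕ → Set (SPath Ed σ τ), (Set.univ ⊆ ⋃ j, t j) →
          ENNReal.ofReal (ν v₀)
            ≤ ∑' j, ⨆ _ : (t j).Nonempty, EMetric.diam (t j) ^ (d:ℝ) := by
        intro t hcov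
        set T := ∑' j, ⨆ _ : (t j).Nonempty, EMetric.diam (t j) ^ (d:ℝ) with hTdef
        by_cases hT : T = ⊤
        · rw [hT]; exact le_top
        have main : ∀ ε : ℝ, 0 < ε → ν v₀ * (1 - 2*ε) ≤ T.toReal := by
          intro ε hε
          have hpick : ∀ j : ℕ, ∃ (x : SPath Ed σ τ) (n : ℕ),
              t j ⊆ cylP n (pref x n) ∧
              ((νend τ ν (pref x n) / Λ ^ n ≤ ε / 2 ^ j) ∨
               (ENNReal.ofReal (ν v₀ * (νend τ ν (pref x n) / Λ ^ n))
                 ≤ ⨆ _ : (t j).Nonempty, EMetric.diam (t j) ^ (d:ℝ))) := by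
            intro j
            by_cases hmulti : ∃ y ∈ t j, ∃ z ∈ t j, y ≠ z
            · obtain ⟨y1, hy1, z1, hz1, hyz1⟩ := hmulti
              set S : Set ℕ := {m | ∃ y ∈ t j, ∃ z ∈ t j, y ≠ z ∧ slcp y z = m} with hSdef
              have hSne : S.Nonempty := ⟨slcp y1 z1, y1, hy1, z1, hz1, hyz1, rfl⟩
              have hSmem := Nat.sInf_mem hSne
              rw [hSdef] at hSmem
              obtain ⟨y₀, hy₀, z₀, hz₀, hyz₀, hsl⟩ := hSmem
              refine ⟨y₀, sInf S, ?_, Or.inr ?_⟩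
              · intro w hw i
                by_cases hwy : w = y₀
                · rw [hwy]
                · have hmem : slcp w y₀ ∈ S := ⟨w, hw, y₀, hy₀, hwy, rfl⟩
                  have h1 : sInf S ≤ slcp w y₀ := Nat.sInf_le hmem
                  exact hagree w y₀ i (lt_of_lt_of_le i.2 h1)
              · have hne : (t j).Nonempty := ⟨y₀, hy₀⟩
                rw [iSup_pos hne]
                have hd1 : ENNReal.ofReal (c * α ^ sInf S) ≤ EMetric.diam (t j) := by
                  calc ENNReal.ofReal (c * α ^ sInf S)
                      ≤ ENNReal.ofReal (dist y₀ z₀) :=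
                        ENNReal.ofReal_le_ofReal (by rw [← hsl]; exact hdlb y₀ z₀ hyz₀)
                    _ = edist y₀ z₀ := (edist_dist _ _).symm
                    _ ≤ EMetric.diam (t j) := EMetric.edist_le_diam_of_mem hy₀ hz₀
                have hcd : c ^ (d:ℝ) = ν v₀ := by
                  rw [hcdef, ← Real.rpow_mul (hν v₀).le]
                  have : (1:ℝ)/(d:ℝ) * (d:ℝ) = 1 := by field_simp
                  rw [this, Real.rpow_one]
                calc ENNReal.ofReal (ν v₀ * (νend τ ν (pref y₀ (sInf S)) / Λ ^ sInf S))
                    ≤ ENNReal.ofReal ((c * α ^ sInf S) ^ (d:ℝ)) := by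
                      apply ENNReal.ofReal_le_ofReal
                      have e1 : (c * α ^ sInf S) ^ (d:ℝ) = ν v₀ * (Λ ^ sInf S)⁻¹ := by
                        rw [Real.mul_rpow hc0.le (pow_pos hα0 _).le, hαrpowd, hcd]
                      rw [e1]
                      apply mul_le_mul_of_nonneg_left _ (hν v₀).le
                      calc νend τ ν (pref y₀ (sInf S)) / Λ ^ sInf S
                          ≤ 1 / Λ ^ sInf S :=
                            div_le_div_of_nonneg_right' (hνendub _ _) (pow_pos hΛ0 _)
                        _ = (Λ ^ sInf S)⁻¹ := one_div _
                    _ ≤ EMetric.diam (t j) ^ (d:ℝ) := by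
                      calc ENNReal.ofReal ((c * α ^ sInf S) ^ (d:ℝ))
                          = ENNReal.ofReal (c * α ^ sInf S) ^ (d:ℝ) :=
                            (ENNReal.ofReal_rpow_of_pos (by positivity)).symm
                        _ ≤ EMetric.diam (t j) ^ (d:ℝ) := ENNReal.rpow_le_rpow hd1 hd0.le
            · push_neg at hmulti
              obtain ⟨n, hn⟩ : ∃ n : ℕ, (1:ℝ) / Λ ^ n ≤ ε / 2 ^ j := by
                obtain ⟨n, hn⟩ := pow_unbounded_of_one_lt ((2:ℝ) ^ j / ε) hΛ
                refine ⟨n, ?_⟩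
                rw [div_le_div_iff₀ (pow_pos hΛ0 n) (pow_pos (by norm_num : (0:ℝ) < 2) j)]
                rw [div_lt_iff₀ hε] at hn
                nlinarith [pow_pos hΛ0 n, pow_pos (show (0:ℝ) < 2 by norm_num) j]
              have hbub : ∀ x : SPath Ed σ τ, νend τ ν (pref x n) / Λ ^ n ≤ ε / 2 ^ j := by
                intro x
                refine le_trans ?_ hn
                exact div_le_div_of_nonneg_right' (hνendub _ _) (pow_pos hΛ0 _)
              by_cases hne : (t j).Nonempty
              · refine ⟨hne.some, n, ?_, Or.inl (hbub _)⟩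
                intro w hw i
                rw [hmulti w hw hne.some hne.some_mem]
              · refine ⟨Classical.arbitrary _, n, ?_, Or.inl (hbub _)⟩
                intro w hw
                exact absurd ⟨w, hw⟩ hne
          choose xx nn hsub hbnd using hpick
          have hcovc : Set.univ ⊆ ⋃ j : ℕ, cylP (nn j) (pref (xx j) (nn j)) := by
            intro x hx
            obtain ⟨j, hj⟩ := Set.mem_iUnion.mp (hcov hx)
            exact Set.mem_iUnion.mpr ⟨j, hsub j hj⟩
          obtain ⟨J, hJ⟩ := hcompact.elim_finite_subcover
            (fun j => cylP (nn j) (pref (xx j) (nn j))) (fun j => hopen _ _) hcovc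
          have hsuper : 1 ≤ ∑ j ∈ J, νend τ ν (pref (xx j) (nn j)) / Λ ^ (nn j) := by
            set N := J.sup nn with hNdef
            have hQ : ∀ γ : Fin N → Ed, pathCond σ τ N γ → ∃ j ∈ J,
                (∀ (i : ℕ) (h : i < N), i < nn j → γ ⟨i, h⟩ = (xx j).1 i) := by
              intro γ hγ
              have hmem := hJ (Set.mem_univ (pointOf σ τ nxt hnxt (Classical.arbitrary V) N γ hγ))
              rw [Set.mem_iUnion₂] at hmem
              obtain ⟨j, hjJ, hjmem⟩ := hmem
              refine ⟨j, hjJ, fun i h hi => ?_⟩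
              have h1 : (pointOf σ τ nxt hnxt (Classical.arbitrary V) N γ hγ).1 i
                  = (xx j).1 i := hjmem ⟨i, hi⟩
              rw [← h1]
              exact (pointOf_pref σ τ nxt hnxt _ N γ hγ i h).symm
            have hpw : ∀ γ : Fin N → Ed,
                (if pathCond σ τ N γ then νend τ ν γ else 0)
                  ≤ ∑ j ∈ J, (if pathCond σ τ N γ ∧
                      (∀ (i : ℕ) (h : i < N), i < nn j → γ ⟨i, h⟩ = (xx j).1 i)
                      then νend τ ν γ else 0) := by
              intro γ
              have hnn : ∀ j ∈ J, (0:ℝ) ≤ (if pathCond σ τ N γ ∧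
                  (∀ (i : ℕ) (h : i < N), i < nn j → γ ⟨i, h⟩ = (xx j).1 i)
                  then νend τ ν γ else 0) := by
                intro j _
                split
                · exact le_trans (hν v₀).le (hνendlb N γ)
                · exact le_refl 0
              by_cases hγ : pathCond σ τ N γ
              · obtain ⟨j₀, hj₀J, hQ₀⟩ := hQ γ hγ
                rw [if_pos hγ]
                calc νend τ ν γ
                    = (if pathCond σ τ N γ ∧
                        (∀ (i : ℕ) (h : i < N), i < nn j₀ → γ ⟨i, h⟩ = (xx j₀).1 i)
                        then νend τ ν γ else 0) := (if_pos ⟨hγ, hQ₀⟩).symm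
                  _ ≤ ∑ j ∈ J, (if pathCond σ τ N γ ∧
                        (∀ (i : ℕ) (h : i < N), i < nn j → γ ⟨i, h⟩ = (xx j).1 i)
                        then νend τ ν γ else 0) := Finset.single_le_sum hnn hj₀J
              · rw [if_neg hγ]
                exact Finset.sum_nonneg hnn
            have h1 : Λ ^ N ≤ ∑ j ∈ J, Λ ^ (N - nn j) * νend τ ν (pref (xx j) (nn j)) := by
              calc Λ ^ N
                  = ∑ γ : Fin N → Ed, if pathCond σ τ N γ then νend τ ν γ else 0 :=
                    (sumA hedge hνsum N).symm
                _ ≤ ∑ γ : Fin N → Ed, ∑ j ∈ J, (if pathCond σ τ N γ ∧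
                      (∀ (i : ℕ) (h : i < N), i < nn j → γ ⟨i, h⟩ = (xx j).1 i)
                      then νend τ ν γ else 0) :=
                    Finset.sum_le_sum fun γ _ => hpw γ
                _ = ∑ j ∈ J, ∑ γ : Fin N → Ed, (if pathCond σ τ N γ ∧
                      (∀ (i : ℕ) (h : i < N), i < nn j → γ ⟨i, h⟩ = (xx j).1 i)
                      then νend τ ν γ else 0) := Finset.sum_comm
                _ = ∑ j ∈ J, Λ ^ (N - nn j) * νend τ ν (pref (xx j) (nn j)) := by
                    refine Finset.sum_congr rfl fun j hj => ?_
                    have hjN : nn j ≤ N := Finset.le_sup hj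
                    have hiff : ∀ γ : Fin N → Ed,
                        (∀ (i : ℕ) (h : i < N), i < nn j → γ ⟨i, h⟩ = (xx j).1 i) ↔
                        (∀ i : Fin (nn j), γ (Fin.castLE hjN i) = pref (xx j) (nn j) i) := by
                      intro γ
                      constructor
                      · intro hh i
                        exact hh i (lt_of_lt_of_le i.2 hjN) i.2
                      · intro hh i h hi
                        exact hh ⟨i, hi⟩
                    rw [Finset.sum_congr rfl fun γ _ => by
                      rw [if_congr (and_congr_right fun _ => hiff γ) rfl rfl]]
                    exact sumB hedge hνsum (nn j) (pref (xx j) (nn j)) (hprefPath _ _) N hjN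
            have h2 : ∀ j ∈ J, Λ ^ (N - nn j) * νend τ ν (pref (xx j) (nn j))
                = (νend τ ν (pref (xx j) (nn j)) / Λ ^ (nn j)) * Λ ^ N := by
              intro j hj
              have hjN : nn j ≤ N := Finset.le_sup hj
              have e : Λ ^ (N - nn j) * Λ ^ (nn j) = Λ ^ N := by
                rw [← pow_add]
                congr 1
                omega
              rw [div_mul_eq_mul_div, ← e]
              field_simp
            rw [Finset.sum_congr rfl h2, ← Finset.sum_mul] at h1
            have hΛN : (0:ℝ) < Λ ^ N := pow_pos hΛ0 _
            have h3 : (1:ℝ) * Λ ^ N ≤ (∑ j ∈ J, νend τ ν (pref (xx j) (nn j)) / Λ ^ (nn j)) * Λ ^ N := by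
              rw [one_mul]
              exact h1
            exact le_of_mul_le_mul_right h3 hΛN
          set J₁ := J.filter (fun j =>
            ENNReal.ofReal (ν v₀ * (νend τ ν (pref (xx j) (nn j)) / Λ ^ (nn j)))
              ≤ ⨆ _ : (t j).Nonempty, EMetric.diam (t j) ^ (d:ℝ)) with hJ₁def
          have hsplit : ∑ j ∈ J, νend τ ν (pref (xx j) (nn j)) / Λ ^ (nn j)
              ≤ (∑ j ∈ J₁, νend τ ν (pref (xx j) (nn j)) / Λ ^ (nn j)) + 2 * ε := by
            rw [← Finset.sum_filter_add_sum_filter_not J (fun j =>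
              ENNReal.ofReal (ν v₀ * (νend τ ν (pref (xx j) (nn j)) / Λ ^ (nn j)))
                ≤ ⨆ _ : (t j).Nonempty, EMetric.diam (t j) ^ (d:ℝ)), ← hJ₁def]
            have hrest : ∑ j ∈ J.filter (fun j => ¬ (ENNReal.ofReal (ν v₀ *
                (νend τ ν (pref (xx j) (nn j)) / Λ ^ (nn j)))
                ≤ ⨆ _ : (t j).Nonempty, EMetric.diam (t j) ^ (d:ℝ))),
                νend τ ν (pref (xx j) (nn j)) / Λ ^ (nn j) ≤ 2 * ε := by
              set F := J.filter (fun j => ¬ (ENNReal.ofReal (ν v₀ *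
                (νend τ ν (pref (xx j) (nn j)) / Λ ^ (nn j)))
                ≤ ⨆ _ : (t j).Nonempty, EMetric.diam (t j) ^ (d:ℝ))) with hFdef
              calc ∑ j ∈ F, νend τ ν (pref (xx j) (nn j)) / Λ ^ (nn j)
                  ≤ ∑ j ∈ F, ε / 2 ^ j := by
                    refine Finset.sum_le_sum fun j hj => ?_
                    have hj2 := (Finset.mem_filter.mp hj).2
                    rcases hbnd j with hL | hR
                    · exact hL
                    · exact absurd hR hj2
                _ = ∑ j ∈ F, ε * (1/2 : ℝ) ^ j := by
                    refine Finset.sum_congr rfl fun j _ => ?_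
                    rw [div_pow, one_pow, mul_one_div]
                _ ≤ ∑ j ∈ Finset.range (F.sup id + 1), ε * (1/2 : ℝ) ^ j := by
                    refine Finset.sum_le_sum_of_subset_of_nonneg ?_ fun j _ _ => by positivity
                    intro j hjF
                    rw [Finset.mem_range]
                    exact Nat.lt_succ_of_le (Finset.le_sup (f := id) hjF)
                _ = ε * ∑ j ∈ Finset.range (F.sup id + 1), (1/2 : ℝ) ^ j := by
                    rw [Finset.mul_sum]
                _ ≤ ε * 2 := by
                    exact mul_le_mul_of_nonneg_left (sum_geometric_two_le _) hε.le
                _ = 2 * ε := mul_comm _ _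
            have hnn1 : (0:ℝ) ≤ ∑ j ∈ J₁, νend τ ν (pref (xx j) (nn j)) / Λ ^ (nn j) := by
              refine Finset.sum_nonneg fun j _ => ?_
              exact div_nonneg (le_trans (hν v₀).le (hνendlb _ _)) (pow_pos hΛ0 _).le
            linarith [hrest]
          have hsum1 : ENNReal.ofReal
              (∑ j ∈ J₁, ν v₀ * (νend τ ν (pref (xx j) (nn j)) / Λ ^ (nn j))) ≤ T := by
            rw [ENNReal.ofReal_sum_of_nonneg]
            · calc ∑ j ∈ J₁, ENNReal.ofReal (ν v₀ * (νend τ ν (pref (xx j) (nn j)) / Λ ^ (nn j)))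
                  ≤ ∑ j ∈ J₁, ⨆ _ : (t j).Nonempty, EMetric.diam (t j) ^ (d:ℝ) :=
                    Finset.sum_le_sum fun j hj => (Finset.mem_filter.mp hj).2
                _ ≤ T := ENNReal.sum_le_tsum J₁
            · intro j _
              exact mul_nonneg (hν v₀).le
                (div_nonneg (le_trans (hν v₀).le (hνendlb _ _)) (pow_pos hΛ0 _).le)
          have h5 : ∑ j ∈ J₁, ν v₀ * (νend τ ν (pref (xx j) (nn j)) / Λ ^ (nn j)) ≤ T.toReal := by
            have h6 := ENNReal.toReal_mono hT hsum1
            rwa [ENNReal.toReal_ofReal (Finset.sum_nonneg fun j _ => mul_nonneg (hν v₀).le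
              (div_nonneg (le_trans (hν v₀).le (hνendlb _ _)) (pow_pos hΛ0 _).le))] at h6
          rw [← Finset.mul_sum] at h5
          have h6 : 1 - 2*ε ≤ ∑ j ∈ J₁, νend τ ν (pref (xx j) (nn j)) / Λ ^ (nn j) := by
            linarith [hsuper, hsplit]
          calc ν v₀ * (1 - 2*ε)
              ≤ ν v₀ * ∑ j ∈ J₁, νend τ ν (pref (xx j) (nn j)) / Λ ^ (nn j) :=
                mul_le_mul_of_nonneg_left h6 (hν v₀).le
            _ ≤ T.toReal := h5
        have h7 : ν v₀ ≤ T.toReal := by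
          refine le_of_forall_pos_le_add fun δ hδ => ?_
          have hmain := main (δ / (2 * ν v₀)) (by have := hν v₀; positivity)
          have e : ν v₀ * (1 - 2 * (δ / (2 * ν v₀))) = ν v₀ - δ := by
            have hne0 : ν v₀ ≠ 0 := (hν v₀).ne'
            field_simp
          rw [e] at hmain
          linarith
        calc ENNReal.ofReal (ν v₀) ≤ ENNReal.ofReal T.toReal := ENNReal.ofReal_le_ofReal h7
          _ = T := ENNReal.ofReal_toReal hT
      have hinf : ENNReal.ofReal (ν v₀)
          ≤ ⨅ (tt : ℕ → Set (SPath Ed σ τ)) (_ : Set.univ ⊆ ⋃ n, tt n)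
              (_ : ∀ n, EMetric.diam (tt n) ≤ 1),
              ∑' n, ⨆ _ : (tt n).Nonempty, EMetric.diam (tt n) ^ (d:ℝ) :=
        le_iInf fun tt => le_iInf fun hcov => le_iInf fun _ => key tt hcov
      exact le_trans hinf (le_iSup₂ (f := fun (r : ℝ≥0∞) (_ : 0 < r) =>
        ⨅ (tt : ℕ → Set (SPath Ed σ τ)) (_ : Set.univ ⊆ ⋃ n, tt n)
          (_ : ∀ n, EMetric.diam (tt n) ≤ r),
          ∑' n, ⨆ _ : (tt n).Nonempty, EMetric.diam (tt n) ^ (d:ℝ)) 1 zero_lt_one)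
    have hμne0 : μH[(d:ℝ)] (Set.univ : Set (SPath Ed σ τ)) ≠ 0 :=
      (lt_of_lt_of_le (ENNReal.ofReal_pos.mpr (hν v₀)) hlow).ne'
    have hμnetop : μH[(d:ℝ)] (Set.univ : Set (SPath Ed σ τ)) ≠ ⊤ :=
      (lt_of_le_of_lt hμle ENNReal.ofReal_lt_top).ne
    have hco : (((d : ℝ≥0)) : ℝ) = (d:ℝ) := by simp
    have h0' : μH[(((d : ℝ≥0)) : ℝ)] (Set.univ : Set (SPath Ed σ τ)) ≠ 0 := by
      rw [hco]; exact hμne0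
    have htop' : μH[(((d : ℝ≥0)) : ℝ)] (Set.univ : Set (SPath Ed σ τ)) ≠ ⊤ := by
      rw [hco]; exact hμnetop
    have hfin := dimH_of_hausdorffMeasure_ne_zero_ne_top h0' htop'
    rw [hfin]
    simp


  · -- summability above d
    intro t htd
    have htd0 : (0:ℝ) < t := lt_trans hd0 htd
    set q : ℝ := Λ ^ (1 - t/(d:ℝ)) with hq
    have hq0 : 0 ≤ q := (Real.rpow_pos_of_pos hΛ0 _).le
    have hq1 : q < 1 := by
      apply Real.rpow_lt_one_of_one_lt_of_neg hΛ
      have : 1 < t / (d:ℝ) := (one_lt_div hd0).mpr htd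
      linarith
    have hone : 1 ≤ t / (d:ℝ) := le_of_lt ((one_lt_div hd0).mpr htd)
    have key : ∀ n : ℕ, (∑' γ : FinPath Ed σ τ n, W n γ.1 ^ t) ≤ q ^ n := by
      intro n
      rw [tsum_finPath σ τ n (fun γ => W n γ ^ t)]
      have hterm : ∀ γ : Fin n → Ed,
          (if pathCond σ τ n γ then W n γ ^ t else 0)
            ≤ (if pathCond σ τ n γ then νend τ ν γ else 0) * Λ ^ (-(n:ℝ) * t / (d:ℝ)) := by
        intro γ
        by_cases h : pathCond σ τ n γ
        · rw [if_pos h, if_pos h]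
          match n with
          | 0 =>
            rw [hW0, Real.one_rpow]
            simp [show νend τ ν γ = (1:ℝ) from rfl]
          | (m+1) =>
            rw [hWt]
            have hx : (0:ℝ) < ν (τ (γ (Fin.last m))) := hν _
            have h1 : ν (τ (γ (Fin.last m))) ^ (t / (d:ℝ)) ≤ ν (τ (γ (Fin.last m))) := by
              have := Real.rpow_le_rpow_of_exponent_ge hx (hν1 _) hone
              rwa [Real.rpow_one] at this
            have h2 : -((m:ℝ)+1) * t / (d:ℝ) = -(((m+1:ℕ)):ℝ) * t / (d:ℝ) := by push_cast; ring
            rw [h2]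
            have : νend τ ν γ = ν (τ (γ (Fin.last m))) := rfl
            rw [this]
            exact mul_le_mul_of_nonneg_right h1 (Real.rpow_pos_of_pos hΛ0 _).le
        · rw [if_neg h, if_neg h, zero_mul]
      calc (∑ γ : Fin n → Ed, if pathCond σ τ n γ then W n γ ^ t else 0)
          ≤ ∑ γ : Fin n → Ed,
              (if pathCond σ τ n γ then νend τ ν γ else 0) * Λ ^ (-(n:ℝ) * t / (d:ℝ)) :=
            Finset.sum_le_sum fun γ _ => hterm γ
        _ = Λ ^ n * Λ ^ (-(n:ℝ) * t / (d:ℝ)) := by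
            rw [← Finset.sum_mul, sumA hedge hνsum n]
        _ = q ^ n := by
            rw [hq, ← Real.rpow_natCast Λ n, ← Real.rpow_add hΛ0,
              ← Real.rpow_natCast (Λ ^ ((1:ℝ) - t/(d:ℝ))) n, ← Real.rpow_mul hΛ0.le]
            congr 1
            field_simp
            ring
    have hnn : ∀ n : ℕ, 0 ≤ (∑' γ : FinPath Ed σ τ n, W n γ.1 ^ t) := by
      intro n
      rw [tsum_finPath σ τ n (fun γ => W n γ ^ t)]
      refine Finset.sum_nonneg fun γ _ => ?_
      by_cases h : pathCond σ τ n γ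
      · rw [if_pos h]; exact (Real.rpow_pos_of_pos (hWpos n γ) t).le
      · rw [if_neg h]
    exact Summable.of_nonneg_of_le hnn key (summable_geometric_of_lt_one hq0 hq1)
  · -- not summable at d
    intro hS
    have h0 := hS.tendsto_atTop_zero
    have : (fun n : ℕ => ∑' γ : FinPath Ed σ τ n, W n γ.1 ^ (d:ℝ)) = fun _ => (1:ℝ) :=
      funext hZd
    rw [this] at h0
    have h1 : (1:ℝ) = 0 := tendsto_nhds_unique h0 tendsto_const_nhds |>.symm ▸ rfl
    norm_num at h1
end

section
/- The transversal of a primitive substitution tiling of ℝ^d admits a bi-Lipschitz embedding into ℝ^{d+1}. -/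
open scoped Classical


/-- Reverse-path predicate: finite sequences of edges, composable in reverse order. -/
def IsRP {Ed V : Type} (σ τ : Ed → V) (m : ℕ) (g : Fin m → Ed) : Prop :=
  ∀ i : ℕ, ∀ hi : i + 1 < m, σ (g ⟨i, Nat.lt_of_succ_lt hi⟩) = τ (g ⟨i + 1, hi⟩)

lemma isRP_one {Ed V : Type} (σ τ : Ed → V) (g : Fin 1 → Ed) : IsRP σ τ 1 g := by
  intro i hi; omega

lemma isRP_cons {Ed V : Type} (σ τ : Ed → V) (m : ℕ) (e : Ed) (h : Fin (m+1) → Ed) :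
    IsRP σ τ (m+2) (Fin.cons e h) ↔ (σ e = τ (h 0) ∧ IsRP σ τ (m+1) h) := by
  constructor
  · intro H
    refine ⟨?_, ?_⟩
    · have h0 := H 0 (by omega)
      have e0 : (⟨0, by omega⟩ : Fin (m+2)) = 0 := rfl
      have e1 : (⟨0 + 1, by omega⟩ : Fin (m+2)) = Fin.succ 0 := rfl
      rw [e0, e1, Fin.cons_zero, Fin.cons_succ] at h0
      exact h0
    · intro i hi
      have h1 := H (i+1) (by omega)
      have e2 : (⟨i + 1, by omega⟩ : Fin (m+2)) = Fin.succ ⟨i, by omega⟩ := rfl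
      have e3 : (⟨i + 1 + 1, by omega⟩ : Fin (m+2)) = Fin.succ ⟨i + 1, by omega⟩ := rfl
      rw [e2, e3, Fin.cons_succ, Fin.cons_succ] at h1
      exact h1
  · rintro ⟨h0, hP⟩ i hi
    match i with
    | 0 =>
      have e0 : (⟨0, by omega⟩ : Fin (m+2)) = 0 := rfl
      have e1 : (⟨0 + 1, by omega⟩ : Fin (m+2)) = Fin.succ 0 := rfl
      rw [e0, e1, Fin.cons_zero, Fin.cons_succ]
      exact h0
    | Nat.succ i' =>
      have e2 : (⟨i' + 1, by omega⟩ : Fin (m+2)) = Fin.succ ⟨i', by omega⟩ := rfl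
      have e3 : (⟨i' + 1 + 1, by omega⟩ : Fin (m+2)) = Fin.succ ⟨i' + 1, by omega⟩ := rfl
      rw [e2, e3, Fin.cons_succ, Fin.cons_succ]
      exact hP i' (by omega)

lemma sum_isRP {Ed V : Type} [Fintype V] [Fintype Ed] [DecidableEq V] (σ τ : Ed → V) (u : V → ℝ) (Λ : ℝ)
    (hstep : ∀ w : V, ∑ e : Ed, (if σ e = w then u (τ e) else 0) = Λ * u w) :
    ∀ m : ℕ, ∑ g : Fin (m+1) → Ed, (if IsRP σ τ (m+1) g then u (τ (g 0)) else 0)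
      = Λ ^ m * ∑ e : Ed, u (τ e) := by
  intro m
  induction m with
  | zero =>
    rw [pow_zero, one_mul]
    refine (Fintype.sum_equiv (Equiv.funUnique (Fin 1) Ed).symm _ _ ?_).symm
    intro e
    have : IsRP σ τ 1 ((Equiv.funUnique (Fin 1) Ed).symm e) := isRP_one σ τ _
    rw [if_pos this]
    rfl
  | succ m ih =>
    have key : ∑ g : Fin (m+2) → Ed, (if IsRP σ τ (m+2) g then u (τ (g 0)) else 0)
        = Λ * ∑ g : Fin (m+1) → Ed, (if IsRP σ τ (m+1) g then u (τ (g 0)) else 0) := by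
      rw [← Fintype.sum_equiv (Fin.consEquiv (fun _ : Fin (m+2) => Ed))
        (fun p => if IsRP σ τ (m+2) (Fin.cons p.1 p.2) then u (τ p.1) else 0)
        (fun g => if IsRP σ τ (m+2) g then u (τ (g 0)) else 0)
        (fun p => by simp [Fin.consEquiv])]
      rw [Fintype.sum_prod_type]
      have hswap : ∀ (e : Ed) (h : Fin (m+1) → Ed),
          (if IsRP σ τ (m+2) (Fin.cons e h) then u (τ e) else 0)
          = (if (σ e = τ (h 0) ∧ IsRP σ τ (m+1) h) then u (τ e) else 0) := by
        intro e h
        by_cases hc : IsRP σ τ (m+2) (Fin.cons e h)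
        · rw [if_pos hc, if_pos ((isRP_cons σ τ m e h).mp hc)]
        · rw [if_neg hc, if_neg (fun hh => hc ((isRP_cons σ τ m e h).mpr hh))]
      calc ∑ e : Ed, ∑ h : Fin (m+1) → Ed,
            (if IsRP σ τ (m+2) (Fin.cons e h) then u (τ e) else 0)
          = ∑ h : Fin (m+1) → Ed, ∑ e : Ed,
            (if (σ e = τ (h 0) ∧ IsRP σ τ (m+1) h) then u (τ e) else 0) := by
            rw [Finset.sum_comm]
            exact Finset.sum_congr rfl fun h _ => Finset.sum_congr rfl fun e _ => hswap e h
        _ = ∑ h : Fin (m+1) → Ed,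
            (if IsRP σ τ (m+1) h then Λ * u (τ (h 0)) else 0) := by
            refine Finset.sum_congr rfl fun h _ => ?_
            by_cases hP : IsRP σ τ (m+1) h
            · rw [if_pos hP, ← hstep (τ (h 0))]
              exact Finset.sum_congr rfl fun e _ => by
                by_cases hσ : σ e = τ (h 0) <;> simp [hσ, hP]
            · rw [if_neg hP]
              exact Finset.sum_eq_zero fun e _ => by simp [hP]
        _ = Λ * ∑ g : Fin (m+1) → Ed, (if IsRP σ τ (m+1) g then u (τ (g 0)) else 0) := by
            rw [Finset.mul_sum]
            exact Finset.sum_congr rfl fun h _ => by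
              by_cases hP : IsRP σ τ (m+1) h <;> simp [hP]
    rw [key, ih, pow_succ]
    ring

lemma esp_norm_le {n : ℕ} (v : EuclideanSpace ℝ (Fin n)) (h : ∀ k, |v k| ≤ 1) :
    ‖v‖ ≤ Real.sqrt n := by
  rw [EuclideanSpace.norm_eq]
  apply Real.sqrt_le_sqrt
  calc ∑ i : Fin n, ‖v i‖ ^ 2 ≤ ∑ _i : Fin n, (1:ℝ) := by
        refine Finset.sum_le_sum fun i _ => ?_
        rw [Real.norm_eq_abs]
        nlinarith [h i, abs_nonneg (v i)]
    _ = n := by simp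

lemma esp_coord_le {n : ℕ} (v : EuclideanSpace ℝ (Fin n)) (k : Fin n) : |v k| ≤ ‖v‖ := by
  rw [EuclideanSpace.norm_eq, ← Real.sqrt_sq_eq_abs]
  apply Real.sqrt_le_sqrt
  calc (v k) ^ 2 = ‖v k‖ ^ 2 := by rw [Real.norm_eq_abs, sq_abs]
    _ ≤ ∑ i : Fin n, ‖v i‖ ^ 2 :=
        Finset.single_le_sum (f := fun i => ‖v i‖ ^ 2) (fun i _ => sq_nonneg _)
          (Finset.mem_univ k)

set_option maxHeartbeats 1000000 in
/-- The transversal of a primitive substitution tiling of `ℝ^d` (modelled as the path space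
of the stationary Bratteli diagram of the substitution, with primitive adjacency matrix `A`,
Perron–Frobenius eigenvalue `Λ`, and self-similar ultrametric with parameter `α = Λ^{-1/d}`
and weights `a_γ` uniformly bounded away from `0` and `∞`) admits a bi-Lipschitz embedding
into `ℝ^{d+1}`. -/
theorem stmt12 {V Ed : Type} [Fintype V] [Fintype Ed] [Nonempty V] [DecidableEq V]
    (σ τ : Ed → V)
    (A : Matrix V V ℕ)
    (hA : ∀ v v', A v v' = Nat.card {e : Ed // σ e = v ∧ τ e = v'})
    (hprim : ∃ k : ℕ, ∀ v v', 0 < (A ^ k) v v')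
    (Λ : ℝ) (hΛ : 1 < Λ)
    (hPF : ∃ u : V → ℝ, (∀ v, 0 < u v) ∧ (A.map (Nat.cast : ℕ → ℝ)).mulVec u = Λ • u)
    (d : ℕ) (hd : 1 ≤ d)
    (a : SPath Ed σ τ → ℕ → ℝ) (a₁ a₂ : ℝ) (ha₁ : 0 < a₁)
    (hab : ∀ x n, a x n ∈ Set.Icc a₁ a₂)
    (hagree : ∀ x y : SPath Ed σ τ, ∀ n, (∀ i < n, x.1 i = y.1 i) → a x n = a y n)
    [MetricSpace (SPath Ed σ τ)]
    (hdist : ∀ x y : SPath Ed σ τ, x ≠ y →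
      dist x y = a x (slcp x y) * Λ ^ (-(slcp x y : ℝ) / (d : ℝ))) :
    ∃ F : SPath Ed σ τ → EuclideanSpace ℝ (Fin (d + 1)),
      ∃ cm cp : ℝ, 0 < cm ∧ cm ≤ cp ∧
        ∀ x y, cm * dist x y ≤ dist (F x) (F y) ∧ dist (F x) (F y) ≤ cp * dist x y := by
  classical
  by_cases hne : Nonempty (SPath Ed σ τ)
  swap
  · exact ⟨fun _ => 0, 1, 1, one_pos, le_refl _, fun x y => (hne ⟨x⟩).elim⟩
  obtain ⟨x0⟩ := hne
  have hΛ0 : (0:ℝ) < Λ := lt_trans one_pos hΛ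
  have hd0 : (0:ℝ) < (d:ℝ) := by exact_mod_cast Nat.lt_of_lt_of_le Nat.zero_lt_one hd
  have hdne : (d:ℝ) ≠ 0 := ne_of_gt hd0
  set α : ℝ := Λ ^ ((-1 : ℝ) / (d:ℝ)) with hαdef
  have hα0 : 0 < α := Real.rpow_pos_of_pos hΛ0 _
  have hα1 : α < 1 :=
    Real.rpow_lt_one_of_one_lt_of_neg hΛ (div_neg_of_neg_of_pos (by norm_num) hd0)
  have hαs : ∀ s : ℕ, Λ ^ (-(s:ℝ) / (d:ℝ)) = α ^ s := by
    intro s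
    rw [← Real.rpow_natCast α s, hαdef, ← Real.rpow_mul (le_of_lt hΛ0)]
    congr 1
    ring
  have hαd : α ^ d = Λ⁻¹ := by
    rw [← Real.rpow_natCast α d, hαdef, ← Real.rpow_mul (le_of_lt hΛ0),
      div_mul_cancel₀ (-1 : ℝ) hdne, Real.rpow_neg_one]
  have ha₂ : 0 < a₂ := lt_of_lt_of_le ha₁ (le_trans (hab x0 0).1 (hab x0 0).2)
  obtain ⟨u, hu, huv⟩ := hPF
  -- Perron-Frobenius step identity
  have hstep : ∀ w : V, ∑ e : Ed, (if σ e = w then u (τ e) else 0) = Λ * u w := by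
    intro w
    have h1 : ∑ v' : V, ((A w v' : ℝ)) * u v' = Λ * u w := by
      have h2 := congrFun huv w
      simpa [Matrix.mulVec, dotProduct, Matrix.map_apply] using h2
    have h2 : ∀ v' : V, ((A w v' : ℝ)) * u v'
        = ∑ e : Ed, (if σ e = w ∧ τ e = v' then u (τ e) else 0) := by
      intro v'
      rw [hA, Nat.card_eq_fintype_card, Fintype.card_subtype, ← Finset.sum_filter]
      have h3 : ∑ e ∈ Finset.univ.filter (fun e => σ e = w ∧ τ e = v'), u (τ e)
          = ∑ _e ∈ Finset.univ.filter (fun e => σ e = w ∧ τ e = v'), u v' :=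
        Finset.sum_congr rfl (fun e he => by rw [(Finset.mem_filter.mp he).2.2])
      rw [h3, Finset.sum_const, nsmul_eq_mul]
    have h3 : ∀ e : Ed, ∑ v' : V, (if σ e = w ∧ τ e = v' then u (τ e) else 0)
        = (if σ e = w then u (τ e) else 0) := by
      intro e
      by_cases hσ : σ e = w <;> simp [hσ]
    calc ∑ e : Ed, (if σ e = w then u (τ e) else 0)
        = ∑ e : Ed, ∑ v' : V, (if σ e = w ∧ τ e = v' then u (τ e) else 0) :=
          Finset.sum_congr rfl fun e _ => (h3 e).symm
      _ = ∑ v' : V, ∑ e : Ed, (if σ e = w ∧ τ e = v' then u (τ e) else 0) := Finset.sum_comm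
      _ = ∑ v' : V, ((A w v' : ℝ)) * u v' := Finset.sum_congr rfl fun v' _ => (h2 v').symm
      _ = Λ * u w := h1
  obtain ⟨v0, -, hv0⟩ := Finset.exists_min_image Finset.univ u
    ⟨Classical.arbitrary V, Finset.mem_univ _⟩
  have humin : 0 < u v0 := hu v0
  set E : ℝ := ∑ e : Ed, u (τ e) with hEdef
  have hE0 : 0 ≤ E := Finset.sum_nonneg fun e _ => (hu (τ e)).le
  have hSm := sum_isRP σ τ u Λ hstep
  set Ncard : ℕ → ℕ := fun k => (Finset.univ.filter (IsRP σ τ k)).card with hNdef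
  have hNle : ∀ k : ℕ, (Ncard (k+1) : ℝ) ≤ (E / u v0) * Λ ^ k := by
    intro k
    have hsum : (Ncard (k+1) : ℝ) * u v0 ≤ Λ ^ k * E := by
      rw [← hSm k, ← Finset.sum_filter]
      have := Finset.card_nsmul_le_sum (Finset.univ.filter (IsRP σ τ (k+1)))
        (fun g => u (τ (g 0))) (u v0) (fun g _ => hv0 _ (Finset.mem_univ _))
      rw [nsmul_eq_mul] at this
      exact this
    rw [div_mul_eq_mul_div, le_div_iff₀ humin]
    linarith [hsum]
  set C : ℝ := max (E / u v0) 1 with hCdef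
  have hC1 : (1:ℝ) ≤ C := le_max_right _ _
  have hCpos : (0:ℝ) < C := lt_of_lt_of_le one_pos hC1
  set R : ℝ := Real.sqrt ((d:ℝ)+1) with hRdef
  have hR1 : (1:ℝ) ≤ R := by
    have h1 : (1:ℝ) ≤ (d:ℝ) + 1 := by
      have h2 : (0:ℝ) ≤ (d:ℝ) := Nat.cast_nonneg d
      linarith
    calc (1:ℝ) = Real.sqrt 1 := (Real.sqrt_one).symm
      _ ≤ Real.sqrt ((d:ℝ)+1) := Real.sqrt_le_sqrt h1
      _ = R := by rw [hRdef]
  have hRpos : (0:ℝ) < R := lt_of_lt_of_le one_pos hR1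
  have hεpos : (0:ℝ) < (1 - α) / (4 * R * (C + 2)) :=
    div_pos (by linarith) (mul_pos (mul_pos (by norm_num) hRpos) (by linarith))
  obtain ⟨p0, hp0⟩ := exists_pow_lt_of_lt_one hεpos hα1
  set p : ℕ := max p0 1 with hpdef
  have hp1 : 1 ≤ p := le_max_right _ _
  have hαpp : α ^ p ≤ α ^ p0 :=
    pow_le_pow_of_le_one (le_of_lt hα0) (le_of_lt hα1) (le_max_left _ _)
  have hkey0 : 4 * R * (C + 2) * α ^ p < 1 - α := by
    have h4 := lt_of_le_of_lt hαpp hp0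
    rw [lt_div_iff₀ (mul_pos (mul_pos (by norm_num) hRpos) (by linarith))] at h4
    nlinarith [h4]
  set m : ℕ := (d+1) * p with hmdef
  have hm0 : 0 < m := Nat.mul_pos (by omega) (by omega)
  set β : ℝ := α ^ m with hβdef
  have hβ0 : (0:ℝ) < β := pow_pos hα0 m
  have hβ1 : β < 1 := pow_lt_one₀ (le_of_lt hα0) hα1 (by omega)
  have hβα : β ≤ α := by
    calc β = α ^ m := rfl
      _ ≤ α ^ 1 := pow_le_pow_of_le_one (le_of_lt hα0) (le_of_lt hα1) hm0
      _ = α := pow_one α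
  set M : ℕ := ⌈C * Λ ^ p⌉₊ + 1 with hMdef
  have hMr : (M:ℝ) ≤ (C+2) * Λ ^ p := by
    have h1 : (⌈C * Λ ^ p⌉₊ : ℝ) < C * Λ ^ p + 1 := Nat.ceil_lt_add_one (le_of_lt (mul_pos hCpos (pow_pos hΛ0 p)))
    have h2 : (1:ℝ) ≤ Λ ^ p := by simpa using pow_le_pow_right₀ (le_of_lt hΛ) (Nat.zero_le p)
    rw [hMdef]
    push_cast
    nlinarith
  have hMpos : (0:ℝ) < (M:ℝ) := by
    have : 0 < M := Nat.succ_pos _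
    exact_mod_cast this
  have hΛα : Λ ^ p * α ^ ((d+1) * p) = α ^ p := by
    have h5 : Λ * α ^ (d+1) = α := by
      rw [pow_succ, hαd, ← mul_assoc, mul_inv_cancel₀ (ne_of_gt hΛ0), one_mul]
    calc Λ ^ p * α ^ ((d+1) * p) = Λ ^ p * (α ^ (d+1)) ^ p := by rw [pow_mul]
      _ = (Λ * α ^ (d+1)) ^ p := (mul_pow _ _ _).symm
      _ = α ^ p := by rw [h5]
  have hMβ : (M:ℝ) * β ≤ (C+2) * α ^ p := by
    calc (M:ℝ) * β ≤ ((C+2) * Λ ^ p) * β := mul_le_mul_of_nonneg_right hMr hβ0.le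
      _ = (C+2) * (Λ ^ p * α ^ ((d+1)*p)) := by rw [hβdef, hmdef]; ring
      _ = (C+2) * α ^ p := by rw [hΛα]
  have hkey : 4 * R * ((M:ℝ) * β) < 1 - α := by
    have h6 : 4 * R * ((M:ℝ) * β) ≤ 4 * R * ((C+2) * α ^ p) :=
      mul_le_mul_of_nonneg_left hMβ (le_of_lt (mul_pos (by norm_num) hRpos))
    nlinarith [hkey0]
  have hkey2 : R * β / (1 - β) ≤ 1 / (4 * (M:ℝ)) := by
    rw [div_le_div_iff₀ (by linarith) (by linarith [hMpos])]
    nlinarith [hkey, hβα]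
  -- cardinality bound
  have hNM : Ncard m ≤ M ^ (d+1) := by
    have e1 : m - 1 + 1 = m := by omega
    have h1 : (Ncard m : ℝ) ≤ C * Λ ^ m := by
      have h2 := hNle (m - 1)
      rw [e1] at h2
      calc (Ncard m : ℝ) ≤ (E / u v0) * Λ ^ (m-1) := h2
        _ ≤ C * Λ ^ m := by
          apply mul_le_mul (le_max_left _ _)
            (pow_le_pow_right₀ (le_of_lt hΛ) (by omega)) (le_of_lt (pow_pos hΛ0 _))
            (le_of_lt hCpos)
    have h5 : C * Λ ^ p ≤ (M:ℝ) := by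
      refine le_trans (Nat.le_ceil _) ?_
      rw [hMdef]
      push_cast
      linarith
    have h2 : C * Λ ^ m ≤ ((M:ℝ)) ^ (d+1) := by
      calc C * Λ ^ m = C * (Λ ^ p) ^ (d+1) := by
            rw [← pow_mul, hmdef, Nat.mul_comm]
        _ ≤ C ^ (d+1) * (Λ ^ p) ^ (d+1) := by
            apply mul_le_mul_of_nonneg_right (le_self_pow₀ hC1 (by omega))
              (le_of_lt (pow_pos (pow_pos hΛ0 p) _))
        _ = (C * Λ ^ p) ^ (d+1) := (mul_pow _ _ _).symm
        _ ≤ ((M:ℝ)) ^ (d+1) :=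
            pow_le_pow_left₀ (le_of_lt (mul_pos hCpos (pow_pos hΛ0 p))) h5 _
    have h3 : (Ncard m : ℝ) ≤ ((M ^ (d+1) : ℕ) : ℝ) := by
      rw [Nat.cast_pow]
      exact le_trans h1 h2
    exact_mod_cast h3
  have hcards : Fintype.card {g : Fin m → Ed // IsRP σ τ m g}
      ≤ Fintype.card (Fin (d+1) → Fin M) := by
    rw [Fintype.card_subtype, Fintype.card_fun, Fintype.card_fin, Fintype.card_fin]
    exact hNM
  obtain ⟨ι⟩ := Function.Embedding.nonempty_of_card_le hcards
  -- blocks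
  have hbP : ∀ (x : SPath Ed σ τ) (j : ℕ),
      IsRP σ τ m (fun i : Fin m => x.1 (j*m + (m - 1 - (i:ℕ)))) := by
    intro x j i hi
    have e1 : j*m + (m-1-(i+1)) + 1 = j*m + (m-1-i) := by omega
    have h2 := x.2 (j*m + (m-1-(i+1)))
    rw [e1] at h2
    exact h2.symm
  set b : SPath Ed σ τ → ℕ → {g : Fin m → Ed // IsRP σ τ m g} :=
    fun x j => ⟨fun i : Fin m => x.1 (j*m + (m - 1 - (i:ℕ))), hbP x j⟩ with hbdef
  set q : SPath Ed σ τ → ℕ → EuclideanSpace ℝ (Fin (d+1)) :=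
    fun x j => WithLp.toLp 2 (fun k => ((ι (b x j) k : ℕ) : ℝ) / M) with hqdef
  have hqapp : ∀ x j k, q x j k = ((ι (b x j) k : ℕ) : ℝ) / M := fun x j k => rfl
  have hq01 : ∀ x j k, 0 ≤ q x j k ∧ q x j k ≤ 1 := by
    intro x j k
    rw [hqapp]
    constructor
    · positivity
    · rw [div_le_one hMpos]
      have : ((ι (b x j) k : Fin M) : ℕ) < M := (ι (b x j) k).2
      exact_mod_cast this.le
  have hsub_apply : ∀ x y j k, (q x j - q y j) k = q x j k - q y j k := by
    intro x y j k
    rfl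
  have hqnorm : ∀ x y j, ‖q x j - q y j‖ ≤ R := by
    intro x y j
    have h1 : Real.sqrt ((d+1 : ℕ) : ℝ) = R := by rw [hRdef]; norm_num
    rw [← h1]
    apply esp_norm_le
    intro k
    rw [hsub_apply]
    have h2 := hq01 x j k
    have h3 := hq01 y j k
    rw [abs_le]
    constructor <;> linarith [h2.1, h2.2, h3.1, h3.2]
  have hqn1 : ∀ x j, ‖q x j‖ ≤ R := by
    intro x j
    have h1 : Real.sqrt ((d+1 : ℕ) : ℝ) = R := by rw [hRdef]; norm_num
    rw [← h1]
    apply esp_norm_le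
    intro k
    have h2 := hq01 x j k
    rw [abs_le]
    constructor <;> linarith [h2.1, h2.2]
  have hqlow : ∀ x y j, b x j ≠ b y j → 1/(M:ℝ) ≤ ‖q x j - q y j‖ := by
    intro x y j hbne
    have h1 : ι (b x j) ≠ ι (b y j) := fun h => hbne (ι.injective h)
    obtain ⟨k, hk⟩ := Function.ne_iff.mp h1
    have h2 : ((ι (b x j) k : ℕ) : ℤ) ≠ ((ι (b y j) k : ℕ) : ℤ) := by
      intro h
      apply hk
      apply Fin.ext
      exact_mod_cast h
    have h3 : (1:ℤ) ≤ |((ι (b x j) k : ℕ) : ℤ) - ((ι (b y j) k : ℕ) : ℤ)| :=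
      Int.one_le_abs (sub_ne_zero.2 h2)
    have h4 : (1:ℝ) ≤ |((ι (b x j) k : ℕ) : ℝ) - ((ι (b y j) k : ℕ) : ℝ)| := by
      exact_mod_cast h3
    calc 1/(M:ℝ) ≤ |((ι (b x j) k : ℕ) : ℝ) - ((ι (b y j) k : ℕ) : ℝ)| / M := by
          gcongr
      _ = |(q x j - q y j) k| := by
          rw [hsub_apply, hqapp, hqapp, div_sub_div_same, abs_div, abs_of_pos hMpos]
      _ ≤ ‖q x j - q y j‖ := esp_coord_le _ k
  -- summability of the embedding series
  have hsummq : ∀ x, Summable (fun j : ℕ => β ^ j • q x j) := by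
    intro x
    apply Summable.of_norm_bounded (g := fun j : ℕ => β ^ j * R)
      ((summable_geometric_of_lt_one hβ0.le hβ1).mul_right R)
    intro j
    rw [norm_smul, Real.norm_eq_abs, abs_of_nonneg (pow_nonneg hβ0.le j)]
    exact mul_le_mul_of_nonneg_left (hqn1 x j) (pow_nonneg hβ0.le j)
  have hMne : (M:ℝ) ≠ 0 := ne_of_gt hMpos
  have ha₂ne : a₂ ≠ 0 := ne_of_gt ha₂
  have h2M : (0:ℝ) < 2*(M:ℝ)*a₂ := by nlinarith [hMpos, ha₂]
  have hα1m : (0:ℝ) < α^(m-1) * a₁ := mul_pos (pow_pos hα0 _) ha₁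
  set F : SPath Ed σ τ → EuclideanSpace ℝ (Fin (d+1)) :=
    fun x => ∑' j : ℕ, β ^ j • q x j with hFdef
  refine ⟨F, (2*(M:ℝ)*a₂)⁻¹, max ((R+1)/(α^(m-1) * a₁)) ((2*(M:ℝ)*a₂)⁻¹),
    inv_pos.mpr h2M, le_max_right _ _, ?_⟩
  intro x y
  by_cases hxy : x = y
  · subst hxy
    simp
  have hxyne : x ≠ y := hxy
  have hsne : {n | x.1 n ≠ y.1 n}.Nonempty := by
    by_contra hcon
    rw [Set.not_nonempty_iff_eq_empty] at hcon
    apply hxyne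
    apply Subtype.ext
    funext n
    by_contra hn
    have hmem : n ∈ {n | x.1 n ≠ y.1 n} := hn
    rw [hcon] at hmem
    exact hmem
  have hsmem : x.1 (slcp x y) ≠ y.1 (slcp x y) := Nat.sInf_mem hsne
  have hslt : ∀ i, i < slcp x y → x.1 i = y.1 i := by
    intro i hi
    have h0 := Nat.notMem_of_lt_sInf (s := {n | x.1 n ≠ y.1 n}) hi
    simpa using h0
  set s : ℕ := slcp x y with hsdef
  set j : ℕ := s / m with hjdef
  have h1 : m * j + s % m = s := Nat.div_add_mod s m
  have h2 : s % m < m := Nat.mod_lt s hm0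
  have hA1 : m * j ≤ s := Nat.le.intro h1
  have hB1 : s < m * j + m := by omega
  have hA2 : j * m ≤ s := by rw [Nat.mul_comm]; exact hA1
  have hB2 : s < j * m + m := by rw [Nat.mul_comm]; exact hB1
  have hbeq : ∀ i, i < j → b x i = b y i := by
    intro i hi
    apply Subtype.ext
    funext t
    show x.1 (i*m + (m - 1 - (t:ℕ))) = y.1 (i*m + (m - 1 - (t:ℕ)))
    apply hslt
    have h3 : (i+1) * m ≤ j * m := Nat.mul_le_mul_right m hi
    have h5 : (i+1)*m = i*m + m := Nat.succ_mul i m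
    have h4 : i*m + (m - 1 - (t:ℕ)) < (i+1) * m := by omega
    exact lt_of_lt_of_le h4 (le_trans h3 hA2)
  have hbne : b x j ≠ b y j := by
    intro hEq
    have ht : m - 1 - (s - j*m) < m := by omega
    have h7 := congrFun (congrArg Subtype.val hEq) ⟨m - 1 - (s - j*m), ht⟩
    have h8 : x.1 (j*m + (m - 1 - (m - 1 - (s - j*m))))
        = y.1 (j*m + (m - 1 - (m - 1 - (s - j*m)))) := h7
    have h9 : j*m + (m - 1 - (m - 1 - (s - j*m))) = s := by omega
    rw [h9] at h8
    exact hsmem h8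
  have hgeoR : Summable (fun i : ℕ => β ^ i * R) :=
    (summable_geometric_of_lt_one hβ0.le hβ1).mul_right R
  have hsub : Summable (fun i : ℕ => β ^ i • (q x i - q y i)) := by
    have h10 := (hsummq x).sub (hsummq y)
    simpa [smul_sub] using h10
  have hDnorm : ∀ i : ℕ, ‖β ^ i • (q x i - q y i)‖ ≤ β ^ i * R := by
    intro i
    rw [norm_smul, Real.norm_eq_abs, abs_of_nonneg (pow_nonneg hβ0.le i)]
    exact mul_le_mul_of_nonneg_left (hqnorm x y i) (pow_nonneg hβ0.le i)
  have hFxy : F x - F y = ∑' i : ℕ, β ^ i • (q x i - q y i) := by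
    rw [hFdef]
    rw [← Summable.tsum_sub (hsummq x) (hsummq y)]
    exact tsum_congr fun i => (smul_sub _ _ _).symm
  have hsplit := Summable.sum_add_tsum_nat_add
    (f := fun i : ℕ => β ^ i • (q x i - q y i)) (j+1) hsub
  have hhead : ∑ i ∈ Finset.range (j+1), β ^ i • (q x i - q y i)
      = β ^ j • (q x j - q y j) := by
    apply Finset.sum_eq_single_of_mem j (Finset.self_mem_range_succ j)
    intro i hi hne'
    have hij : i < j := by
      rw [Finset.mem_range] at hi
      omega
    have hqq : q x i = q y i := by
      simp only [hqdef]
      rw [hbeq i hij]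
    rw [hqq, sub_self, smul_zero]
  have hdecomp : F x - F y = β ^ j • (q x j - q y j)
      + ∑' i : ℕ, β ^ (i+(j+1)) • (q x (i+(j+1)) - q y (i+(j+1))) := by
    rw [hFxy, ← hsplit, hhead]
  have hs2 : Summable (fun i : ℕ => β ^ (i+(j+1)) * R) :=
    (summable_nat_add_iff (f := fun i : ℕ => β ^ i * R) (j+1)).2 hgeoR
  have hs1 : Summable (fun i : ℕ => ‖β ^ (i+(j+1)) • (q x (i+(j+1)) - q y (i+(j+1)))‖) :=
    Summable.of_nonneg_of_le (fun i => norm_nonneg _) (fun i => hDnorm (i+(j+1))) hs2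
  have htail : ‖∑' i : ℕ, β ^ (i+(j+1)) • (q x (i+(j+1)) - q y (i+(j+1)))‖
      ≤ β ^ (j+1) * R * (1 - β)⁻¹ := by
    calc ‖∑' i : ℕ, β ^ (i+(j+1)) • (q x (i+(j+1)) - q y (i+(j+1)))‖
        ≤ ∑' i : ℕ, ‖β ^ (i+(j+1)) • (q x (i+(j+1)) - q y (i+(j+1)))‖ :=
          norm_tsum_le_tsum_norm hs1
      _ ≤ ∑' i : ℕ, β ^ (i+(j+1)) * R := Summable.tsum_le_tsum (fun i => hDnorm _) hs1 hs2
      _ = β ^ (j+1) * R * (1 - β)⁻¹ := by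
          have he : ∀ i : ℕ, β ^ (i+(j+1)) * R = β ^ i * (β ^ (j+1) * R) := by
            intro i; rw [pow_add]; ring
          rw [tsum_congr he, tsum_mul_right, tsum_geometric_of_lt_one hβ0.le hβ1]
          ring
  have htailsmall : ‖∑' i : ℕ, β ^ (i+(j+1)) • (q x (i+(j+1)) - q y (i+(j+1)))‖
      ≤ β ^ j * (1/(4*(M:ℝ))) := by
    refine le_trans htail ?_
    have he : β ^ (j+1) * R * (1-β)⁻¹ = β ^ j * (R * β / (1-β)) := by
      rw [pow_succ]; ring
    rw [he]
    exact mul_le_mul_of_nonneg_left hkey2 (pow_nonneg hβ0.le j)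
  have hlowH : β ^ j * (1/(M:ℝ)) ≤ ‖β ^ j • (q x j - q y j)‖ := by
    rw [norm_smul, Real.norm_eq_abs, abs_of_nonneg (pow_nonneg hβ0.le j)]
    exact mul_le_mul_of_nonneg_left (hqlow x y j hbne) (pow_nonneg hβ0.le j)
  have htri : ‖β ^ j • (q x j - q y j)‖
      - ‖∑' i : ℕ, β ^ (i+(j+1)) • (q x (i+(j+1)) - q y (i+(j+1)))‖
      ≤ ‖β ^ j • (q x j - q y j)
        + ∑' i : ℕ, β ^ (i+(j+1)) • (q x (i+(j+1)) - q y (i+(j+1)))‖ := by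
    have h9 := norm_sub_le (β ^ j • (q x j - q y j)
      + ∑' i : ℕ, β ^ (i+(j+1)) • (q x (i+(j+1)) - q y (i+(j+1))))
      (∑' i : ℕ, β ^ (i+(j+1)) • (q x (i+(j+1)) - q y (i+(j+1))))
    simp only [add_sub_cancel_right] at h9
    linarith
  have hM4 : (0:ℝ) < 4*(M:ℝ) := by linarith [hMpos]
  have hFlow : β ^ j * (1/(2*(M:ℝ))) ≤ ‖F x - F y‖ := by
    rw [hdecomp]
    have he : β^j * (1/(M:ℝ)) - β^j * (1/(4*(M:ℝ))) - β^j * (1/(2*(M:ℝ)))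
        = β^j * (1/(4*(M:ℝ))) := by
      field_simp
      ring
    have h10 : (0:ℝ) ≤ β^j * (1/(4*(M:ℝ))) :=
      mul_nonneg (pow_nonneg hβ0.le j) (le_of_lt (by positivity))
    linarith [hlowH, htailsmall, htri]
  have hFup : ‖F x - F y‖ ≤ β ^ j * (R + 1) := by
    rw [hdecomp]
    have h11 := norm_add_le (β ^ j • (q x j - q y j))
      (∑' i : ℕ, β ^ (i+(j+1)) • (q x (i+(j+1)) - q y (i+(j+1))))
    have h12 : ‖β ^ j • (q x j - q y j)‖ ≤ β ^ j * R := hDnorm j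
    have h13 : β ^ j * (1/(4*(M:ℝ))) ≤ β ^ j * 1 := by
      apply mul_le_mul_of_nonneg_left _ (pow_nonneg hβ0.le j)
      rw [div_le_one hM4]
      have hM1 : (1:ℝ) ≤ (M:ℝ) := by
        have : 1 ≤ M := Nat.succ_le_succ (Nat.zero_le _)
        exact_mod_cast this
      linarith
    have h14 : β^j*(R+1) = β^j*R + β^j*1 := by ring
    linarith [htailsmall]
  have hds : dist x y = a x s * α ^ s := by
    rw [hdist x y hxyne, ← hsdef, hαs s]
  have hdl : a₁ * α ^ s ≤ dist x y := by
    rw [hds]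
    exact mul_le_mul_of_nonneg_right (hab x s).1 (pow_nonneg hα0.le s)
  have hdu : dist x y ≤ a₂ * α ^ s := by
    rw [hds]
    exact mul_le_mul_of_nonneg_right (hab x s).2 (pow_nonneg hα0.le s)
  have hβjs : α ^ s ≤ β ^ j := by
    rw [hβdef, ← pow_mul]
    exact pow_le_pow_of_le_one hα0.le hα1.le hA1
  have hβju : β ^ j * α ^ (m-1) ≤ α ^ s := by
    rw [hβdef, ← pow_mul, ← pow_add]
    apply pow_le_pow_of_le_one hα0.le hα1.le
    omega
  constructor
  · rw [dist_eq_norm]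
    calc (2*(M:ℝ)*a₂)⁻¹ * dist x y
        ≤ (2*(M:ℝ)*a₂)⁻¹ * (a₂ * α ^ s) :=
          mul_le_mul_of_nonneg_left hdu (inv_nonneg.mpr h2M.le)
      _ = α ^ s * (1/(2*(M:ℝ))) := by
          field_simp
      _ ≤ β ^ j * (1/(2*(M:ℝ))) := by
          apply mul_le_mul_of_nonneg_right hβjs (le_of_lt (by positivity))
      _ ≤ ‖F x - F y‖ := hFlow
  · rw [dist_eq_norm]
    refine le_trans ?_ (mul_le_mul_of_nonneg_right (le_max_left _ _) dist_nonneg)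
    rw [div_mul_eq_mul_div, le_div_iff₀ hα1m]
    calc ‖F x - F y‖ * (α^(m-1) * a₁)
        ≤ (β^j * (R+1)) * (α^(m-1) * a₁) :=
          mul_le_mul_of_nonneg_right hFup hα1m.le
      _ = ((β^j * α^(m-1)) * (R+1)) * a₁ := by ring
      _ ≤ (α^s * (R+1)) * a₁ := by
          apply mul_le_mul_of_nonneg_right
            (mul_le_mul_of_nonneg_right hβju (by linarith)) ha₁.le
      _ = (R+1) * (a₁ * α^s) := by ring
      _ ≤ (R+1) * dist x y := mul_le_mul_of_nonneg_left hdl (by linarith)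
end
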